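/- arXiv:1209.5712 — 13 statements merged into one kernel-verified Lean document; each statement's English description precedes it below -/
import Mathlib

section
/- If a finite point configuration A in R^d admits a weak Cayley decomposition of length m, then the degree of A is at most d+1-m. -/
/-- If a finite point configuration `A` in `ℝ^d` admits a weak Cayley decomposition of
length `m`, then `deg(A) ≤ d+1-m`, i.e. every subset of `A` of size `< m` lies in a
common facet (equivalently, in a common supporting hyperplane) of `conv(A)`. -/
theorem stmt_0 (d n m : ℕ) (hm : 1 ≤ m)
    (A : Fin n → (Fin d → ℝ))
    (hspan : affineSpan ℝ (Set.range A) = ⊤)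
    (P : Fin n → Fin (m + 1))
    (hnonempty : ∀ i : Fin (m + 1), i ≠ 0 → ∃ j, P j = i)
    (hfaces : ∀ i : Fin (m + 1), i ≠ 0 →
      ∃ (w : Fin d → ℝ) (c : ℝ), w ≠ 0 ∧ (∀ j, ∑ k, w k * A j k ≤ c) ∧
        (∀ j, (∑ k, w k * A j k = c ↔ P j ≠ i))) :
    ∀ S : Finset (Fin n), S.card < m →
      ∃ (w : Fin d → ℝ) (c : ℝ), w ≠ 0 ∧ (∀ j, ∑ k, w k * A j k ≤ c) ∧
        ∀ j ∈ S, ∑ k, w k * A j k = c := by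
  intro S hS
  -- find a nonzero index i not hit by P on S
  have hcard : (insert (0 : Fin (m+1)) (S.image P)).card < Fintype.card (Fin (m+1)) := by
    calc (insert (0 : Fin (m+1)) (S.image P)).card
        ≤ (S.image P).card + 1 := Finset.card_insert_le _ _
      _ ≤ S.card + 1 := by
          exact Nat.add_le_add_right (Finset.card_image_le) 1
      _ < m + 1 := Nat.add_lt_add_right hS 1
      _ = Fintype.card (Fin (m+1)) := (Fintype.card_fin _).symm
  obtain ⟨i, hi⟩ : ∃ i : Fin (m+1), i ∉ insert (0 : Fin (m+1)) (S.image P) := by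
    by_contra h
    push_neg at h
    have : (Finset.univ : Finset (Fin (m+1))) ⊆ insert 0 (S.image P) :=
      fun x _ => h x
    have := Finset.card_le_card this
    simp only [Finset.card_univ, Fintype.card_fin] at this hcard
    omega
  have hi0 : i ≠ 0 := fun h => hi (h ▸ Finset.mem_insert_self _ _)
  have hiS : ∀ j ∈ S, P j ≠ i := by
    intro j hj hji
    exact hi (Finset.mem_insert_of_mem (Finset.mem_image.mpr ⟨j, hj, hji⟩))
  obtain ⟨w, c, hw, hle, heq⟩ := hfaces i hi0
  exact ⟨w, c, hw, hle, fun j hj => (heq j).mpr (hiS j hj)⟩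
end

section
/- A full-dimensional finite point configuration A in R^d has degree 0 if and only if A is the vertex set of a d-simplex, possibly with repeated points. -/
open Module

/-- The linear functional `v ↦ ∑ k, w k * v k`. -/
noncomputable def dualOf {d : ℕ} (w : Fin d → ℝ) : (Fin d → ℝ) →ₗ[ℝ] ℝ where
  toFun v := ∑ k, w k * v k
  map_add' u v := by simp [mul_add, Finset.sum_add_distrib]
  map_smul' r v := by
    simp only [Finset.mul_sum, smul_eq_mul, Pi.smul_apply, RingHom.id_apply]
    exact Finset.sum_congr rfl fun k _ => by ring

@[simp] lemma dualOf_apply {d : ℕ} (w v : Fin d → ℝ) : dualOf w v = ∑ k, w k * v k := rfl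

lemma dualOf_single {d : ℕ} (w : Fin d → ℝ) (k : Fin d) :
    dualOf w (Pi.single k 1) = w k := by
  simp [dualOf_apply, Pi.single_apply, mul_ite, Finset.sum_ite_eq']

lemma eq_dualOf {d : ℕ} (f : (Fin d → ℝ) →ₗ[ℝ] ℝ) :
    f = dualOf (fun k => f (Pi.single k 1)) := by
  apply LinearMap.ext; intro v
  have hv : v = ∑ k, v k • (Pi.single k 1 : Fin d → ℝ) := by
    ext j
    simp [Pi.single_apply, mul_ite, Finset.sum_ite_eq']
  conv_lhs => rw [hv]
  simp [mul_comm]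

lemma dualOf_ne_zero {d : ℕ} {w : Fin d → ℝ} (hw : w ≠ 0) : dualOf w ≠ 0 := by
  intro h
  apply hw
  funext k
  have : dualOf w (Pi.single k 1) = 0 := by rw [h]; rfl
  rw [dualOf_single] at this
  simpa using this

/-- A linear functional constant on an affinely spanning family is zero. -/
lemma keyA {d : ℕ} {ι : Type*} (x : ι → (Fin d → ℝ)) (f : (Fin d → ℝ) →ₗ[ℝ] ℝ) (c : ℝ)
    (hspan : affineSpan ℝ (Set.range x) = ⊤) (h : ∀ i, f (x i) = c) : f = 0 := by
  have htot : vectorSpan ℝ (Set.range x) = ⊤ := by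
    rw [← direction_affineSpan, hspan]
    exact AffineSubspace.direction_top ℝ _ _
  have hker : vectorSpan ℝ (Set.range x) ≤ LinearMap.ker f := by
    rw [vectorSpan_def]
    apply Submodule.span_le.2
    rintro v hv
    rw [Set.mem_vsub] at hv
    obtain ⟨a, ⟨i, rfl⟩, b, ⟨j, rfl⟩, rfl⟩ := hv
    simp [LinearMap.mem_ker, vsub_eq_sub, map_sub, h i, h j]
  rw [htot, top_le_iff] at hker
  exact LinearMap.ker_eq_top.mp hker

lemma backward {d n : ℕ} (A : Fin n → (Fin d → ℝ))
    (hspan : affineSpan ℝ (Set.range A) = ⊤)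
    (B : Fin (d + 1) → (Fin d → ℝ)) (hB : AffineIndependent ℝ B)
    (hAB : Set.range A = Set.range B)
    (S : Finset (Fin n)) (hne : S.Nonempty) (hcard : S.card ≤ d) :
    ∃ (w : Fin d → ℝ) (c : ℝ), w ≠ 0 ∧ (∀ j, ∑ k, w k * A j k ≤ c) ∧
      ∀ j ∈ S, ∑ k, w k * A j k = c := by
  have hd : 1 ≤ d := le_trans (Finset.card_pos.mpr hne) hcard
  have hBinj : Function.Injective B := hB.injective
  -- find a vertex not hit by the image of `S`
  obtain ⟨i₀, hi₀⟩ : ∃ i₀ : Fin (d + 1), B i₀ ∉ S.image A := by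
    by_contra hc
    push_neg at hc
    have hinj : Function.Injective (fun i : Fin (d + 1) =>
        (⟨B i, hc i⟩ : {y // y ∈ S.image A})) := by
      intro a b hab
      exact hBinj (congrArg Subtype.val hab)
    have h1 := Fintype.card_le_of_injective _ hinj
    rw [Fintype.card_coe, Fintype.card_fin] at h1
    have h2 := Finset.card_image_le (s := S) (f := A)
    omega
  -- a second index
  haveI : Nontrivial (Fin (d + 1)) := Fin.nontrivial_iff_two_le.mpr (by omega)
  obtain ⟨i₁, hi₁⟩ := exists_ne i₀
  -- the vector span of the opposite facet is a proper subspace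
  set V : Submodule ℝ (Fin d → ℝ) :=
    vectorSpan ℝ (Set.range fun i : {i : Fin (d + 1) // i ≠ i₀} => B i.val) with hV
  have hVrank : finrank ℝ V = d - 1 := by
    have hcardeq : Fintype.card {i : Fin (d + 1) // i ≠ i₀} = (d - 1) + 1 := by
      have : Fintype.card {i : Fin (d + 1) // i ≠ i₀} = d := by
        simp [Fintype.card_subtype_compl, Fintype.card_fin]
      omega
    exact (hB.comp_embedding (Function.Embedding.subtype _)).finrank_vectorSpan hcardeq
  have hVlt : V < ⊤ := by
    rw [lt_top_iff_ne_top]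
    intro h
    rw [h, finrank_top, Module.finrank_pi, Fintype.card_fin] at hVrank
    omega
  obtain ⟨f, hf0, hfmap⟩ := V.exists_dual_map_eq_bot_of_lt_top hVlt inferInstance
  have hfV : ∀ v ∈ V, f v = 0 := by
    intro v hv
    have : f v ∈ V.map f := Submodule.mem_map_of_mem hv
    rwa [hfmap, Submodule.mem_bot] at this
  have hfc : ∀ i, i ≠ i₀ → f (B i) = f (B i₁) := by
    intro i hi
    have hmem : B i - B i₁ ∈ V :=
      vsub_mem_vectorSpan (s := Set.range fun i : {i : Fin (d + 1) // i ≠ i₀} => B i.val) ℝ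
        (Set.mem_range_self (⟨i, hi⟩ : {i : Fin (d + 1) // i ≠ i₀}))
        (Set.mem_range_self (⟨i₁, hi₁⟩ : {i : Fin (d + 1) // i ≠ i₀}))
    have := hfV _ hmem
    rw [map_sub] at this
    linarith
  have hspanB : affineSpan ℝ (Set.range B) = ⊤ := by rwa [hAB] at hspan
  have hne0 : f (B i₀) ≠ f (B i₁) := by
    intro heq
    have hall : ∀ i, f (B i) = f (B i₁) := by
      intro i
      rcases eq_or_ne i i₀ with rfl | hi
      · exact heq
      · exact hfc i hi
    exact hf0 (keyA B f (f (B i₁)) hspanB hall)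
  -- main construction, applicable to `f` or `-f`
  have main : ∀ (g : (Fin d → ℝ) →ₗ[ℝ] ℝ) (cg : ℝ), g ≠ 0 →
      (∀ i, i ≠ i₀ → g (B i) = cg) → g (B i₀) ≤ cg →
      ∃ (w : Fin d → ℝ) (c : ℝ), w ≠ 0 ∧ (∀ j, ∑ k, w k * A j k ≤ c) ∧
        ∀ j ∈ S, ∑ k, w k * A j k = c := by
    intro g cg hg hgeq hgle
    have hval : ∀ v, ∑ k, g (Pi.single k 1) * v k = g v := by
      intro v
      conv_rhs => rw [eq_dualOf g]
      rfl
    refine ⟨fun k => g (Pi.single k 1), cg, ?_, ?_, ?_⟩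
    · intro hw
      apply hg
      rw [eq_dualOf g, hw]
      apply LinearMap.ext
      intro v
      simp
    · intro j
      rw [hval]
      have : A j ∈ Set.range B := by rw [← hAB]; exact Set.mem_range_self j
      obtain ⟨i, hi⟩ := this
      rcases eq_or_ne i i₀ with rfl | hne
      · rw [← hi]; exact hgle
      · rw [← hi, hgeq i hne]
    · intro j hj
      rw [hval]
      have : A j ∈ Set.range B := by rw [← hAB]; exact Set.mem_range_self j
      obtain ⟨i, hi⟩ := this
      have hne : i ≠ i₀ := by
        rintro rfl
        exact hi₀ (hi ▸ Finset.mem_image_of_mem A hj)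
      rw [← hi, hgeq i hne]
  rcases lt_or_gt_of_ne hne0 with hlt | hgt
  · exact main f (f (B i₁)) hf0 hfc (le_of_lt hlt)
  · refine main (-f) (-(f (B i₁))) (by simpa using hf0) ?_ ?_
    · intro i hi
      simp [hfc i hi]
    · simp only [LinearMap.neg_apply, neg_le_neg_iff]
      exact le_of_lt hgt

lemma forward {d n : ℕ} (A : Fin n → (Fin d → ℝ))
    (hspan : affineSpan ℝ (Set.range A) = ⊤)
    (h : ∀ S : Finset (Fin n), S.Nonempty → S.card ≤ d →
      ∃ (w : Fin d → ℝ) (c : ℝ), w ≠ 0 ∧ (∀ j, ∑ k, w k * A j k ≤ c) ∧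
        ∀ j ∈ S, ∑ k, w k * A j k = c) :
    ∃ B : Fin (d + 1) → (Fin d → ℝ),
      AffineIndependent ℝ B ∧ Set.range A = Set.range B := by
  -- `A` is nonempty
  have hn : 0 < n := by
    rcases Nat.eq_zero_or_pos n with rfl | hn
    · exfalso
      haveI : IsEmpty (Fin 0) := inferInstance
      rw [Set.range_eq_empty A, AffineSubspace.span_empty] at hspan
      exact AffineSubspace.bot_ne_top ℝ (Fin d → ℝ) (Fin d → ℝ) hspan
    · exact hn
  -- the degenerate case `d = 0`
  rcases Nat.eq_zero_or_pos d with rfl | hd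
  · haveI : Subsingleton (Fin 0 → ℝ) := ⟨fun u v => funext fun k => k.elim0⟩
    haveI : Subsingleton (Fin (0 + 1)) := ⟨fun a b => Fin.ext (by omega)⟩
    refine ⟨fun _ => A ⟨0, hn⟩, affineIndependent_of_subsingleton ℝ _, ?_⟩
    ext v
    constructor
    · rintro ⟨j, rfl⟩
      exact ⟨0, Subsingleton.elim _ _⟩
    · rintro ⟨i, rfl⟩
      exact ⟨⟨0, hn⟩, Subsingleton.elim _ _⟩
  -- get an affinely independent spanning subset
  obtain ⟨t, hts, htspan, htind⟩ := exists_affineIndependent ℝ (Fin d → ℝ) (Set.range A)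
  rw [hspan] at htspan
  have htfin : t.Finite := (Set.finite_range A).subset hts
  haveI := htfin.fintype
  have hcard : Fintype.card t = d + 1 := by
    have := htind.affineSpan_eq_top_iff_card_eq_finrank_add_one.mp
      (by rwa [Subtype.range_coe])
    rwa [Module.finrank_pi, Fintype.card_fin] at this
  let e : Fin (d + 1) ≃ t := (Fintype.equivFinOfCardEq hcard).symm
  let x : Fin (d + 1) → (Fin d → ℝ) := fun i => (e i : Fin d → ℝ)
  have hxind : AffineIndependent ℝ x := htind.comp_embedding e.toEmbedding
  have hxrange : Set.range x = t := by
    show Set.range (Subtype.val ∘ e) = t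
    rw [Set.range_comp, Equiv.range_eq_univ, Set.image_univ, Subtype.range_coe]
  by_cases hsub : Set.range A ⊆ t
  · exact ⟨x, hxind, by rw [hxrange]; exact subset_antisymm hsub hts⟩
  exfalso
  obtain ⟨p, hpA, hpt⟩ := Set.not_subset.mp hsub
  let b : AffineBasis (Fin (d + 1)) ℝ (Fin d → ℝ) :=
    ⟨x, hxind, by rw [hxrange]; exact htspan⟩
  set lam : Fin (d + 1) → ℝ := fun i => b.coord i p with hlam
  have hsum1 : ∑ i, lam i = 1 := b.sum_coord_apply_eq_one p
  have hrep : ∑ i, lam i • x i = p := b.linear_combination_coord_eq_self p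
  -- choose representing indices
  have hxA : ∀ i, ∃ j, A j = x i := by
    intro i
    have : x i ∈ t := by rw [← hxrange]; exact Set.mem_range_self i
    obtain ⟨j, hj⟩ := hts this
    exact ⟨j, hj⟩
  choose jc hjc using hxA
  obtain ⟨jp, hjp⟩ := hpA
  have hfp_eq : ∀ f : (Fin d → ℝ) →ₗ[ℝ] ℝ, f p = ∑ i, lam i * f (x i) := by
    intro f
    rw [← hrep, map_sum]
    simp [smul_eq_mul]
  have hpos : ∃ i, 0 < lam i := by
    by_contra hc
    push_neg at hc
    have : ∑ i, lam i ≤ 0 := Finset.sum_nonpos fun i _ => hc i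
    linarith
  obtain ⟨ip, hip⟩ := hpos
  by_cases hneg : ∃ i, lam i < 0
  · -- case 1 : some negative coordinate
    obtain ⟨im, him⟩ := hneg
    set P : Finset (Fin (d + 1)) := Finset.univ.filter (fun i => 0 ≤ lam i) with hP
    have himP : im ∉ P := by simp [hP, not_le.mpr him]
    have hPcard : P.card ≤ d := by
      have hss : P ⊂ Finset.univ :=
        (Finset.ssubset_iff_of_subset (Finset.subset_univ P)).mpr
          ⟨im, Finset.mem_univ _, himP⟩
      have := Finset.card_lt_card hss
      simp only [Finset.card_univ, Fintype.card_fin] at this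
      omega
    have hipP : ip ∈ P := by simp [hP, le_of_lt hip]
    set S : Finset (Fin n) := P.image jc with hS
    obtain ⟨w, c, hw, hle, heq⟩ := h S ⟨jc ip, Finset.mem_image_of_mem jc hipP⟩
      (le_trans (Finset.card_image_le) hPcard)
    set f := dualOf w with hf
    have hfle : ∀ j', f (A j') ≤ c := fun j' => hle j'
    have hfeq : ∀ i, 0 ≤ lam i → f (x i) = c := by
      intro i hi
      have hiP : i ∈ P := by simp [hP, hi]
      have := heq (jc i) (Finset.mem_image_of_mem jc hiP)
      rw [hjc i] at this
      exact this
    have hxle : ∀ i, f (x i) ≤ c := by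
      intro i
      rw [← hjc i]
      exact hfle _
    have hpt_le : ∀ i ∈ Finset.univ, lam i * c ≤ lam i * f (x i) := by
      intro i _
      rcases le_or_gt 0 (lam i) with hi | hi
      · rw [hfeq i hi]
      · exact mul_le_mul_of_nonpos_left (hxle i) (le_of_lt hi)
    have hsumc : ∑ i, lam i * c = c := by
      rw [← Finset.sum_mul, hsum1, one_mul]
    have hfpc : f p ≤ c := by rw [← hjp]; exact hfle jp
    have hsums : ∑ i, lam i * c = ∑ i, lam i * f (x i) := by
      have h1 : ∑ i, lam i * f (x i) = f p := (hfp_eq f).symm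
      have h2 : c ≤ ∑ i, lam i * f (x i) := by
        rw [← hsumc]
        exact Finset.sum_le_sum hpt_le
      rw [h1] at h2 ⊢
      rw [hsumc]
      linarith
    have hall : ∀ i, f (x i) = c := by
      have := (Finset.sum_eq_sum_iff_of_le hpt_le).mp hsums
      intro i
      rcases le_or_gt 0 (lam i) with hi | hi
      · exact hfeq i hi
      · have := this i (Finset.mem_univ i)
        have hlamne : lam i ≠ 0 := ne_of_lt hi
        field_simp at this
        linarith
    exact dualOf_ne_zero hw (keyA x f c (by rw [hxrange]; exact htspan) hall)
  · -- case 2 : all coordinates nonnegative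
    push_neg at hneg
    set P : Finset (Fin (d + 1)) := Finset.univ.filter (fun i => 0 < lam i) with hP
    set Z : Finset (Fin (d + 1)) := Finset.univ.filter (fun i => ¬ 0 < lam i) with hZ
    have hPZ : P.card + Z.card = d + 1 := by
      rw [hP, hZ, Finset.card_filter_add_card_filter_not, Finset.card_univ,
        Fintype.card_fin]
    have hP2 : 2 ≤ P.card := by
      by_contra hc
      push_neg at hc
      have hz : ∀ i, i ≠ ip → lam i = 0 := by
        intro i hi
        by_contra hne
        have hipos : 0 < lam i := lt_of_le_of_ne (hneg i) (Ne.symm hne)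
        have : 1 < P.card := Finset.one_lt_card.mpr
          ⟨i, by simp [hP, hipos], ip, by simp [hP, hip], hi⟩
        omega
      have hlam1 : lam ip = 1 := by
        rw [← hsum1, Finset.sum_eq_single ip (fun i _ hi => hz i hi)
          (fun hip' => absurd (Finset.mem_univ ip) hip')]
      have hpx : p = x ip := by
        rw [← hrep, Finset.sum_eq_single ip
          (fun i _ hi => by rw [hz i hi, zero_smul])
          (fun hip' => absurd (Finset.mem_univ ip) hip'), hlam1, one_smul]
      apply hpt
      rw [hpx, ← hxrange]
      exact Set.mem_range_self ip
    have hZcard : Z.card ≤ d - 1 := by omega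
    set S : Finset (Fin n) := insert jp (Z.image jc) with hS
    have hScard : S.card ≤ d := by
      have h1 : S.card ≤ (Z.image jc).card + 1 := Finset.card_insert_le _ _
      have h2 := Finset.card_image_le (s := Z) (f := jc)
      omega
    obtain ⟨w, c, hw, hle, heq⟩ := h S ⟨jp, Finset.mem_insert_self _ _⟩ hScard
    set f := dualOf w with hf
    have hfle : ∀ j', f (A j') ≤ c := fun j' => hle j'
    have hfp : f p = c := by
      have := heq jp (Finset.mem_insert_self _ _)
      rw [hjp] at this
      exact this
    have hfeqZ : ∀ i, ¬ 0 < lam i → f (x i) = c := by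
      intro i hi
      have hiZ : i ∈ Z := by
        simp only [hZ, Finset.mem_filter, Finset.mem_univ, true_and]
        exact hi
      have := heq (jc i) (Finset.mem_insert_of_mem (Finset.mem_image_of_mem jc hiZ))
      rw [hjc i] at this
      exact this
    have hxle : ∀ i, f (x i) ≤ c := by
      intro i
      rw [← hjc i]
      exact hfle _
    have hpt_le : ∀ i ∈ Finset.univ, lam i * f (x i) ≤ lam i * c := fun i _ =>
      mul_le_mul_of_nonneg_left (hxle i) (hneg i)
    have hsumc : ∑ i, lam i * c = c := by
      rw [← Finset.sum_mul, hsum1, one_mul]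
    have hsums : ∑ i, lam i * f (x i) = ∑ i, lam i * c := by
      rw [hsumc, ← hfp_eq f, hfp]
    have hall : ∀ i, f (x i) = c := by
      have := (Finset.sum_eq_sum_iff_of_le hpt_le).mp hsums
      intro i
      rcases lt_or_ge 0 (lam i) with hi | hi
      · have h' := this i (Finset.mem_univ i)
        exact mul_left_cancel₀ (ne_of_gt hi) h'
      · exact hfeqZ i (not_lt.mpr hi)
    exact dualOf_ne_zero hw (keyA x f c (by rw [hxrange]; exact htspan) hall)

/-- A full-dimensional point configuration `A` in `ℝ^d` has degree `0` (i.e. every nonempty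
subset of size `≤ d` lies in a common supporting hyperplane of `conv(A)`) if and only if
`A` is the vertex set of a `d`-simplex, possibly with repeated points. -/
theorem stmt_1 (d n : ℕ) (A : Fin n → (Fin d → ℝ))
    (hspan : affineSpan ℝ (Set.range A) = ⊤) :
    (∀ S : Finset (Fin n), S.Nonempty → S.card ≤ d →
      ∃ (w : Fin d → ℝ) (c : ℝ), w ≠ 0 ∧ (∀ j, ∑ k, w k * A j k ≤ c) ∧
        ∀ j ∈ S, ∑ k, w k * A j k = c)
    ↔ ∃ B : Fin (d + 1) → (Fin d → ℝ),
        AffineIndependent ℝ B ∧ Set.range A = Set.range B := by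
  constructor
  · exact forward A hspan
  · rintro ⟨B, hB, hAB⟩ S hne hcard
    exact backward A hspan B hB hAB S hne hcard
end

section
/- Any d-dimensional configuration A of n points with d ≥ deg(A) + (n-1)/2 is a pyramid, i.e., there is a point a in A not lying in the affine hull of A \ {a}. -/
open Finset

/-- Auxiliary: from a full-support affine dependence whose positive part is at most
half the points, together with the supporting-hyperplane property, derive `False`. -/
private lemma stmt_2_aux (d n δ : ℕ) (A : Fin n → (Fin d → ℝ))
    (hspan : affineSpan ℝ (Set.range A) = ⊤)
    (hdeg : ∀ S : Finset (Fin n), S.Nonempty → S.card + δ ≤ d →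
      ∃ (w : Fin d → ℝ) (c : ℝ), w ≠ 0 ∧ (∀ j, ∑ k, w k * A j k ≤ c) ∧
        ∀ j ∈ S, ∑ k, w k * A j k = c)
    (hd : 2 * δ + n ≤ 2 * d + 1)
    (lam : Fin n → ℝ) (hl1 : ∑ j, lam j = 0) (hl2 : ∑ j, lam j • A j = 0)
    (hall : ∀ i, lam i ≠ 0) (hn : 0 < n)
    (hcard : 2 * (Finset.univ.filter (fun i => 0 < lam i)).card ≤ n) : False := by
  classical
  set P : Finset (Fin n) := Finset.univ.filter (fun i => 0 < lam i) with hP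
  -- P is nonempty
  have hPne : P.Nonempty := by
    by_contra hPe
    rw [Finset.not_nonempty_iff_eq_empty] at hPe
    have hneg : ∀ i ∈ (Finset.univ : Finset (Fin n)), lam i < 0 := by
      intro i _
      rcases lt_trichotomy (lam i) 0 with h | h | h
      · exact h
      · exact absurd h (hall i)
      · exfalso
        have : i ∈ P := by simp [hP, h]
        simp [hPe] at this
    have : ∑ j, lam j < 0 :=
      Finset.sum_neg hneg (Finset.univ_nonempty_iff.mpr ⟨⟨0, hn⟩⟩)
    linarith
  have hPcard : P.card + δ ≤ d := by omega
  obtain ⟨w, c, hw0, hwle, hweq⟩ := hdeg P hPne hPcard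
  set f : Fin n → ℝ := fun j => ∑ k, w k * A j k with hf
  -- the weighted sum of f vanishes
  have hvk : ∀ k, ∑ j, lam j * A j k = 0 := by
    intro k
    have := congrFun hl2 k
    simpa using this
  have htot : ∑ j, lam j * (f j - c) = 0 := by
    have h1 : ∑ j, lam j * f j = 0 := by
      have : ∑ j, lam j * f j = ∑ k, w k * (∑ j, lam j * A j k) := by
        simp only [hf, Finset.mul_sum]
        rw [Finset.sum_comm]
        congr 1; funext k; congr 1; funext j; ring
      rw [this]
      simp [hvk]
    have h2 : ∑ j, lam j * (f j - c) = (∑ j, lam j * f j) - (∑ j, lam j) * c := by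
      rw [Finset.sum_mul, ← Finset.sum_sub_distrib]
      congr 1; funext j; ring
    rw [h2, h1, hl1]; ring
  -- sum over P is zero, hence sum over complement is zero
  have hsplit := Finset.sum_filter_add_sum_filter_not Finset.univ
    (fun i => 0 < lam i) (fun j => lam j * (f j - c))
  have hsumP : ∑ j ∈ P, lam j * (f j - c) = 0 := by
    apply Finset.sum_eq_zero
    intro j hj
    have hfj : f j = c := hweq j hj
    rw [hfj]; ring
  have hsumN : ∑ j ∈ Finset.univ.filter (fun i => ¬ 0 < lam i), lam j * (f j - c) = 0 := by
    have := hsplit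
    rw [← hP] at this
    nlinarith [this, hsumP, htot]
  -- every term in the complement is nonneg, hence zero, hence f j = c everywhere
  have hfc : ∀ j, f j = c := by
    intro j
    by_cases hj : 0 < lam j
    · exact hweq j (by simp [hP, hj])
    · have hjm : j ∈ Finset.univ.filter (fun i => ¬ 0 < lam i) := by
        simp only [Finset.mem_filter, Finset.mem_univ, true_and]; exact hj
      have hnonneg : ∀ i ∈ Finset.univ.filter (fun i => ¬ 0 < lam i),
          0 ≤ lam i * (f i - c) := by
        intro i hi
        simp only [Finset.mem_filter] at hi
        have h1 : lam i ≤ 0 := le_of_not_gt hi.2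
        have h2 : f i - c ≤ 0 := sub_nonpos.mpr (hwle i)
        nlinarith
      have := (Finset.sum_eq_zero_iff_of_nonneg hnonneg).mp hsumN j hjm
      rcases mul_eq_zero.mp this with h | h
      · exact absurd h (hall j)
      · linarith [sub_eq_zero.mp h]
  -- every point of ℝ^d satisfies the hyperplane equation, contradiction with w ≠ 0
  have hq : ∀ x : Fin d → ℝ, ∑ k, w k * x k = c := by
    intro x
    have hx : x ∈ affineSpan ℝ (Set.range A) := by rw [hspan]; trivial
    refine affineSpan_induction (p := fun y => ∑ k, w k * y k = c) hx ?_ ?_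
    · rintro y ⟨j, rfl⟩
      exact hfc j
    · intro t u v z hu hv hz
      have hk : ∀ k : Fin d, w k * (t • (u -ᵥ v) +ᵥ z) k
          = t * (w k * u k) - t * (w k * v k) + w k * z k := by
        intro k
        simp only [vsub_eq_sub, vadd_eq_add, Pi.add_apply, Pi.sub_apply,
          Pi.smul_apply, smul_eq_mul]
        ring
      rw [Finset.sum_congr rfl (fun k _ => hk k), Finset.sum_add_distrib,
        Finset.sum_sub_distrib, ← Finset.mul_sum, ← Finset.mul_sum, hu, hv, hz]
      ring
  have hc0 : c = 0 := by
    have := hq 0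
    simpa using this.symm
  apply hw0
  funext k
  have := hq (Pi.single k 1)
  rw [hc0] at this
  simpa [Pi.single_apply, mul_ite, Finset.sum_ite_eq'] using this

/-- Any `d`-dimensional configuration `A` of `n` points with `d ≥ deg(A) + (n-1)/2`
is a pyramid: some point of `A` lies outside the affine hull of the remaining points.
Here `deg(A) ≤ δ` is expressed by: every nonempty subset of size `≤ d - δ` lies in a
common supporting hyperplane of `conv(A)`. -/
theorem stmt_2 (d n δ : ℕ) (A : Fin n → (Fin d → ℝ))
    (hspan : affineSpan ℝ (Set.range A) = ⊤)
    (hdeg : ∀ S : Finset (Fin n), S.Nonempty → S.card + δ ≤ d →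
      ∃ (w : Fin d → ℝ) (c : ℝ), w ≠ 0 ∧ (∀ j, ∑ k, w k * A j k ≤ c) ∧
        ∀ j ∈ S, ∑ k, w k * A j k = c)
    (hd : 2 * δ + n ≤ 2 * d + 1) :
    ∃ i : Fin n, A i ∉ affineSpan ℝ (A '' {j | j ≠ i}) := by
  classical
  by_contra hcon
  push_neg at hcon
  rcases Nat.eq_zero_or_pos n with hn | hn
  · subst hn
    rw [Set.range_eq_empty] at hspan
    simp only [AffineSubspace.span_empty] at hspan
    exact absurd hspan (by simp [AffineSubspace.bot_ne_top])
  -- Step A: for each i, there is an affine dependence with λ i ≠ 0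
  have stepA : ∀ i : Fin n, ∃ lam : Fin n → ℝ,
      (∑ j, lam j = 0) ∧ (∑ j, lam j • A j = 0) ∧ lam i ≠ 0 := by
    intro i
    have hmem := hcon i
    rw [Set.image_eq_range] at hmem
    obtain ⟨s, ww, hw1, hw2⟩ := eq_affineCombination_of_mem_affineSpan hmem
    rw [s.affineCombination_eq_linear_combination _ _ hw1] at hw2
    refine ⟨fun j => (∑ x ∈ s, if (x : Fin n) = j then ww x else 0)
        - (if j = i then 1 else 0), ?_, ?_, ?_⟩
    · rw [Finset.sum_sub_distrib, Finset.sum_comm]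
      simp [hw1]
    · have : ∀ j : Fin n,
          ((∑ x ∈ s, if (x : Fin n) = j then ww x else 0)
            - (if j = i then 1 else 0)) • A j
          = (∑ x ∈ s, if (x : Fin n) = j then ww x • A j else 0)
            - (if j = i then A j else 0) := by
        intro j
        rw [sub_smul, Finset.sum_smul, ite_smul, one_smul, zero_smul]
        congr 1
        apply Finset.sum_congr rfl
        intro x _
        rw [ite_smul, zero_smul]
      rw [Finset.sum_congr rfl fun j _ => this j, Finset.sum_sub_distrib,
        Finset.sum_comm]
      simp [hw2]
    · have h1 : (∑ x ∈ s, if (x : Fin n) = i then ww x else 0) = 0 := by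
        apply Finset.sum_eq_zero
        intro x _
        rw [if_neg (show (x : Fin n) ≠ i from x.2)]
      simp [h1]
  -- Step B: a dependence with full support
  have stepB : ∀ S : Finset (Fin n), ∃ lam : Fin n → ℝ,
      (∑ j, lam j = 0) ∧ (∑ j, lam j • A j = 0) ∧ ∀ i ∈ S, lam i ≠ 0 := by
    intro S
    induction S using Finset.induction with
    | empty => exact ⟨0, by simp, by simp, by simp⟩
    | insert a S ha ih =>
      obtain ⟨lam, hl1, hl2, hlS⟩ := ih
      obtain ⟨mu, hm1, hm2, hma⟩ := stepA a
      obtain ⟨t, ht⟩ := Infinite.exists_notMem_finset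
        (Finset.image (fun j => -lam j / mu j) Finset.univ)
      refine ⟨lam + t • mu, ?_, ?_, ?_⟩
      · simp only [Pi.add_apply, Pi.smul_apply, smul_eq_mul]
        rw [Finset.sum_add_distrib, ← Finset.mul_sum, hl1, hm1]; ring
      · have : ∀ j, (lam j + t * mu j) • A j = lam j • A j + t • (mu j • A j) := by
          intro j
          rw [add_smul, smul_smul]
        simp only [Pi.add_apply, Pi.smul_apply, smul_eq_mul]
        rw [Finset.sum_congr rfl fun j _ => this j, Finset.sum_add_distrib,
          ← Finset.smul_sum, hl2, hm2]
        simp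
      · intro i hi
        simp only [Pi.add_apply, Pi.smul_apply, smul_eq_mul]
        intro heq
        by_cases hmu : mu i = 0
        · rw [hmu, mul_zero, add_zero] at heq
          rcases Finset.mem_insert.mp hi with rfl | hiS
          · exact hma hmu
          · exact hlS i hiS heq
        · apply ht
          rw [Finset.mem_image]
          refine ⟨i, Finset.mem_univ i, ?_⟩
          field_simp
          linarith
  obtain ⟨lam, hl1, hl2, hall'⟩ := stepB Finset.univ
  have hall : ∀ i, lam i ≠ 0 := fun i => hall' i (Finset.mem_univ i)
  -- split by sign; one side has at most half the points
  have hcards := Finset.card_filter_add_card_filter_not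
    (s := (Finset.univ : Finset (Fin n))) (p := fun i => 0 < lam i)
  rw [Finset.card_univ, Fintype.card_fin] at hcards
  by_cases hsmall : 2 * (Finset.univ.filter (fun i => 0 < lam i)).card ≤ n
  · exact stmt_2_aux d n δ A hspan hdeg hd lam hl1 hl2 hall hn hsmall
  · refine stmt_2_aux d n δ A hspan hdeg hd (-lam) ?_ ?_ (fun i => by simpa using hall i) hn ?_
    · simp [hl1]
    · simp only [Pi.neg_apply, neg_smul]
      rw [Finset.sum_neg_distrib, hl2, neg_zero]
    · have hfe : Finset.univ.filter (fun i => 0 < (-lam) i)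
          = Finset.univ.filter (fun i => ¬ 0 < lam i) := by
        apply Finset.filter_congr
        intro i _
        simp only [Pi.neg_apply, neg_pos, eq_iff_iff]
        constructor
        · intro h; linarith
        · intro h
          rcases lt_trichotomy (lam i) 0 with h' | h' | h'
          · exact h'
          · exact absurd h' (hall i)
          · exact absurd h' h
      rw [hfe]
      omega
end

section
/- Let V be a vector configuration of rank r (linearly spanning R^r) with r+d+1 elements and dual degree δ. Then V admits a weak dual Cayley decomposition of length at least d - 3δ + 1, i.e., it contains at least d-3δ+1 pairwise disjoint subsets each of which contains the origin in the relative interior of its convex hull. -/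
open Finset

attribute [local instance] Classical.propDecidable

namespace Stmt6Aux

/-- Every linear functional on `Fin r → ℝ` is a dot product. -/
lemma functional_eq_sum {r : ℕ} (g : (Fin r → ℝ) →ₗ[ℝ] ℝ) (v : Fin r → ℝ) :
    g v = ∑ k, g (Pi.single k 1) * v k := by
  have h : v = ∑ k, v k • (Pi.single k 1 : Fin r → ℝ) := by
    rw [← Finset.univ_sum_single v]
    refine Finset.sum_congr rfl fun k _ => ?_
    ext m
    by_cases hm : m = k
    · subst hm; simp
    · simp [Pi.single_apply, hm, Ne.symm]
  conv_lhs => rw [h]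
  rw [map_sum]
  refine Finset.sum_congr rfl fun k _ => ?_
  rw [map_smul]
  simp [mul_comm]

/-- A linearly independent family with values in a submodule bounds its finrank below. -/
lemma card_le_finrank_of_indep {r : ℕ} {ι : Type} [Fintype ι] (W : Submodule ℝ (Fin r → ℝ))
    (b : ι → (Fin r → ℝ)) (hb : LinearIndependent ℝ b) (hmem : ∀ j, b j ∈ W) :
    Fintype.card ι ≤ Module.finrank ℝ W := by
  have hb' : LinearIndependent ℝ (fun j => (⟨b j, hmem j⟩ : W)) := by
    apply LinearIndependent.of_comp W.subtype
    convert hb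
    rfl
  simpa using hb'.fintype_card_le_finrank

/-- Removing an index whose vector is zero does not change the span. -/
lemma span_erase_zero {N r : ℕ} (V : Fin N → (Fin r → ℝ)) (S : Finset (Fin N)) (i : Fin N)
    (hi : i ∈ S) (h0 : V i = 0) :
    Submodule.span ℝ (V '' ↑(S.erase i)) = Submodule.span ℝ (V '' ↑S) := by
  apply le_antisymm
  · exact Submodule.span_mono (Set.image_mono (f := V) (by simp [Finset.erase_subset]))
  · rw [Submodule.span_le]
    rintro x ⟨j, hj, rfl⟩
    by_cases hji : j = i
    · subst hji; rw [h0]; exact Submodule.zero_mem _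
    · exact Submodule.subset_span ⟨j, by simpa [hji] using hj, rfl⟩



/-- Key counting lemma: for a functional `β`, the number of `φ`-positive elements inside the
hyperplane section `β = 0` plus the number of `β`-positive elements is at most the global
bound on positive counts. -/
lemma lemA {N r : ℕ} (V : Fin N → (Fin r → ℝ)) (S : Finset (Fin N)) (M : ℕ)
    (hM : ∀ g : (Fin r → ℝ) →ₗ[ℝ] ℝ, (S.filter (fun i => 0 < g (V i))).card ≤ M)
    (β φ : (Fin r → ℝ) →ₗ[ℝ] ℝ) :
    ((S.filter (fun idx => β (V idx) = 0)).filter (fun idx => 0 < φ (V idx))).card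
      + (S.filter (fun idx => 0 < β (V idx))).card ≤ M := by
  set Bp := S.filter (fun idx => 0 < β (V idx)) with hBp
  set A := (S.filter (fun idx => β (V idx) = 0)).filter (fun idx => 0 < φ (V idx)) with hA
  set t : ℝ := 1 + ∑ idx ∈ Bp, |φ (V idx)| / (β (V idx)) with ht
  have htpos : ∀ idx ∈ Bp, 0 < φ (V idx) + t * β (V idx) := by
    intro idx hidx
    have hb : 0 < β (V idx) := (Finset.mem_filter.mp hidx).2
    have hterm : |φ (V idx)| / (β (V idx)) ≤ t - 1 := by
      rw [ht]
      have hnn : ∀ j ∈ Bp, 0 ≤ |φ (V j)| / (β (V j)) := by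
        intro j hj
        exact div_nonneg (abs_nonneg _) (le_of_lt (Finset.mem_filter.mp hj).2)
      have := Finset.single_le_sum hnn hidx
      linarith
    have h2 : |φ (V idx)| ≤ (t - 1) * β (V idx) := (div_le_iff₀ hb).mp hterm
    have h3 : -φ (V idx) ≤ |φ (V idx)| := neg_le_abs _
    nlinarith
  have hsub : A ∪ Bp ⊆ S.filter (fun idx => 0 < (φ + t • β) (V idx)) := by
    intro idx hidx
    rw [Finset.mem_union] at hidx
    rw [Finset.mem_filter]
    rcases hidx with h | h
    · rw [hA, Finset.mem_filter, Finset.mem_filter] at h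
      refine ⟨h.1.1, ?_⟩
      simp only [LinearMap.add_apply, LinearMap.smul_apply, smul_eq_mul]
      rw [h.1.2]
      simpa using h.2
    · refine ⟨(Finset.mem_filter.mp h).1, ?_⟩
      simp only [LinearMap.add_apply, LinearMap.smul_apply, smul_eq_mul]
      exact htpos idx h
  have hdisj : Disjoint A Bp := by
    rw [Finset.disjoint_left]
    intro a ha hb
    rw [hA, Finset.mem_filter, Finset.mem_filter] at ha
    have h2 := (Finset.mem_filter.mp hb).2
    rw [ha.1.2] at h2
    exact lt_irrefl 0 h2
  calc A.card + Bp.card = (A ∪ Bp).card := (Finset.card_union_of_disjoint hdisj).symm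
  _ ≤ _ := Finset.card_le_card hsub
  _ ≤ M := hM _

set_option maxHeartbeats 1000000 in
lemma main {N r : ℕ} (V : Fin N → (Fin r → ℝ)) :
    ∀ (n : ℕ) (S : Finset (Fin N)), S.card = n → ∀ M : ℕ,
      (∀ g : (Fin r → ℝ) →ₗ[ℝ] ℝ, (S.filter (fun i => 0 < g (V i))).card ≤ M) →
      ∃ P : Finset (Finset (Fin N)),
        (∀ p ∈ P, ∀ q ∈ P, p ≠ q → Disjoint p q) ∧
        (∀ p ∈ P, p.Nonempty ∧ p ⊆ S ∧ ∃ l : Fin N → ℝ,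
            (∀ j ∈ p, 0 < l j) ∧ ∑ j ∈ p, l j • V j = 0) ∧
        n + 2 * Module.finrank ℝ (Submodule.span ℝ (V '' ↑S)) ≤ P.card + 3 * M := by
  intro n
  induction n using Nat.strong_induction_on with
  | _ n IH =>
  intro S hScard M hM
  rcases Nat.eq_zero_or_pos n with hn0 | hnpos
  · subst hn0
    have hS : S = ∅ := Finset.card_eq_zero.mp hScard
    subst hS
    refine ⟨∅, by simp, by simp, ?_⟩
    have h1 : (V '' ↑(∅ : Finset (Fin N))) = ∅ := by simp
    rw [h1, Submodule.span_empty]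
    simp [finrank_bot]
  by_cases hzero : ∃ i ∈ S, V i = 0
  · -- a zero vector gives a singleton part
    obtain ⟨i, hiS, hi0⟩ := hzero
    obtain ⟨P, hdisj, hparts, hcount⟩ := IH (n-1) (by omega) (S.erase i)
      (by rw [Finset.card_erase_of_mem hiS, hScard])
      M (fun g => le_trans (Finset.card_le_card
        (Finset.filter_subset_filter _ (Finset.erase_subset _ _))) (hM g))
    have hiP : {i} ∉ P := by
      intro hmem
      have := (hparts _ hmem).2.1
      have : i ∈ S.erase i := this (Finset.mem_singleton_self i)
      simp at this
    refine ⟨insert {i} P, ?_, ?_, ?_⟩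
    · intro a ha b hb hab
      rcases Finset.mem_insert.mp ha with ha1 | ha2 <;>
        rcases Finset.mem_insert.mp hb with hb1 | hb2
      · exact absurd (ha1.trans hb1.symm) hab
      · subst ha1
        have hbsub := (hparts _ hb2).2.1
        refine Finset.disjoint_singleton_left.mpr ?_
        intro hib
        have := hbsub hib
        simp at this
      · subst hb1
        have hasub := (hparts _ ha2).2.1
        refine Finset.disjoint_singleton_right.mpr ?_
        intro hib
        have := hasub hib
        simp at this
      · exact hdisj _ ha2 _ hb2 hab
    · intro a ha
      rcases Finset.mem_insert.mp ha with ha1 | ha2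
      · subst ha1
        refine ⟨⟨i, Finset.mem_singleton_self i⟩, by simpa using hiS, fun _ => 1, ?_, ?_⟩
        · intro j hj; norm_num
        · simp [hi0]
      · obtain ⟨hne, hsub, hl⟩ := hparts _ ha2
        exact ⟨hne, hsub.trans (Finset.erase_subset _ _), hl⟩
    · rw [Finset.card_insert_of_notMem hiP]
      rw [span_erase_zero V S i hiS hi0] at hcount
      omega
  -- zero-free main case
  push_neg at hzero
  set U := Submodule.span ℝ (V '' ↑S) with hUdef
  set ρ := Module.finrank ℝ U with hρdef
  -- a basis of U consisting of vectors of the configuration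
  obtain ⟨bs, hbsub, hbspan, hbind⟩ := exists_linearIndependent ℝ (V '' ↑S)
  have hbfin : bs.Finite := (S.finite_toSet.image V).subset hbsub
  haveI : Fintype bs := hbfin.fintype
  have hcardbs : bs.toFinset.card = ρ := by
    rw [hρdef, hUdef, ← hbspan]
    rw [finrank_span_set_eq_card hbind]
  have hρpos : 1 ≤ ρ := by
    obtain ⟨i, hiS⟩ := Finset.card_pos.mp (hScard ▸ hnpos)
    refine le_trans ?_ (card_le_finrank_of_indep U (fun _ : Fin 1 => V i) ?_ ?_)
    · simp
    · exact linearIndependent_unique_iff.mpr (hzero i hiS)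
    · intro j
      exact Submodule.subset_span ⟨i, by simpa using hiS, rfl⟩
  haveI : Nonempty (Fin ρ) := ⟨⟨0, hρpos⟩⟩
  set e := Finset.equivFinOfCardEq hcardbs with hedef
  set b : Fin ρ → (Fin r → ℝ) := fun j => ↑(e.symm j) with hbdef
  have hbmem_bs : ∀ j, b j ∈ bs := fun j => by
    have := (e.symm j).2
    simpa using Set.mem_toFinset.mp this
  have hbindep : LinearIndependent ℝ b := by
    have hinj : Function.Injective (fun j : Fin ρ => (⟨↑(e.symm j), hbmem_bs j⟩ : bs)) := by
      intro j₁ j₂ h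
      have h' : (⟨↑(e.symm j₁), hbmem_bs j₁⟩ : bs).val = (⟨↑(e.symm j₂), hbmem_bs j₂⟩ : bs).val :=
        congrArg Subtype.val h
      exact e.symm.injective (Subtype.ext h')
    exact hbind.comp _ hinj
  have hbU : ∀ j, b j ∈ U := fun j => by
    rw [hUdef, ← hbspan]
    exact Submodule.subset_span (hbmem_bs j)
  have hbVS : ∀ j, b j ∈ V '' ↑S := fun j => hbsub (hbmem_bs j)
  -- preimage indices
  have hpex : ∀ j, ∃ idx, idx ∈ S ∧ V idx = b j := by
    intro j
    obtain ⟨idx, hidx, heq⟩ := hbVS j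
    exact ⟨idx, by simpa using hidx, heq⟩
  set p : Fin ρ → Fin N := fun j => (hpex j).choose with hpdef
  have hpS : ∀ j, p j ∈ S := fun j => (hpex j).choose_spec.1
  have hpV : ∀ j, V (p j) = b j := fun j => (hpex j).choose_spec.2
  have hpinj : Function.Injective p := by
    intro j₁ j₂ h
    exact hbindep.injective (by rw [← hpV j₁, ← hpV j₂, h])
  -- basis structure on U
  set bU : Fin ρ → U := fun j => ⟨b j, hbU j⟩ with hbUdef
  have hbUind : LinearIndependent ℝ bU := by
    apply LinearIndependent.of_comp U.subtype
    convert hbindep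
    rfl
  set BU : Module.Basis (Fin ρ) ℝ U :=
    basisOfLinearIndependentOfCardEqFinrank hbUind (by simp [hρdef]) with hBUdef
  have hBUb : ∀ j, BU j = bU j := fun j => by
    rw [hBUdef, coe_basisOfLinearIndependentOfCardEqFinrank]
  -- coordinate functionals, extended to the whole space
  obtain ⟨U', hcompl⟩ := Submodule.exists_isCompl U
  set B : Fin ρ → ((Fin r → ℝ) →ₗ[ℝ] ℝ) :=
    fun i => (BU.coord i).comp (U.linearProjOfIsCompl U' hcompl) with hBdef
  have hBrepr : ∀ (v : Fin r → ℝ) (hv : v ∈ U) (i : Fin ρ), B i v = BU.repr ⟨v, hv⟩ i := by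
    intro v hv i
    have hproj : U.linearProjOfIsCompl U' hcompl v = ⟨v, hv⟩ :=
      Submodule.linearProjOfIsCompl_apply_left hcompl ⟨v, hv⟩
    rw [hBdef]
    simp [hproj, Module.Basis.coord_apply]
  have hBdelta : ∀ i j, B i (b j) = if j = i then 1 else 0 := by
    intro i j
    rw [hBrepr (b j) (hbU j) i]
    have hbj : (⟨b j, hbU j⟩ : U) = BU j := by
      apply Subtype.ext
      rw [hBUb]
    rw [hbj, BU.repr_self]
    exact Finsupp.single_apply
  have hexp : ∀ (v : Fin r → ℝ) (hv : v ∈ U), v = ∑ i, B i v • b i := by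
    intro v hv
    have h := BU.sum_repr ⟨v, hv⟩
    have h2 := congrArg (Submodule.subtype U) h
    rw [map_sum] at h2
    simp only [Submodule.coe_subtype, map_smul] at h2
    calc v = ((⟨v, hv⟩ : U) : Fin r → ℝ) := rfl
    _ = ∑ i, BU.repr ⟨v, hv⟩ i • ((BU i : U) : Fin r → ℝ) := h2.symm
    _ = ∑ i, B i v • b i := by
        refine Finset.sum_congr rfl fun i _ => ?_
        rw [hBrepr v hv i, hBUb]
  have hmemU : ∀ idx ∈ S, V idx ∈ U := by
    intro idx hidx
    exact Submodule.subset_span ⟨idx, by simpa using hidx, rfl⟩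
  -- counting data for each coordinate functional
  have hPp1 : ∀ i, 1 ≤ (S.filter fun idx => 0 < B i (V idx)).card := by
    intro i
    refine Finset.card_pos.mpr ⟨p i, ?_⟩
    rw [Finset.mem_filter]
    refine ⟨hpS i, ?_⟩
    rw [hpV i, hBdelta i i]
    norm_num
  by_cases hwin : ∃ i₀, (S.filter fun idx => 0 < B i₀ (V idx)).card
      + (S.filter fun idx => B i₀ (V idx) < 0).card + 2
      ≤ 3 * max (S.filter fun idx => 0 < B i₀ (V idx)).card
          (S.filter fun idx => B i₀ (V idx) < 0).card
  · -- WIN branch : recurse into the hyperplane section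
    obtain ⟨i₀, hi₀⟩ := hwin
    have hApos : ∀ φ : (Fin r → ℝ) →ₗ[ℝ] ℝ,
        ((S.filter fun idx => B i₀ (V idx) = 0).filter fun idx => 0 < φ (V idx)).card
          + (S.filter fun idx => 0 < B i₀ (V idx)).card ≤ M :=
      fun φ => lemA V S M hM (B i₀) φ
    have hAneg : ∀ φ : (Fin r → ℝ) →ₗ[ℝ] ℝ,
        ((S.filter fun idx => B i₀ (V idx) = 0).filter fun idx => 0 < φ (V idx)).card
          + (S.filter fun idx => B i₀ (V idx) < 0).card ≤ M := by
      intro φ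
      have h := lemA V S M hM (-(B i₀)) φ
      have e1 : (S.filter fun idx => (-(B i₀)) (V idx) = 0)
          = (S.filter fun idx => B i₀ (V idx) = 0) := by
        ext idx
        simp [LinearMap.neg_apply, neg_eq_zero]
      have e2 : (S.filter fun idx => 0 < (-(B i₀)) (V idx))
          = (S.filter fun idx => B i₀ (V idx) < 0) := by
        ext idx
        simp [LinearMap.neg_apply, neg_pos]
      rw [e1, e2] at h
      exact h
    -- partition of the cardinality by the sign of B i₀
    have hTriCard : (S.filter fun idx => B i₀ (V idx) = 0).card
        + ((S.filter fun idx => 0 < B i₀ (V idx)).card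
          + (S.filter fun idx => B i₀ (V idx) < 0).card) = n := by
      have h1 : (S.filter fun idx => B i₀ (V idx) = 0).card
          + (S.filter fun idx => ¬ (B i₀ (V idx) = 0)).card = n := by
        rw [Finset.card_filter_add_card_filter_not]
        exact hScard
      have h2 : (S.filter fun idx => ¬ (B i₀ (V idx) = 0))
          = (S.filter fun idx => 0 < B i₀ (V idx)) ∪ (S.filter fun idx => B i₀ (V idx) < 0) := by
        ext idx
        simp only [Finset.mem_filter, Finset.mem_union]
        constructor
        · rintro ⟨hS', hne⟩
          rcases lt_or_gt_of_ne hne with hlt | hgt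
          · exact Or.inr ⟨hS', hlt⟩
          · exact Or.inl ⟨hS', hgt⟩
        · rintro (⟨hS', hgt⟩ | ⟨hS', hlt⟩)
          · exact ⟨hS', ne_of_gt hgt⟩
          · exact ⟨hS', ne_of_lt hlt⟩
      have h3 : Disjoint (S.filter fun idx => 0 < B i₀ (V idx))
          (S.filter fun idx => B i₀ (V idx) < 0) := by
        rw [Finset.disjoint_left]
        intro a ha hb
        have h4 := (Finset.mem_filter.mp ha).2
        have h5 := (Finset.mem_filter.mp hb).2
        exact absurd (h4.trans h5) (lt_irrefl 0)
      rw [h2, Finset.card_union_of_disjoint h3] at h1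
      exact h1
    have hmaxM : max (S.filter fun idx => 0 < B i₀ (V idx)).card
        (S.filter fun idx => B i₀ (V idx) < 0).card ≤ M := by
      have h1 := hApos 0
      have h2 := hAneg 0
      omega
    have hTlt : (S.filter fun idx => B i₀ (V idx) = 0).card < n := by
      have := hPp1 i₀
      omega
    obtain ⟨P, hPdisj, hPparts, hPcount⟩ := IH _ hTlt (S.filter fun idx => B i₀ (V idx) = 0) rfl
      (M - max (S.filter fun idx => 0 < B i₀ (V idx)).card
          (S.filter fun idx => B i₀ (V idx) < 0).card)
      (by
        intro φ
        have h1 := hApos φ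
        have h2 := hAneg φ
        omega)
    have hrank : ρ - 1 ≤ Module.finrank ℝ
        (Submodule.span ℝ (V '' ↑(S.filter fun idx => B i₀ (V idx) = 0))) := by
      have hind : LinearIndependent ℝ (fun j : {j : Fin ρ // j ≠ i₀} => b j.val) :=
        hbindep.comp _ Subtype.val_injective
      have hmem : ∀ j : {j : Fin ρ // j ≠ i₀}, b j.val
          ∈ Submodule.span ℝ (V '' ↑(S.filter fun idx => B i₀ (V idx) = 0)) := by
        intro j
        apply Submodule.subset_span
        refine ⟨p j.val, ?_, hpV j.val⟩
        have hmemT : p j.val ∈ S.filter fun idx => B i₀ (V idx) = 0 := by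
          rw [Finset.mem_filter]
          refine ⟨hpS _, ?_⟩
          rw [hpV, hBdelta i₀ j.val]
          simp [j.2]
        simpa using hmemT
      have hcard := card_le_finrank_of_indep _ _ hind hmem
      have hcardeq : Fintype.card {j : Fin ρ // j ≠ i₀} = ρ - 1 := by
        simp [Fintype.card_subtype_compl]
      omega
    refine ⟨P, hPdisj, ?_, ?_⟩
    · intro q hq
      obtain ⟨hne, hsub, hl⟩ := hPparts q hq
      exact ⟨hne, hsub.trans (Finset.filter_subset _ _), hl⟩
    · omega
  · -- STRUCTURE branch : each coordinate has exactly one positive and one negative element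
    push_neg at hwin
    have hPpPn : ∀ i, (S.filter fun idx => 0 < B i (V idx)).card = 1
        ∧ (S.filter fun idx => B i (V idx) < 0).card = 1 := by
      intro i
      have h := hwin i
      have h1 := hPp1 i
      rcases le_total ((S.filter fun idx => 0 < B i (V idx)).card)
        ((S.filter fun idx => B i (V idx) < 0).card) with hle | hle
      · rw [max_eq_right hle] at h; omega
      · rw [max_eq_left hle] at h; omega
    have hposfilter : ∀ i, (S.filter fun idx => 0 < B i (V idx)) = {p i} := by
      intro i
      obtain ⟨a, ha⟩ := Finset.card_eq_one.mp (hPpPn i).1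
      have hpmem : p i ∈ S.filter fun idx => 0 < B i (V idx) := by
        rw [Finset.mem_filter]
        exact ⟨hpS i, by rw [hpV i, hBdelta i i]; norm_num⟩
      rw [ha] at hpmem ⊢
      rw [Finset.mem_singleton] at hpmem
      rw [hpmem]
    set Pset : Finset (Fin N) := Finset.image p Finset.univ with hPsetdef
    have hPsetS : Pset ⊆ S := by
      intro x hx
      obtain ⟨j, _, rfl⟩ := Finset.mem_image.mp hx
      exact hpS j
    have hPsetcard : Pset.card = ρ := by
      rw [hPsetdef, Finset.card_image_of_injective _ hpinj, Finset.card_univ, Fintype.card_fin]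
    set Qset : Finset (Fin N) := S \ Pset with hQsetdef
    have hQS : Qset ⊆ S := Finset.sdiff_subset
    have hQcard : Qset.card = n - ρ := by
      rw [hQsetdef, Finset.card_sdiff_of_subset hPsetS, hPsetcard, hScard]
    have hQnotP : ∀ q ∈ Qset, q ∉ Pset := fun q hq => (Finset.mem_sdiff.mp hq).2
    have hQcoord : ∀ q ∈ Qset, ∀ i, B i (V q) ≤ 0 := by
      intro q hq i
      by_contra hpos
      push_neg at hpos
      have hmem : q ∈ S.filter fun idx => 0 < B i (V idx) :=
        Finset.mem_filter.mpr ⟨hQS hq, hpos⟩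
      rw [hposfilter i, Finset.mem_singleton] at hmem
      exact hQnotP q hq (hmem ▸ Finset.mem_image.mpr ⟨i, Finset.mem_univ i, rfl⟩)
    have hpneq : ∀ (i : Fin ρ), ∀ q ∈ Qset, p i ≠ q := by
      intro i q hq heq
      exact hQnotP q hq (heq ▸ Finset.mem_image.mpr ⟨i, Finset.mem_univ i, rfl⟩)
    have hTne : ∀ q ∈ Qset, (Finset.univ.filter fun i => B i (V q) ≠ 0).Nonempty := by
      intro q hq
      rw [Finset.filter_nonempty_iff]
      by_contra hall
      push_neg at hall
      refine hzero q (hQS hq) ?_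
      have hx := hexp (V q) (hmemU q (hQS hq))
      rw [hx]
      apply Finset.sum_eq_zero
      intro i _
      rw [hall i (Finset.mem_univ i), zero_smul]
    have hTdisj : ∀ q ∈ Qset, ∀ q' ∈ Qset, q ≠ q' →
        Disjoint (Finset.univ.filter fun i => B i (V q) ≠ 0)
          (Finset.univ.filter fun i => B i (V q') ≠ 0) := by
      intro q hq q' hq' hne
      rw [Finset.disjoint_left]
      intro i hi hi'
      have h1 : B i (V q) < 0 :=
        lt_of_le_of_ne (hQcoord q hq i) (Finset.mem_filter.mp hi).2
      have h2 : B i (V q') < 0 :=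
        lt_of_le_of_ne (hQcoord q' hq' i) (Finset.mem_filter.mp hi').2
      have hsub : ({q, q'} : Finset (Fin N)) ⊆ S.filter fun idx => B i (V idx) < 0 := by
        intro x hx
        rw [Finset.mem_insert, Finset.mem_singleton] at hx
        rcases hx with rfl | rfl
        · exact Finset.mem_filter.mpr ⟨hQS hq, h1⟩
        · exact Finset.mem_filter.mpr ⟨hQS hq', h2⟩
      have hc2 : ({q, q'} : Finset (Fin N)).card = 2 := Finset.card_pair hne
      have hcc := Finset.card_le_card hsub
      rw [hc2, (hPpPn i).2] at hcc
      omega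
    set W : Fin N → Finset (Fin N) :=
      fun q => insert q ((Finset.univ.filter fun i => B i (V q) ≠ 0).image p) with hWdef
    have hWq_not_p : ∀ q ∈ Qset, q ∉ (Finset.univ.filter fun i => B i (V q) ≠ 0).image p := by
      intro q hq hmem
      obtain ⟨i, _, hpi⟩ := Finset.mem_image.mp hmem
      exact hpneq i q hq hpi
    have hWinj : ∀ q ∈ Qset, ∀ q' ∈ Qset, W q = W q' → q = q' := by
      intro q hq q' hq' heq
      have hq'mem : q' ∈ W q := by rw [heq, hWdef]; exact Finset.mem_insert_self _ _
      rw [hWdef] at hq'mem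
      rcases Finset.mem_insert.mp hq'mem with h | h
      · exact h.symm
      · obtain ⟨i, _, hpi⟩ := Finset.mem_image.mp h
        exact absurd hpi (hpneq i q' hq')
    have hWmemcases : ∀ q ∈ Qset, ∀ x, x ∈ W q →
        x = q ∨ ∃ i, B i (V q) ≠ 0 ∧ p i = x := by
      intro q hq x hx
      rw [hWdef] at hx
      rcases Finset.mem_insert.mp hx with h | h
      · exact Or.inl h
      · obtain ⟨i, hi, hpi⟩ := Finset.mem_image.mp h
        exact Or.inr ⟨i, (Finset.mem_filter.mp hi).2, hpi⟩
    refine ⟨Qset.image W, ?_, ?_, ?_⟩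
    · -- pairwise disjoint
      intro a ha c hc hac
      obtain ⟨q, hq, rfl⟩ := Finset.mem_image.mp ha
      obtain ⟨q', hq', rfl⟩ := Finset.mem_image.mp hc
      have hqq' : q ≠ q' := fun h => hac (by rw [h])
      rw [Finset.disjoint_left]
      intro x hx hx'
      rcases hWmemcases q hq x hx with rfl | ⟨i, hiB, hpi⟩
      · rcases hWmemcases q' hq' x hx' with h | ⟨i', hiB', hpi'⟩
        · exact hqq' h
        · exact hpneq i' x hq hpi'
      · rcases hWmemcases q' hq' x hx' with h | ⟨i', hiB', hpi'⟩
        · exact hpneq i q' hq' (by rw [hpi, h])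
        · have hii' : i = i' := hpinj (by rw [hpi, hpi'])
          subst hii'
          have := hTdisj q hq q' hq' hqq'
          rw [Finset.disjoint_left] at this
          exact this (Finset.mem_filter.mpr ⟨Finset.mem_univ i, hiB⟩)
            (Finset.mem_filter.mpr ⟨Finset.mem_univ i, hiB'⟩)
    · -- each part is nonempty, inside S, and carries a positive dependence
      intro a ha
      obtain ⟨q, hq, rfl⟩ := Finset.mem_image.mp ha
      refine ⟨⟨q, by rw [hWdef]; exact Finset.mem_insert_self _ _⟩, ?_, ?_⟩
      · intro x hx
        rcases hWmemcases q hq x hx with rfl | ⟨i, _, hpi⟩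
        · exact hQS hq
        · rw [← hpi]; exact hpS i
      · -- the positive dependence
        set l : Fin N → ℝ := fun x => if x = q then 1 else
            (if h : ∃ i, p i = x then -(B h.choose (V q)) else 1) with hldef
        have hlq : l q = 1 := by rw [hldef]; simp
        have hlp : ∀ i : Fin ρ, l (p i) = -(B i (V q)) := by
          intro i
          have hne : p i ≠ q := hpneq i q hq
          have hex : ∃ i', p i' = p i := ⟨i, rfl⟩
          have hch : hex.choose = i := hpinj hex.choose_spec
          rw [hldef]
          simp only [hne, if_false, dif_pos hex, hch]
        refine ⟨l, ?_, ?_⟩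
        · intro x hx
          rcases hWmemcases q hq x hx with rfl | ⟨i, hiB, hpi⟩
          · rw [hlq]; norm_num
          · rw [← hpi, hlp i]
            have hle := hQcoord q hq i
            have hlt : B i (V q) < 0 := lt_of_le_of_ne hle hiB
            linarith
        · have hsum0 : ∑ i ∈ (Finset.univ.filter fun i => B i (V q) ≠ 0), B i (V q) • b i
              = V q := by
            conv_rhs => rw [hexp (V q) (hmemU q (hQS hq))]
            apply Finset.sum_subset (Finset.filter_subset _ _)
            intro x _ hx
            have hb0 : B x (V q) = 0 := by
              by_contra hne
              exact hx (Finset.mem_filter.mpr ⟨Finset.mem_univ x, hne⟩)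
            rw [hb0, zero_smul]
          have hinj_on : ∀ i₁ ∈ (Finset.univ.filter fun i => B i (V q) ≠ 0), ∀ i₂ ∈
              (Finset.univ.filter fun i => B i (V q) ≠ 0), p i₁ = p i₂ → i₁ = i₂ :=
            fun i₁ _ i₂ _ h => hpinj h
          have hterm : ∀ i ∈ (Finset.univ.filter fun i => B i (V q) ≠ 0),
              l (p i) • V (p i) = -(B i (V q) • b i) := by
            intro i hi
            rw [hlp i, hpV i, neg_smul]
          calc ∑ x ∈ W q, l x • V x
              = l q • V q + ∑ x ∈ ((Finset.univ.filter fun i => B i (V q) ≠ 0).image p),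
                  l x • V x := by
                rw [hWdef]
                exact Finset.sum_insert (hWq_not_p q hq)
            _ = l q • V q + ∑ i ∈ (Finset.univ.filter fun i => B i (V q) ≠ 0),
                  l (p i) • V (p i) := by rw [Finset.sum_image hinj_on]
            _ = V q + ∑ i ∈ (Finset.univ.filter fun i => B i (V q) ≠ 0),
                  -(B i (V q) • b i) := by rw [hlq, one_smul, Finset.sum_congr rfl hterm]
            _ = V q - ∑ i ∈ (Finset.univ.filter fun i => B i (V q) ≠ 0),
                  B i (V q) • b i := by rw [Finset.sum_neg_distrib]; abel
            _ = 0 := by rw [hsum0]; abel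
    · -- cardinality count
      have himgcard : (Qset.image W).card = Qset.card := by
        apply Finset.card_image_of_injOn
        intro q hq q' hq' heq
        exact hWinj q (by simpa using hq) q' (by simpa using hq') heq
      have hρM : ρ ≤ M := by
        have hg1 : ∀ j, (∑ i, B i) (V (p j)) = 1 := by
          intro j
          rw [LinearMap.sum_apply, hpV]
          have : ∀ i, B i (b j) = if j = i then 1 else 0 := fun i => hBdelta i j
          rw [Finset.sum_congr rfl (fun i _ => this i)]
          rw [Finset.sum_ite_eq Finset.univ j (fun _ => (1:ℝ))]
          simp
        have hsub : Pset ⊆ S.filter fun idx => 0 < (∑ i, B i) (V idx) := by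
          intro x hx
          obtain ⟨j, _, rfl⟩ := Finset.mem_image.mp hx
          rw [Finset.mem_filter]
          refine ⟨hpS j, ?_⟩
          rw [hg1 j]
          norm_num
        have h1 := Finset.card_le_card hsub
        have h2 := hM (∑ i, B i)
        omega
      have hρn : ρ ≤ n := by
        have := Finset.card_le_card hPsetS
        omega
      omega

end Stmt6Aux

/-- Let `V` be a vector configuration of rank `r` with `r+d+1` elements and dual degree `δ`.
Then `V` admits a weak dual Cayley decomposition of length at least `d - 3δ + 1`: for every
`kk ≤ d - 3δ + 1` there are `kk` pairwise disjoint nonempty subsets of `V`, each admitting a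
strictly positive linear dependence (i.e. containing the origin in the relative interior of
its convex hull). -/
theorem stmt_6 (r d δ : ℕ) (V : Fin (r + d + 1) → (Fin r → ℝ))
    (hspan : Submodule.span ℝ (Set.range V) = ⊤)
    (hdeg1 : ∀ w : Fin r → ℝ,
      (Finset.univ.filter (fun i => 0 < ∑ k, w k * V i k)).card ≤ r + δ)
    (hdeg2 : ∃ w : Fin r → ℝ, w ≠ 0 ∧
      (Finset.univ.filter (fun i => 0 < ∑ k, w k * V i k)).card = r + δ) :
    ∀ kk : ℕ, (kk : ℤ) ≤ (d : ℤ) - 3 * (δ : ℤ) + 1 →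
      ∃ F : Fin kk → Finset (Fin (r + d + 1)),
        (∀ i j, i ≠ j → Disjoint (F i) (F j)) ∧
        ∀ i, (F i).Nonempty ∧ ∃ l : Fin (r + d + 1) → ℝ,
          (∀ j ∈ F i, 0 < l j) ∧ ∑ j ∈ F i, l j • V j = 0 := by
  intro kk hkk
  classical
  have hM : ∀ g : (Fin r → ℝ) →ₗ[ℝ] ℝ,
      ((Finset.univ : Finset (Fin (r+d+1))).filter (fun i => 0 < g (V i))).card ≤ r + δ := by
    intro g
    have hw := hdeg1 (fun k => g (Pi.single k 1))
    have heq : ((Finset.univ : Finset (Fin (r+d+1))).filter (fun i => 0 < g (V i)))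
        = (Finset.univ.filter (fun i => 0 < ∑ k, (fun k => g (Pi.single k 1)) k * V i k)) := by
      apply Finset.filter_congr
      intro i _
      rw [← Stmt6Aux.functional_eq_sum g (V i)]
    rw [heq]
    exact hw
  obtain ⟨P, hPdisj, hPparts, hPcount⟩ :=
    Stmt6Aux.main V (r+d+1) Finset.univ (by simp) (r+δ) hM
  have hrank : Module.finrank ℝ
      (Submodule.span ℝ (V '' ↑(Finset.univ : Finset (Fin (r+d+1))))) = r := by
    rw [Finset.coe_univ, Set.image_univ, hspan, finrank_top,
      Module.finrank_fintype_fun_eq_card, Fintype.card_fin]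
  rw [hrank] at hPcount
  have hkk' : kk ≤ P.card := by omega
  have hlen : ∀ k : Fin kk, (k : ℕ) < P.toList.length := by
    intro k
    rw [Finset.length_toList]
    omega
  refine ⟨fun k => P.toList.get ⟨k.1, hlen k⟩, ?_, ?_⟩
  · intro i j hij
    have hmem_i : P.toList.get ⟨i.1, hlen i⟩ ∈ P :=
      Finset.mem_toList.mp (P.toList.get_mem _)
    have hmem_j : P.toList.get ⟨j.1, hlen j⟩ ∈ P :=
      Finset.mem_toList.mp (P.toList.get_mem _)
    refine hPdisj _ hmem_i _ hmem_j ?_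
    intro h
    have hidx := (List.Nodup.get_inj_iff (Finset.nodup_toList P)).mp h
    apply hij
    exact Fin.ext (by simpa using congrArg Fin.val hidx)
  · intro i
    obtain ⟨hne, _, hl⟩ := hPparts _ (Finset.mem_toList.mp (P.toList.get_mem _))
    exact ⟨hne, hl⟩
end

section
/- If a vector configuration V in R^r with n elements admits a weak dual Cayley decomposition of length m, then its dual degree satisfies deg*(V) ≤ n - r - m. -/
/-- Each part of the decomposition contains a point not in the open halfspace. -/
lemma stmt_7_aux (r n : ℕ) (V : Fin n → (Fin r → ℝ)) (w : Fin r → ℝ)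
    (S : Finset (Fin n)) (hS : S.Nonempty) (l : Fin n → ℝ)
    (hl : ∀ j ∈ S, 0 < l j) (hsum : ∑ j ∈ S, l j • V j = 0) :
    ∃ j ∈ S, ¬ (0 < ∑ k, w k * V j k) := by
  by_contra h
  push_neg at h
  have key : (0:ℝ) < ∑ j ∈ S, l j * ∑ k, w k * V j k :=
    Finset.sum_pos (fun j hj => mul_pos (hl j hj) (h j hj)) hS
  have hz : ∑ j ∈ S, l j * ∑ k, w k * V j k = 0 := by
    calc ∑ j ∈ S, l j * ∑ k, w k * V j k
        = ∑ j ∈ S, ∑ k, w k * (l j * V j k) := by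
          refine Finset.sum_congr rfl fun j _ => ?_
          rw [Finset.mul_sum]
          exact Finset.sum_congr rfl fun k _ => by ring
      _ = ∑ k, w k * ∑ j ∈ S, l j * V j k := by
          rw [Finset.sum_comm]
          exact Finset.sum_congr rfl fun k _ => (Finset.mul_sum _ _ _).symm
      _ = ∑ k, w k * (∑ j ∈ S, l j • V j) k := by
          refine Finset.sum_congr rfl fun k _ => ?_
          congr 1
          simp [Finset.sum_apply]
      _ = 0 := by rw [hsum]; simp
  exact absurd hz (ne_of_gt key)

/-- If a vector configuration `V` in `ℝ^r` with `n` elements admits a weak dual Cayley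
decomposition of length `m` (i.e. `m` pairwise disjoint nonempty subsets each admitting a
strictly positive linear dependence), then its dual degree satisfies `deg*(V) ≤ n - r - m`,
i.e. every open halfspace bounded by a linear hyperplane contains at most `n - r - m + r`
elements of `V`. -/
theorem stmt_7 (r n m : ℕ) (V : Fin n → (Fin r → ℝ))
    (hspan : Submodule.span ℝ (Set.range V) = ⊤)
    (F : Fin m → Finset (Fin n))
    (hdisj : ∀ i j, i ≠ j → Disjoint (F i) (F j))
    (hpos : ∀ i, (F i).Nonempty ∧ ∃ l : Fin n → ℝ,
      (∀ j ∈ F i, 0 < l j) ∧ ∑ j ∈ F i, l j • V j = 0) :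
    ∀ w : Fin r → ℝ,
      (Finset.univ.filter (fun i => 0 < ∑ k, w k * V i k)).card + m ≤ n ∧ r + m ≤ n := by
  classical
  have hne : ∀ i, (F i).Nonempty := fun i => (hpos i).1
  choose l hlpos hlsum using fun i => (hpos i).2
  -- rank-nullity part
  set T := Fintype.linearCombination ℝ V with hT
  have hrange : LinearMap.range T = ⊤ := by
    rw [hT, Fintype.range_linearCombination, hspan]
  have hrank : r + Module.finrank ℝ (LinearMap.ker T) = n := by
    have h1 := LinearMap.finrank_range_add_finrank_ker T
    rw [hrange] at h1
    simpa [Module.finrank_fintype_fun_eq_card, finrank_top] using h1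
  set L : Fin m → (Fin n → ℝ) := fun i j => if j ∈ F i then l i j else 0 with hL
  have hker : ∀ i, L i ∈ LinearMap.ker T := by
    intro i
    rw [LinearMap.mem_ker, hT, Fintype.linearCombination_apply]
    calc ∑ j, L i j • V j = ∑ j ∈ F i, L i j • V j :=
        (Finset.sum_subset (Finset.subset_univ _) (fun x _ hx => by simp [hL, hx])).symm
      _ = ∑ j ∈ F i, l i j • V j := Finset.sum_congr rfl (fun x hx => by simp [hL, hx])
      _ = 0 := hlsum i
  have hLind : LinearIndependent ℝ L := by
    rw [linearIndependent_iff']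
    intro s g hg i hi
    obtain ⟨j, hj⟩ := hne i
    have hcf := congrFun hg j
    simp only [Finset.sum_apply, Pi.smul_apply, smul_eq_mul, Pi.zero_apply] at hcf
    rw [Finset.sum_eq_single i
      (fun i' _ hne' => by
        have hj' : j ∉ F i' := Finset.disjoint_left.mp (hdisj i i' (Ne.symm hne')) hj
        simp [hL, hj'])
      (fun h => absurd hi h)] at hcf
    have hLij : L i j = l i j := by simp [hL, hj]
    rw [hLij] at hcf
    rcases mul_eq_zero.mp hcf with h | h
    · exact h
    · exact absurd h (ne_of_gt (hlpos i j hj))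
  have hm : m ≤ Module.finrank ℝ (LinearMap.ker T) := by
    have hind : LinearIndependent ℝ (fun i => (⟨L i, hker i⟩ : LinearMap.ker T)) := by
      apply LinearIndependent.of_comp (LinearMap.ker T).subtype
      exact hLind
    simpa using hind.fintype_card_le_finrank
  intro w
  have hsel : ∀ i : Fin m, ∃ j ∈ F i, ¬ (0 < ∑ k, w k * V j k) :=
    fun i => stmt_7_aux r n V w (F i) (hne i) (l i) (hlpos i) (hlsum i)
  choose g hg1 hg2 using hsel
  have hginj : Function.Injective g := by
    intro a b hab
    by_contra hne'
    exact (Finset.disjoint_left.mp (hdisj a b hne') (hg1 a)) (hab ▸ hg1 b)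
  set S := Finset.univ.filter (fun i => 0 < ∑ k, w k * V i k) with hS
  have hdis : Disjoint S (Finset.univ.image g) := by
    rw [Finset.disjoint_right]
    intro x hx
    simp only [Finset.mem_image, Finset.mem_univ, true_and] at hx
    obtain ⟨i, rfl⟩ := hx
    simp only [hS, Finset.mem_filter, Finset.mem_univ, true_and]
    exact hg2 i
  have hcard : S.card + m ≤ n := by
    have h1 : (S ∪ Finset.univ.image g).card ≤ n := by
      simpa using Finset.card_le_univ (S ∪ Finset.univ.image g)
    rw [Finset.card_union_of_disjoint hdis,
      Finset.card_image_of_injective _ hginj, Finset.card_univ, Fintype.card_fin] at h1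
    exact h1
  exact ⟨hcard, by omega⟩
end

section
/- For a vector configuration V in R^r and any v ∈ V, the dual degrees of the deletion V \ v and of the contraction V/v are both at most the dual degree of V. -/
private lemma sum_lin {r : ℕ} (a b c : Fin r → ℝ) (t : ℝ) :
    ∑ k, (a k + t * b k) * c k = (∑ k, a k * c k) + t * ∑ k, b k * c k := by
  rw [Finset.mul_sum, ← Finset.sum_add_distrib]
  exact Finset.sum_congr rfl fun k _ => by ring

private lemma sum_mul_sub {r : ℕ} (w a b : Fin r → ℝ) (s : ℝ) :
    ∑ k, w k * (a k - s * b k) = (∑ k, w k * a k) - s * ∑ k, w k * b k := by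
  rw [Finset.mul_sum, ← Finset.sum_sub_distrib]
  exact Finset.sum_congr rfl fun k _ => by ring

/-- For a vector configuration `V` in `ℝ^r` of dual degree at most `δ`, both the deletion
`V \ v` (with degree measured against the rank of its span) and the contraction `V/v`
(orthogonal projection along `v`, of rank `r-1`) have dual degree at most `δ`. -/
theorem stmt_8 (r n δ : ℕ) (V : Fin n → (Fin r → ℝ))
    (hspan : Submodule.span ℝ (Set.range V) = ⊤)
    (hdeg : ∀ w : Fin r → ℝ,
      (Finset.univ.filter (fun i => 0 < ∑ k, w k * V i k)).card ≤ r + δ)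
    (i0 : Fin n) :
    (∀ w : Fin r → ℝ,
      (Finset.univ.filter (fun i => i ≠ i0 ∧ 0 < ∑ k, w k * V i k)).card ≤
        Module.finrank ℝ (Submodule.span ℝ (V '' {j | j ≠ i0})) + δ) ∧
    (V i0 ≠ 0 → ∀ w : Fin r → ℝ,
      (Finset.univ.filter (fun i => i ≠ i0 ∧
        0 < ∑ k, w k * (V i k - ((∑ k', V i0 k' * V i k') / (∑ k', V i0 k' * V i0 k')) * V i0 k))).card
        ≤ (r - 1) + δ) := by
  constructor
  · -- deletion
    intro w
    set S := Submodule.span ℝ (V '' {j | j ≠ i0}) with hS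
    by_cases hmem : V i0 ∈ S
    · have hStop : S = ⊤ := by
        rw [← top_le_iff, ← hspan, Submodule.span_le]
        rintro x ⟨j, rfl⟩
        by_cases hj : j = i0
        · subst hj; exact hmem
        · exact Submodule.subset_span ⟨j, hj, rfl⟩
      have hd : Module.finrank ℝ S = r := by
        rw [hStop, finrank_top, Module.finrank_fin_fun]
      rw [hd]
      refine le_trans (Finset.card_le_card ?_) (hdeg w)
      intro i hi
      simp only [Finset.mem_filter, Finset.mem_univ, true_and] at hi ⊢
      exact hi.2
    · obtain ⟨f, hf0, hfbot⟩ := S.exists_dual_map_eq_bot_of_notMem hmem inferInstance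
      have hfS : ∀ x ∈ S, f x = 0 := by
        intro x hx
        have : f x ∈ S.map f := Submodule.mem_map_of_mem hx
        rwa [hfbot, Submodule.mem_bot] at this
      have hne : V i0 ≠ 0 := fun h => hmem (h ▸ S.zero_mem)
      have hr : r ≤ Module.finrank ℝ S + 1 := by
        have hsup : S ⊔ (ℝ ∙ V i0) = ⊤ := by
          rw [eq_top_iff, ← hspan, Submodule.span_le]
          rintro x ⟨j, rfl⟩
          by_cases hj : j = i0
          · subst hj; exact Submodule.mem_sup_right (Submodule.mem_span_singleton_self _)
          · exact Submodule.mem_sup_left (Submodule.subset_span ⟨j, hj, rfl⟩)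
        have h := Submodule.finrank_add_le_finrank_add_finrank S (ℝ ∙ V i0)
        rwa [hsup, finrank_top, Module.finrank_fin_fun, finrank_span_singleton hne] at h
      set c := f (V i0) with hc
      set t := (1 - ∑ k, w k * V i0 k) / c with ht
      set w' := fun k => w k + t * f ((fun j => if k = j then (1:ℝ) else 0)) with hw'
      have hfx : ∀ x : Fin r → ℝ, ∑ k, f ((fun j => if k = j then (1:ℝ) else 0)) * x k = f x := by
        intro x
        rw [f.pi_apply_eq_sum_univ x]
        exact Finset.sum_congr rfl fun k _ => by rw [smul_eq_mul, mul_comm]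
      have hip : ∀ x : Fin r → ℝ, ∑ k, w' k * x k = (∑ k, w k * x k) + t * f x := by
        intro x
        rw [sum_lin w (fun k => f ((fun j => if k = j then (1:ℝ) else 0))) x t, hfx x]
      have hsub : insert i0 (Finset.univ.filter (fun i => i ≠ i0 ∧ 0 < ∑ k, w k * V i k)) ⊆
          Finset.univ.filter (fun i => 0 < ∑ k, w' k * V i k) := by
        intro i hi
        simp only [Finset.mem_insert, Finset.mem_filter, Finset.mem_univ, true_and] at hi ⊢
        rw [hip (V i)]
        rcases hi with heq | ⟨hne', hpos⟩
        · rw [heq]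
          have htc : t * c = 1 - ∑ k, w k * V i0 k := by
            rw [ht]; field_simp
          rw [← hc, htc]; linarith
        · have hzero : f (V i) = 0 := hfS _ (Submodule.subset_span ⟨i, hne', rfl⟩)
          rw [hzero]; linarith
      have hcard := (Finset.card_le_card hsub).trans (hdeg w')
      rw [Finset.card_insert_of_notMem (by simp)] at hcard
      omega
  · -- contraction
    intro hne0 w
    obtain ⟨k0, hk0⟩ := Function.ne_iff.mp hne0
    have hr1 : 1 ≤ r := k0.pos
    have hq : 0 < ∑ k', V i0 k' * V i0 k' :=
      Finset.sum_pos' (fun j _ => mul_self_nonneg _) ⟨k0, Finset.mem_univ k0, mul_self_pos.mpr hk0⟩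
    set lam := (∑ k, w k * V i0 k) / (∑ k', V i0 k' * V i0 k') with hlam
    set w' := fun k => w k + (-lam) * V i0 k with hw'
    have hip' : ∀ x : Fin r → ℝ,
        ∑ k, w' k * x k = (∑ k, w k * x k) - lam * ∑ k, V i0 k * x k := by
      intro x
      rw [sum_lin w (V i0) x (-lam)]
      ring
    have hw'0 : ∑ k, w' k * V i0 k = 0 := by
      rw [hip', hlam]
      rw [div_mul_cancel₀ _ hq.ne', sub_self]
    have hcond : ∀ i, (0 < ∑ k, w k *
        (V i k - ((∑ k', V i0 k' * V i k') / (∑ k', V i0 k' * V i0 k')) * V i0 k)) ↔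
        0 < ∑ k, w' k * V i k := by
      intro i
      have heq : ∑ k, w k *
          (V i k - ((∑ k', V i0 k' * V i k') / (∑ k', V i0 k' * V i0 k')) * V i0 k)
          = ∑ k, w' k * V i k := by
        rw [sum_mul_sub, hip' (V i), hlam]
        field_simp
      rw [heq]
    set P := Finset.univ.filter (fun i => 0 < ∑ k, w' k * V i k) with hP
    have hPeq : Finset.univ.filter (fun i => i ≠ i0 ∧
        0 < ∑ k, w k * (V i k - ((∑ k', V i0 k' * V i k') / (∑ k', V i0 k' * V i0 k')) * V i0 k))
        = P := by
      ext i
      simp only [hP, Finset.mem_filter, Finset.mem_univ, true_and]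
      constructor
      · rintro ⟨-, h2⟩; exact (hcond i).mp h2
      · intro h
        refine ⟨?_, (hcond i).mpr h⟩
        rintro rfl
        rw [hw'0] at h
        exact lt_irrefl 0 h
    rw [hPeq]
    rcases Finset.eq_empty_or_nonempty P with hPe | hPne
    · rw [hPe]; simp
    · set b := (P.image fun i => ∑ k, w' k * V i k).min' (hPne.image _) with hb
      set C := (P.image fun i => |∑ k, V i0 k * V i k|).max' (hPne.image _) with hC
      have hbpos : 0 < b := by
        have hmem := (P.image fun i => ∑ k, w' k * V i k).min'_mem (hPne.image _)
        rw [← hb] at hmem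
        obtain ⟨i, hiP, hib⟩ := Finset.mem_image.mp hmem
        rw [← hib]
        exact (Finset.mem_filter.mp hiP).2
      have hC0 : 0 ≤ C := by
        obtain ⟨i, hiP⟩ := hPne
        rw [hC]
        exact le_trans (abs_nonneg (∑ k, V i0 k * V i k))
          (Finset.le_max' (P.image fun i => |∑ k, V i0 k * V i k|) _
            (Finset.mem_image_of_mem (fun i => |∑ k, V i0 k * V i k|) hiP))
      set t := b / (C + 1) with htdef
      have htpos : 0 < t := div_pos hbpos (by linarith)
      have htC : t * (C + 1) = b := by rw [htdef]; field_simp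
      set w'' := fun k => w' k + t * V i0 k with hw''
      have hip'' : ∀ x : Fin r → ℝ,
          ∑ k, w'' k * x k = (∑ k, w' k * x k) + t * ∑ k, V i0 k * x k :=
        fun x => sum_lin w' (V i0) x t
      have hsub : insert i0 P ⊆
          Finset.univ.filter (fun i => 0 < ∑ k, w'' k * V i k) := by
        intro i hi
        simp only [Finset.mem_insert, Finset.mem_filter, Finset.mem_univ, true_and] at hi ⊢
        rw [hip'' (V i)]
        rcases hi with rfl | hiP
        · rw [hw'0]
          have := mul_pos htpos hq
          linarith
        · have h1 : b ≤ ∑ k, w' k * V i k := by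
            rw [hb]; exact Finset.min'_le _ _ (Finset.mem_image_of_mem _ hiP)
          have h2 : |∑ k, V i0 k * V i k| ≤ C := by
            rw [hC]
            exact Finset.le_max' (P.image fun i => |∑ k, V i0 k * V i k|) _
              (Finset.mem_image_of_mem (fun i => |∑ k, V i0 k * V i k|) hiP)
          have h3 := (abs_le.mp h2).1
          nlinarith [mul_le_mul_of_nonneg_left h3 htpos.le]
      have hcard := (Finset.card_le_card hsub).trans (hdeg w'')
      have hi0P : i0 ∉ P := by
        simp only [hP, Finset.mem_filter, Finset.mem_univ, true_and, hw'0]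
        exact lt_irrefl 0
      rw [Finset.card_insert_of_notMem hi0P] at hcard
      omega
end

section
/- Let V be a vector configuration in R^r and W ⊂ V a subconfiguration with lin(W) ∩ V = W. Write rank(W)=r_W, |W|=r_W+d_W+1, rank(V/W)=r-r_W. Then deg*(V) ≥ deg*(W) + deg*(V/W), where deg*(W) is computed inside lin(W) and deg*(V/W) inside the quotient. -/
/-- Let `V` be a vector configuration spanning `ℝ^r` and `W = V|_T` a subconfiguration with
`lin(W) ∩ V = W`. If `deg*(W) ≥ a` (witnessed by a hyperplane of `lin(W)`, i.e. an ambient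
functional) and `deg*(V/W) ≥ b` (witnessed by an ambient hyperplane containing `lin(W)`,
the rank of `V/W` being `r - rank(W)`), then `deg*(V) ≥ a + b`. -/
theorem stmt_9 (r n : ℕ) (V : Fin n → (Fin r → ℝ))
    (hspan : Submodule.span ℝ (Set.range V) = ⊤)
    (T : Finset (Fin n))
    (hclosed : ∀ j : Fin n, V j ∈ Submodule.span ℝ (V '' (T : Set (Fin n))) ↔ j ∈ T)
    (rW : ℕ) (hrW : rW = Module.finrank ℝ (Submodule.span ℝ (V '' (T : Set (Fin n)))))
    (a b : ℕ)
    (hW : ∃ w : Fin r → ℝ, rW + a ≤ (T.filter (fun i => 0 < ∑ k, w k * V i k)).card)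
    (hQ : ∃ w : Fin r → ℝ, (∀ j ∈ T, ∑ k, w k * V j k = 0) ∧
      (r - rW) + b ≤ (Finset.univ.filter (fun i => i ∉ T ∧ 0 < ∑ k, w k * V i k)).card) :
    ∃ w : Fin r → ℝ, r + a + b ≤ (Finset.univ.filter (fun i => 0 < ∑ k, w k * V i k)).card := by
  obtain ⟨w1, hw1⟩ := hW
  obtain ⟨w2, hw2T, hw2⟩ := hQ
  set f : Fin n → ℝ := fun i => ∑ k, w1 k * V i k with hf
  set g : Fin n → ℝ := fun i => ∑ k, w2 k * V i k with hg
  set S : Finset (Fin n) := Finset.univ.filter (fun i => i ∉ T ∧ 0 < g i) with hS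
  -- choose ε
  have hex : ∃ ε : ℝ, 0 < ε ∧ ∀ i ∈ S, ε * (|f i| + 1) ≤ g i := by
    by_cases hne : S.Nonempty
    · refine ⟨S.inf' hne (fun i => g i / (|f i| + 1)), ?_, ?_⟩
      · apply (Finset.lt_inf'_iff hne).mpr
        intro i hi
        have hgi : 0 < g i := (Finset.mem_filter.mp hi).2.2
        positivity
      · intro i hi
        have hfi : (0:ℝ) < |f i| + 1 := by positivity
        have := Finset.inf'_le (fun i => g i / (|f i| + 1)) hi
        calc S.inf' hne (fun i => g i / (|f i| + 1)) * (|f i| + 1)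
            ≤ (g i / (|f i| + 1)) * (|f i| + 1) := by
              apply mul_le_mul_of_nonneg_right this hfi.le
          _ = g i := div_mul_cancel₀ _ (ne_of_gt hfi)
    · exact ⟨1, one_pos, fun i hi => absurd ⟨i, hi⟩ hne⟩
  obtain ⟨ε, hε, hεS⟩ := hex
  refine ⟨fun k => w2 k + ε * w1 k, ?_⟩
  show r + a + b ≤ (Finset.univ.filter (fun i => 0 < ∑ k, (w2 k + ε * w1 k) * V i k)).card
  have hsum : ∀ i, ∑ k, (w2 k + ε * w1 k) * V i k = g i + ε * f i := by
    intro i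
    rw [hg, hf, Finset.mul_sum, ← Finset.sum_add_distrib]
    exact Finset.sum_congr rfl (fun k _ => by ring)
  -- both witness sets are subsets of the new positive set
  set A : Finset (Fin n) := T.filter (fun i => 0 < f i) with hA
  have hAsub : A ⊆ Finset.univ.filter (fun i => 0 < ∑ k, (w2 k + ε * w1 k) * V i k) := by
    intro i hi
    obtain ⟨hiT, hfi⟩ := Finset.mem_filter.mp hi
    refine Finset.mem_filter.mpr ⟨Finset.mem_univ _, ?_⟩
    rw [hsum]
    have : g i = 0 := hw2T i hiT
    rw [this, zero_add]
    positivity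
  have hSsub : S ⊆ Finset.univ.filter (fun i => 0 < ∑ k, (w2 k + ε * w1 k) * V i k) := by
    intro i hi
    obtain ⟨-, hiT, hgi⟩ := Finset.mem_filter.mp hi
    refine Finset.mem_filter.mpr ⟨Finset.mem_univ _, ?_⟩
    rw [hsum]
    have h1 : ε * (|f i| + 1) ≤ g i := hεS i hi
    have h3 : ε * |f i| < ε * (|f i| + 1) := by nlinarith
    have h4 : ε * f i ≥ -(ε * |f i|) := by nlinarith [neg_abs_le (f i)]
    linarith
  have hdisj : Disjoint A S := by
    rw [Finset.disjoint_left]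
    intro i hiA hiS
    exact (Finset.mem_filter.mp hiS).2.1 (Finset.mem_filter.mp hiA).1
  have hunion : A ∪ S ⊆ Finset.univ.filter (fun i => 0 < ∑ k, (w2 k + ε * w1 k) * V i k) :=
    Finset.union_subset hAsub hSsub
  have hcard : A.card + S.card ≤
      (Finset.univ.filter (fun i => 0 < ∑ k, (w2 k + ε * w1 k) * V i k)).card := by
    rw [← Finset.card_union_of_disjoint hdisj]
    exact Finset.card_le_card hunion
  have hrWle : rW ≤ r := by
    rw [hrW]
    have := Submodule.finrank_le (Submodule.span ℝ (V '' (T : Set (Fin n))))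
    simpa using this
  have : rW + a + ((r - rW) + b) ≤ A.card + S.card := Nat.add_le_add hw1 hw2
  omega
end

section
/- An irreducible vector configuration V in R^r (i.e., not containing the zero vector) of dual degree δ contains at most 2r + 2δ vectors. -/
/-- An irreducible vector configuration `V` spanning `ℝ^r` (no element is the zero vector)
of dual degree at most `δ` contains at most `2r + 2δ` vectors. -/
theorem stmt_11 (r n δ : ℕ) (V : Fin n → (Fin r → ℝ))
    (hz : ∀ i, V i ≠ 0)
    (hspan : Submodule.span ℝ (Set.range V) = ⊤)
    (hdeg : ∀ w : Fin r → ℝ,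
      (Finset.univ.filter (fun i => 0 < ∑ k, w k * V i k)).card ≤ r + δ) :
    n ≤ 2 * r + 2 * δ := by
  -- linear functionals w ↦ ∑ k, w k * V i k
  set ℓ : Fin n → ((Fin r → ℝ) →ₗ[ℝ] ℝ) := fun i =>
    { toFun := fun w => ∑ k, w k * V i k
      map_add' := by intro x y; simp [add_mul, Finset.sum_add_distrib]
      map_smul' := by intro c x; simp [Finset.mul_sum, mul_assoc]
    } with hℓ
  have hker : ∀ i, LinearMap.ker (ℓ i) ≠ ⊤ := by
    intro i h
    have hv : V i ∈ LinearMap.ker (ℓ i) := by rw [h]; trivial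
    have : ∑ k, V i k * V i k = 0 := hv
    have hall : ∀ k ∈ Finset.univ, V i k * V i k = 0 := by
      rw [← Finset.sum_eq_zero_iff_of_nonneg (fun k _ => mul_self_nonneg (V i k))]
      exact this
    exact hz i (funext fun k => by
      have := hall k (Finset.mem_univ k)
      exact mul_self_eq_zero.mp this)
  have hcover : ⋃ i, ((LinearMap.ker (ℓ i) : Submodule ℝ (Fin r → ℝ)) : Set (Fin r → ℝ))
      ≠ Set.univ := by
    intro h
    obtain ⟨i, hi⟩ := Subspace.exists_eq_top_of_iUnion_eq_univ h
    exact hker i hi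
  have : ∃ w : Fin r → ℝ, ∀ i, ℓ i w ≠ 0 := by
    by_contra hc
    push_neg at hc
    apply hcover
    ext w
    simp only [Set.mem_iUnion, Set.mem_univ, iff_true, SetLike.mem_coe, LinearMap.mem_ker]
    obtain ⟨i, hi⟩ := hc w
    exact ⟨i, hi⟩
  obtain ⟨w, hw⟩ := this
  have key : (Finset.univ : Finset (Fin n)) =
      (Finset.univ.filter (fun i => 0 < ∑ k, w k * V i k)) ∪
      (Finset.univ.filter (fun i => 0 < ∑ k, (-w) k * V i k)) := by
    ext i
    simp only [Finset.mem_univ, Finset.mem_union, Finset.mem_filter, true_and, true_iff]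
    have hne : (∑ k, w k * V i k) ≠ 0 := hw i
    rcases hne.lt_or_gt with h | h
    · right
      have : ∑ k, (-w) k * V i k = -(∑ k, w k * V i k) := by
        simp [neg_mul, Finset.sum_neg_distrib]
      rw [this]; linarith
    · left; exact h
  have hn : n ≤ (Finset.univ.filter (fun i => 0 < ∑ k, w k * V i k)).card +
      (Finset.univ.filter (fun i => 0 < ∑ k, (-w) k * V i k)).card := by
    have h := Finset.card_union_le
      (Finset.univ.filter (fun i => 0 < ∑ k, w k * V i k))
      (Finset.univ.filter (fun i => 0 < ∑ k, (-w) k * V i k))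
    rw [← key] at h
    simpa using h
  have h1 := hdeg w
  have h2 := hdeg (-w)
  omega
end

section
/- Let V be an irreducible vector configuration of rank r with r+d+1 elements (none equal to 0) and dual degree δ. Then r = d+1-2δ if and only if V is centrally symmetric up to rescaling by positive scalars (i.e., the multiset of rays spanned by elements of V pairs up into antipodal pairs). -/
open Finset

namespace Stmt12Aux
set_option linter.unusedSectionVars false
open scoped Classical
variable {r n : ℕ}

def dot (w v : Fin r → ℝ) : ℝ := ∑ k, w k * v k

lemma dot_add_left (w w' v : Fin r → ℝ) : dot (w + w') v = dot w v + dot w' v := by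
  simp [dot, add_mul, Finset.sum_add_distrib]

lemma dot_smul_left (t : ℝ) (w v : Fin r → ℝ) : dot (t • w) v = t * dot w v := by
  simp [dot, Finset.mul_sum, mul_assoc]

lemma dot_neg_left (w v : Fin r → ℝ) : dot (-w) v = - dot w v := by
  simp [dot, Finset.sum_neg_distrib]

lemma dot_smul_right (c : ℝ) (w v : Fin r → ℝ) : dot w (c • v) = c * dot w v := by
  simp [dot, Finset.mul_sum]; ring_nf; simp [mul_comm, mul_assoc, mul_left_comm]

lemma dot_add_right (w v v' : Fin r → ℝ) : dot w (v + v') = dot w v + dot w v' := by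
  simp [dot, mul_add, Finset.sum_add_distrib]

lemma dot_sub_left (w w' v : Fin r → ℝ) : dot (w - w') v = dot w v - dot w' v := by
  simp [dot, sub_mul, Finset.sum_sub_distrib]

lemma dot_self_pos {v : Fin r → ℝ} (hv : v ≠ 0) : 0 < dot v v := by
  have h1 : 0 ≤ dot v v := Finset.sum_nonneg fun k _ => mul_self_nonneg _
  rcases h1.lt_or_eq with h | h
  · exact h
  · exfalso; apply hv; funext k
    have := (Finset.sum_eq_zero_iff_of_nonneg (fun k _ => mul_self_nonneg (v k))).1 h.symm k (mem_univ k)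
    have := mul_self_eq_zero.1 this
    simpa using this

lemma dot_zero_left (v : Fin r → ℝ) : dot 0 v = 0 := by simp [dot]


/-- Avoidance lemma: if for each `i ∈ s` there is a vector in `P` not orthogonal
to `v i`, then there is a single vector in `P` simultaneously non-orthogonal to all. -/
lemma avoid {ι : Type*} (P : (Fin r → ℝ) → Prop) (h0 : P 0)
    (hcl : ∀ w w' (t : ℝ), P w → P w' → P (w + t • w'))
    (v : ι → Fin r → ℝ) (s : Finset ι)
    (h : ∀ i ∈ s, ∃ w, P w ∧ dot w (v i) ≠ 0) :
    ∃ w, P w ∧ ∀ i ∈ s, dot w (v i) ≠ 0 := by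
  classical
  induction s using Finset.induction_on with
  | empty => exact ⟨0, h0, fun i hi => absurd hi (notMem_empty i)⟩
  | insert a s ha ih =>
    obtain ⟨w, hPw, hw⟩ := ih (fun i hi => h i (mem_insert_of_mem hi))
    obtain ⟨w', hPw', hw'⟩ := h a (mem_insert_self a s)
    set bad : ι → ℝ := fun i =>
      if dot w' (v i) = 0 then 1 else -(dot w (v i)) / (dot w' (v i)) with hbad
    obtain ⟨t, ht⟩ := Infinite.exists_notMem_finset ((insert a s).image bad)
    refine ⟨w + t • w', hcl w w' t hPw hPw', fun i hi => ?_⟩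
    rw [dot_add_left, dot_smul_left]
    by_cases hd : dot w' (v i) = 0
    · rw [hd]
      rcases mem_insert.1 hi with rfl | hi'
      · exact absurd hd hw'
      · simpa using hw i hi'
    · intro hzero
      apply ht
      refine Finset.mem_image.2 ⟨i, hi, ?_⟩
      rw [hbad]; simp only [hd, if_false]
      field_simp
      linarith

lemma perturb {ι : Type*} (a b : ι → ℝ) (T : Finset ι) (ha : ∀ i ∈ T, a i ≠ 0) :
    ∃ ε : ℝ, 0 < ε ∧ ∀ i ∈ T, |ε * b i| < |a i| := by
  rcases T.eq_empty_or_nonempty with rfl | hT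
  · exact ⟨1, one_pos, by simp⟩
  · set A := T.inf' hT fun i => |a i| with hA
    set B := T.sup' hT fun i => |b i| with hB
    have hApos : 0 < A := by
      rw [hA, Finset.lt_inf'_iff]
      exact fun i hi => abs_pos.2 (ha i hi)
    have hBnn : 0 ≤ B := by
      obtain ⟨i, hi⟩ := hT
      exact le_trans (abs_nonneg (b i)) (Finset.le_sup' (f := fun i => |b i|) hi)
    refine ⟨A / (B + 1), by positivity, fun i hi => ?_⟩
    have h1 : A ≤ |a i| := Finset.inf'_le _ hi
    have h2 : |b i| ≤ B := Finset.le_sup' (f := fun i => |b i|) hi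
    have hb0 : 0 ≤ |b i| := abs_nonneg _
    have : |A / (B + 1) * b i| = A / (B + 1) * |b i| := by
      rw [abs_mul, abs_of_pos (by positivity)]
    rw [this]
    have hB1 : (0:ℝ) < B + 1 := by linarith
    have : A / (B + 1) * |b i| ≤ A / (B + 1) * B := by
      apply mul_le_mul_of_nonneg_left h2 (by positivity)
    have hlt : A / (B + 1) * B < A := by
      rw [div_mul_eq_mul_div, div_lt_iff₀ hB1]
      nlinarith
    linarith

lemma sign_pres {x y : ℝ} (h : |y| < |x|) : (0 < x + y ↔ 0 < x) ∧ x + y ≠ 0 := by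
  have hy := abs_lt.1 h
  have hx : x ≠ 0 := by
    intro h0; rw [h0, abs_zero] at h; exact absurd h (not_lt.2 (abs_nonneg y))
  rcases hx.lt_or_gt with hx' | hx'
  · rw [abs_of_neg hx'] at hy
    constructor
    · constructor <;> intro <;> linarith [hy.2]
    · intro h0; linarith [hy.2]
  · rw [abs_of_pos hx'] at hy
    constructor
    · constructor <;> intro <;> linarith [hy.1]
    · intro h0; linarith [hy.1]

lemma half_count {n m : ℕ} (V : Fin n → Fin r → ℝ) (hn : n = 2 * m)
    (hdeg : ∀ w, (univ.filter fun i => 0 < dot w (V i)).card ≤ m)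
    (w : Fin r → ℝ) (hw : ∀ i, dot w (V i) ≠ 0) :
    (univ.filter fun i => 0 < dot w (V i)).card = m := by
  classical
  have h1 := hdeg w
  have h2 := hdeg (-w)
  have key : (univ.filter fun i => 0 < dot (-w) (V i))
      = (univ.filter fun i => ¬ (0 < dot w (V i))) := by
    apply Finset.filter_congr
    intro i _
    rw [dot_neg_left]
    constructor
    · intro h hcon; linarith
    · intro h
      rcases (hw i).lt_or_gt with h' | h'
      · linarith
      · exact absurd h' h
  have h3 : (univ.filter fun i => 0 < dot w (V i)).card
      + (univ.filter fun i => ¬ (0 < dot w (V i))).card = n := by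
    rw [Finset.card_filter_add_card_filter_not]
    simp
  rw [key] at h2
  omega


lemma balance {n m : ℕ} (V : Fin n → Fin r → ℝ) (hz : ∀ i, V i ≠ 0) (hn : n = 2 * m)
    (hdeg : ∀ w, (univ.filter fun i => 0 < dot w (V i)).card ≤ m) (k : Fin n) :
    (univ.filter fun l => ∃ c : ℝ, c < 0 ∧ V l = c • V k).card
      = (univ.filter fun l => ∃ c : ℝ, 0 < c ∧ V l = c • V k).card := by
  set u := V k with hu
  have hu0 : u ≠ 0 := hz k
  have huu : 0 < dot u u := dot_self_pos hu0
  set NP : Finset (Fin n) := univ.filter (fun l => ∀ c : ℝ, V l ≠ c • V k) with hNP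
  -- find w orthogonal to u, nonzero on all non-parallel vectors
  obtain ⟨w, hwu, hw⟩ := avoid (fun w => dot w u = 0) (dot_zero_left u)
    (fun w w' t h1 h2 => by
      show dot (w + t • w') u = 0
      rw [dot_add_left, dot_smul_left]
      rw [h1, h2]; ring)
    V NP (fun l hl => by
      have hlnp : ∀ c : ℝ, V l ≠ c • V k := by
        have := (mem_filter.1 hl).2
        simpa using this
      set cf : ℝ := dot (V l) u / dot u u with hcf
      set w2 : Fin r → ℝ := V l - cf • u with hw2
      have horth : dot w2 u = 0 := by
        rw [hw2, dot_sub_left, dot_smul_left, hcf, div_mul_cancel₀ _ (ne_of_gt huu)]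
        ring
      refine ⟨w2, horth, ?_⟩
      have hVl : w2 + cf • u = V l := by rw [hw2]; abel
      have hw0 : w2 ≠ 0 := by
        intro h0
        rw [hw2] at h0
        exact hlnp cf (sub_eq_zero.1 h0)
      have hcomp : dot w2 (V l) = dot w2 w2 + cf * dot w2 u := by
        rw [← hVl, dot_add_right, dot_smul_right]
      rw [hcomp, horth, mul_zero, add_zero]
      exact ne_of_gt (dot_self_pos hw0))
  -- perturbation
  obtain ⟨ε, hε, hεs⟩ := perturb (fun l => dot w (V l)) (fun l => dot u (V l)) NP
    (fun l hl => hw l hl)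
  -- the two perturbed hyperplanes
  have key : ∀ (s : ℝ), s = 1 ∨ s = -1 →
      (univ.filter fun i => 0 < dot (w + (s * ε) • u) (V i))
        = NP.filter (fun l => 0 < dot w (V l))
          ∪ univ.filter (fun l => ∃ c : ℝ, 0 < s * c ∧ V l = c • V k) := by
    intro s hs
    ext l
    simp only [Finset.mem_union, Finset.mem_filter, Finset.mem_univ, true_and, hNP]
    have hval : dot (w + (s * ε) • u) (V l) = dot w (V l) + (s * ε) * dot u (V l) := by
      rw [dot_add_left, dot_smul_left]
    by_cases hpar : ∀ c : ℝ, V l ≠ c • V k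
    · -- non-parallel case
      have hlNP : l ∈ NP := by simp [hNP, hpar]
      have habs : |(s * ε) * dot u (V l)| < |dot w (V l)| := by
        have h := hεs l hlNP
        calc |(s * ε) * dot u (V l)| = |s| * |ε * dot u (V l)| := by
              rw [mul_assoc, abs_mul]
            _ = |ε * dot u (V l)| := by rcases hs with rfl | rfl <;> simp
            _ < |dot w (V l)| := h
      have hsp := (sign_pres habs).1
      rw [hval, hsp]
      constructor
      · intro h; exact Or.inl ⟨hpar, h⟩
      · rintro (⟨_, h⟩ | ⟨c, _, hc⟩)
        · exact h
        · exact absurd hc (hpar c)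
    · push_neg at hpar
      obtain ⟨c, hc⟩ := hpar
      have hc0 : c ≠ 0 := by
        intro h0; rw [h0, zero_smul] at hc; exact hz l hc
      have hdw : dot w (V l) = 0 := by rw [hc, dot_smul_right, hwu]; ring
      have hdu : dot u (V l) = c * dot u u := by rw [hc, dot_smul_right]
      rw [hval, hdw, hdu, zero_add]
      have hre : s * ε * (c * dot u u) = (s * c) * (ε * dot u u) := by ring
      have hp : 0 < ε * dot u u := mul_pos hε huu
      have hiff : 0 < s * ε * (c * dot u u) ↔ 0 < s * c := by
        rw [hre]
        constructor
        · intro h; by_contra h'; push_neg at h'; nlinarith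
        · intro h; exact mul_pos h hp
      rw [hiff]
      constructor
      · intro h; exact Or.inr ⟨c, h, hc⟩
      · rintro (⟨hnpar, _⟩ | ⟨c', hc', hceq⟩)
        · exact absurd hc (hnpar c)
        · have hcc : c' = c := by
            have h1 : (c' - c) • V k = 0 := by
              rw [sub_smul, ← hc, ← hceq, sub_self]
            rcases smul_eq_zero.1 h1 with h2 | h2
            · linarith [sub_eq_zero.1 h2]
            · exact absurd h2 hu0
          rw [hcc] at hc'; exact hc'
  -- nonvanishing for half_count
  have keyne : ∀ (s : ℝ), s = 1 ∨ s = -1 → ∀ l, dot (w + (s * ε) • u) (V l) ≠ 0 := by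
    intro s hs l
    have hval : dot (w + (s * ε) • u) (V l) = dot w (V l) + (s * ε) * dot u (V l) := by
      rw [dot_add_left, dot_smul_left]
    by_cases hpar : ∀ c : ℝ, V l ≠ c • V k
    · have hlNP : l ∈ NP := by simp [hNP, hpar]
      have habs : |(s * ε) * dot u (V l)| < |dot w (V l)| := by
        have h := hεs l hlNP
        calc |(s * ε) * dot u (V l)| = |s| * |ε * dot u (V l)| := by
              rw [mul_assoc, abs_mul]
            _ = |ε * dot u (V l)| := by rcases hs with rfl | rfl <;> simp
            _ < |dot w (V l)| := h
      rw [hval]; exact (sign_pres habs).2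
    · push_neg at hpar
      obtain ⟨c, hc⟩ := hpar
      have hc0 : c ≠ 0 := by
        intro h0; rw [h0, zero_smul] at hc; exact hz l hc
      have hdw : dot w (V l) = 0 := by rw [hc, dot_smul_right, hwu]; ring
      have hdu : dot u (V l) = c * dot u u := by rw [hc, dot_smul_right]
      rw [hval, hdw, hdu, zero_add]
      have hs0 : s ≠ 0 := by rcases hs with rfl | rfl <;> norm_num
      positivity
  have hcard1 := half_count V hn hdeg _ (keyne 1 (Or.inl rfl))
  have hcard2 := half_count V hn hdeg _ (keyne (-1) (Or.inr rfl))
  rw [key 1 (Or.inl rfl)] at hcard1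
  rw [key (-1) (Or.inr rfl)] at hcard2
  have hdisj : ∀ (s : ℝ), Disjoint (NP.filter (fun l => 0 < dot w (V l)))
      (univ.filter (fun l => ∃ c : ℝ, 0 < s * c ∧ V l = c • V k)) := by
    intro s
    rw [Finset.disjoint_left]
    intro l hl hl2
    obtain ⟨c, _, hc⟩ := (mem_filter.1 hl2).2
    have := (mem_filter.1 (mem_filter.1 hl).1).2
    exact (by simpa using this : ∀ c : ℝ, V l ≠ c • V k) c hc
  rw [Finset.card_union_of_disjoint (hdisj 1)] at hcard1
  rw [Finset.card_union_of_disjoint (hdisj (-1))] at hcard2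
  have e1 : (univ.filter (fun l => ∃ c : ℝ, 0 < (1:ℝ) * c ∧ V l = c • V k)).card
      = (univ.filter (fun l => ∃ c : ℝ, 0 < c ∧ V l = c • V k)).card := by
    congr 1
    apply Finset.filter_congr
    intro l _
    simp
  have e2 : (univ.filter (fun l => ∃ c : ℝ, 0 < (-1:ℝ) * c ∧ V l = c • V k)).card
      = (univ.filter (fun l => ∃ c : ℝ, c < 0 ∧ V l = c • V k)).card := by
    congr 1
    apply Finset.filter_congr
    intro l _
    constructor
    · rintro ⟨c, h1, h2⟩; exact ⟨c, by nlinarith, h2⟩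
    · rintro ⟨c, h1, h2⟩; exact ⟨c, by nlinarith, h2⟩
  rw [e1] at hcard1
  rw [e2] at hcard2
  exact Nat.add_left_cancel (hcard2.trans hcard1.symm)

section build
variable (V : Fin n → Fin r → ℝ)

/-- same ray -/
def Sam (k l : Fin n) : Prop := ∃ c : ℝ, 0 < c ∧ V l = c • V k
/-- opposite ray -/
def Opp (k l : Fin n) : Prop := ∃ c : ℝ, c < 0 ∧ V l = c • V k

variable {V}
variable (hz : ∀ i, V i ≠ 0)
include hz

lemma cancel {k : Fin n} {c c' : ℝ} (h : c • V k = c' • V k) : c = c' := by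
  have h1 : (c - c') • V k = 0 := by rw [sub_smul, h, sub_self]
  rcases smul_eq_zero.1 h1 with h2 | h2
  · linarith [sub_eq_zero.1 h2]
  · exact absurd h2 (hz k)

lemma sam_refl (k : Fin n) : Sam V k k := ⟨1, one_pos, (one_smul ℝ (V k)).symm⟩

lemma not_sam_opp {k l : Fin n} (h1 : Sam V k l) (h2 : Opp V k l) : False := by
  obtain ⟨c, hc, hce⟩ := h1
  obtain ⟨c', hc', hce'⟩ := h2
  have := cancel hz (hce ▸ hce' ▸ rfl : c • V k = c' • V k)
  linarith

lemma opp_symm {i j : Fin n} (h : Opp V i j) : Opp V j i := by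
  obtain ⟨c, hc, hce⟩ := h
  refine ⟨c⁻¹, inv_lt_zero.2 hc, ?_⟩
  rw [hce, smul_smul, inv_mul_cancel₀ (ne_of_lt hc), one_smul]

lemma opp_ne {i : Fin n} (h : Opp V i i) : False := by
  obtain ⟨c, hc, hce⟩ := h
  have : c = 1 := (cancel hz (hce.symm.trans (one_smul ℝ (V i)).symm) : c = 1)
  linarith

lemma transfer1 {i j k : Fin n} (h : Opp V i j) : Sam V k j ↔ Opp V k i := by
  obtain ⟨e, he, hee⟩ := h
  constructor
  · rintro ⟨c, hc, hce⟩
    refine ⟨e⁻¹ * c, mul_neg_of_neg_of_pos (inv_lt_zero.2 he) hc, ?_⟩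
    have : V i = e⁻¹ • V j := by
      rw [hee, smul_smul, inv_mul_cancel₀ (ne_of_lt he), one_smul]
    rw [this, hce, smul_smul]
  · rintro ⟨c, hc, hce⟩
    exact ⟨e * c, mul_pos_of_neg_of_neg he hc, by rw [hee, hce, smul_smul]⟩

lemma transfer2 {i j k : Fin n} (h : Opp V i j) : Opp V k j ↔ Sam V k i := by
  obtain ⟨e, he, hee⟩ := h
  constructor
  · rintro ⟨c, hc, hce⟩
    refine ⟨e⁻¹ * c, mul_pos_of_neg_of_neg (inv_lt_zero.2 he) hc, ?_⟩
    have : V i = e⁻¹ • V j := by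
      rw [hee, smul_smul, inv_mul_cancel₀ (ne_of_lt he), one_smul]
    rw [this, hce, smul_smul]
  · rintro ⟨c, hc, hce⟩
    exact ⟨e * c, mul_neg_of_neg_of_pos he hc, by rw [hee, hce, smul_smul]⟩

lemma build :
    ∀ S : Finset (Fin n),
      (∀ k ∈ S, (S.filter fun l => Opp V k l).card = (S.filter fun l => Sam V k l).card) →
      ∃ σ : Fin n → Fin n, (∀ i, i ∉ S → σ i = i) ∧
        ∀ i ∈ S, σ i ∈ S ∧ σ (σ i) = i ∧ Opp V i (σ i) := by
  intro S
  induction S using Finset.strongInduction with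
  | _ S ih =>
    intro hbal
    rcases S.eq_empty_or_nonempty with rfl | ⟨i, hi⟩
    · exact ⟨id, fun _ _ => rfl, by simp⟩
    have hSam : 0 < (S.filter fun l => Sam V i l).card := by
      rw [Finset.card_pos]
      exact ⟨i, mem_filter.2 ⟨hi, sam_refl hz i⟩⟩
    have hOpp : 0 < (S.filter fun l => Opp V i l).card := by
      rw [hbal i hi]; exact hSam
    obtain ⟨j, hj⟩ := Finset.card_pos.1 hOpp
    obtain ⟨hjS, hij⟩ := mem_filter.1 hj
    have hji : j ≠ i := by rintro rfl; exact opp_ne hz hij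
    set S' := (S.erase i).erase j with hS'
    have hSsub : S' ⊂ S :=
      lt_of_le_of_lt (Finset.erase_subset j (S.erase i)) (Finset.erase_ssubset hi)
    have memS' : ∀ x, x ∈ S' ↔ x ∈ S ∧ x ≠ i ∧ x ≠ j := by
      intro x
      rw [hS', Finset.mem_erase, Finset.mem_erase]
      tauto
    -- balance for S'
    have hbal' : ∀ k ∈ S', (S'.filter fun l => Opp V k l).card
        = (S'.filter fun l => Sam V k l).card := by
      intro k hk
      obtain ⟨hkS, hki, hkj⟩ := (memS' k).1 hk
      have hfe : ∀ p : Fin n → Prop,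
          S'.filter p = ((S.filter p).erase i).erase j := by
        intro p
        rw [hS', Finset.filter_erase, Finset.filter_erase]
      rw [hfe, hfe]
      have hb := hbal k hkS
      by_cases hsam : Sam V k i
      · have h1 : ¬ Opp V k i := fun h => not_sam_opp hz hsam h
        have h2 : ¬ Sam V k j := fun h => h1 ((transfer1 hz hij).1 h)
        have h3 : Opp V k j := (transfer2 hz hij).2 hsam
        rw [Finset.erase_eq_of_notMem
              (show i ∉ S.filter (fun l => Opp V k l) from fun h => h1 (mem_filter.1 h).2),
            Finset.card_erase_of_mem (mem_filter.2 ⟨hjS, h3⟩),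
            Finset.erase_eq_of_notMem
              (show j ∉ (S.filter (fun l => Sam V k l)).erase i from
                fun h => h2 (mem_filter.1 (Finset.mem_of_mem_erase h)).2),
            Finset.card_erase_of_mem (mem_filter.2 ⟨hi, hsam⟩), hb]
      · by_cases hopp : Opp V k i
        · have h2 : Sam V k j := (transfer1 hz hij).2 hopp
          have h3 : ¬ Opp V k j := fun h => hsam ((transfer2 hz hij).1 h)
          rw [Finset.erase_eq_of_notMem
                (show j ∉ (S.filter (fun l => Opp V k l)).erase i from
                  fun h => h3 (mem_filter.1 (Finset.mem_of_mem_erase h)).2),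
              Finset.card_erase_of_mem (mem_filter.2 ⟨hi, hopp⟩),
              Finset.erase_eq_of_notMem
                (show i ∉ S.filter (fun l => Sam V k l) from fun h => hsam (mem_filter.1 h).2),
              Finset.card_erase_of_mem (mem_filter.2 ⟨hjS, h2⟩), hb]
        · have h2 : ¬ Sam V k j := fun h => hopp ((transfer1 hz hij).1 h)
          have h3 : ¬ Opp V k j := fun h => hsam ((transfer2 hz hij).1 h)
          rw [Finset.erase_eq_of_notMem
                (show i ∉ S.filter (fun l => Opp V k l) from fun h => hopp (mem_filter.1 h).2),
              Finset.erase_eq_of_notMem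
                (show j ∉ S.filter (fun l => Opp V k l) from fun h => h3 (mem_filter.1 h).2),
              Finset.erase_eq_of_notMem
                (show i ∉ S.filter (fun l => Sam V k l) from fun h => hsam (mem_filter.1 h).2),
              Finset.erase_eq_of_notMem
                (show j ∉ S.filter (fun l => Sam V k l) from fun h => h2 (mem_filter.1 h).2), hb]
    obtain ⟨σ', hout', hσ'⟩ := ih S' hSsub hbal'
    set σ : Fin n → Fin n := fun x => if x = i then j else if x = j then i else σ' x with hσdef
    have hσi : σ i = j := by simp [hσdef]
    have hσj : σ j = i := by simp [hσdef, hji]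
    have hσo : ∀ x, x ≠ i → x ≠ j → σ x = σ' x := by
      intro x h1 h2; simp [hσdef, h1, h2]
    refine ⟨σ, ?_, ?_⟩
    · intro x hx
      have hxi : x ≠ i := fun h => hx (h ▸ hi)
      have hxj : x ≠ j := fun h => hx (h ▸ hjS)
      rw [hσo x hxi hxj]
      exact hout' x (fun h => hx ((memS' x).1 h).1)
    · intro x hxS
      by_cases hxi : x = i
      · subst hxi
        rw [hσi, hσj]
        exact ⟨hjS, rfl, hij⟩
      · by_cases hxj : x = j
        · subst hxj
          rw [hσj, hσi]
          exact ⟨hi, rfl, opp_symm hz hij⟩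
        · have hxS' : x ∈ S' := (memS' x).2 ⟨hxS, hxi, hxj⟩
          obtain ⟨hmem, hinv, hopp⟩ := hσ' x hxS'
          obtain ⟨hmS, hmi, hmj⟩ := (memS' (σ' x)).1 hmem
          rw [hσo x hxi hxj, hσo (σ' x) hmi hmj]
          exact ⟨hmS, hinv, hopp⟩
end build

end Stmt12Aux


open Finset Stmt12Aux in
/-- An irreducible vector configuration `V` of rank `r` with `r+d+1` nonzero elements and
dual degree exactly `δ` satisfies `r = d + 1 - 2δ` if and only if `V` is centrally
symmetric up to rescaling by positive scalars, i.e. there is a fixed-point-free involution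
matching each element with a negative scalar multiple of it. -/
theorem stmt_12 (r d δ : ℕ) (V : Fin (r + d + 1) → (Fin r → ℝ))
    (hz : ∀ i, V i ≠ 0)
    (hspan : Submodule.span ℝ (Set.range V) = ⊤)
    (hdeg1 : ∀ w : Fin r → ℝ,
      (Finset.univ.filter (fun i => 0 < ∑ k, w k * V i k)).card ≤ r + δ)
    (hdeg2 : ∃ w : Fin r → ℝ, w ≠ 0 ∧
      (Finset.univ.filter (fun i => 0 < ∑ k, w k * V i k)).card = r + δ) :
    r + 2 * δ = d + 1 ↔
      ∃ σ : Equiv.Perm (Fin (r + d + 1)), Function.Involutive σ ∧ (∀ i, σ i ≠ i) ∧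
        ∀ i, ∃ c : ℝ, c < 0 ∧ V (σ i) = c • V i := by
  classical
  have hdeg1' : ∀ w : Fin r → ℝ,
      (Finset.univ.filter (fun i => 0 < dot w (V i))).card ≤ r + δ := fun w => hdeg1 w
  constructor
  · -- forward: arithmetic condition implies central symmetry
    intro harit
    have hn : r + d + 1 = 2 * (r + δ) := by omega
    have hbal : ∀ k ∈ (Finset.univ : Finset (Fin (r + d + 1))),
        ((Finset.univ : Finset (Fin (r+d+1))).filter fun l => Opp V k l).card
          = ((Finset.univ : Finset (Fin (r+d+1))).filter fun l => Sam V k l).card :=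
      fun k _ => balance V hz hn hdeg1' k
    obtain ⟨σ, _, hσ⟩ := build hz Finset.univ hbal
    have hinv : Function.Involutive σ := fun i => (hσ i (Finset.mem_univ i)).2.1
    refine ⟨hinv.toPerm, ?_, ?_, ?_⟩
    · intro x
      simp only [Function.Involutive.coe_toPerm]
      exact hinv x
    · intro i
      simp only [Function.Involutive.coe_toPerm]
      intro h
      have hopp : Opp V i (σ i) := (hσ i (Finset.mem_univ i)).2.2
      rw [h] at hopp
      exact opp_ne hz hopp
    · intro i
      have hopp : Opp V i (σ i) := (hσ i (Finset.mem_univ i)).2.2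
      simpa [Function.Involutive.coe_toPerm, Opp] using hopp
  · -- converse: central symmetry implies arithmetic condition
    rintro ⟨σ, hinv, hne, hc⟩
    -- upper bound: 2 * (r + δ) ≤ r + d + 1 using the witness of hdeg2
    obtain ⟨w, hw0, hwcard⟩ := hdeg2
    have hwcard' : (Finset.univ.filter (fun i => 0 < dot w (V i))).card = r + δ := hwcard
    set pos := Finset.univ.filter (fun i => 0 < dot w (V i)) with hpos
    have hmap : ∀ i ∈ pos, σ i ∈ Finset.univ \ pos := by
      intro i hi
      obtain ⟨c, hcneg, hceq⟩ := hc i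
      have hdoti : 0 < dot w (V i) := (Finset.mem_filter.1 hi).2
      have : dot w (V (σ i)) = c * dot w (V i) := by rw [hceq, dot_smul_right]
      refine Finset.mem_sdiff.2 ⟨Finset.mem_univ _, ?_⟩
      intro hmem
      have := (Finset.mem_filter.1 hmem).2
      nlinarith
    have hinj : Set.InjOn σ pos := fun a _ b _ h => σ.injective h
    have hle : pos.card ≤ (Finset.univ \ pos).card :=
      Finset.card_le_card_of_injOn σ hmap hinj
    have hsd : (Finset.univ \ pos).card = (r + d + 1) - pos.card := by
      rw [Finset.card_sdiff_of_subset (Finset.subset_univ pos)]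
      simp
    have hposle : pos.card ≤ r + d + 1 := by
      calc pos.card ≤ (Finset.univ : Finset (Fin (r+d+1))).card := Finset.card_le_card (Finset.subset_univ pos)
        _ = r + d + 1 := by simp
    -- lower bound: r + d + 1 ≤ 2 * (r + δ) using a generic direction
    obtain ⟨w', -, hw'⟩ := avoid (fun _ => True) trivial (fun _ _ _ _ _ => trivial)
      V Finset.univ (fun i _ => ⟨V i, trivial, ne_of_gt (dot_self_pos (hz i))⟩)
    have hw'' : ∀ i, dot w' (V i) ≠ 0 := fun i => hw' i (Finset.mem_univ i)
    have h1 := hdeg1' w'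
    have h2 := hdeg1' (-w')
    have hkey : (Finset.univ.filter fun i => 0 < dot (-w') (V i))
        = (Finset.univ.filter fun i => ¬ (0 < dot w' (V i))) := by
      apply Finset.filter_congr
      intro i _
      rw [dot_neg_left]
      constructor
      · intro h hcon; linarith
      · intro h
        rcases (hw'' i).lt_or_gt with h' | h'
        · linarith
        · exact absurd h' h
    rw [hkey] at h2
    have h3 : (Finset.univ.filter fun i => 0 < dot w' (V i)).card
        + (Finset.univ.filter fun i => ¬ (0 < dot w' (V i))).card = r + d + 1 := by
      rw [Finset.card_filter_add_card_filter_not]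
      simp
    omega
end

section
/- Any vector configuration V in R^r with deg*(V) ≥ 0 and dual codegree codeg*(V) ≥ 1 contains a totally cyclic subconfiguration W ⊆ V with codeg*(W) = codeg*(V). -/
open Finset
open scoped Pointwise

/-- A continuous linear functional on `Fin r → ℝ` is given by pairing with coordinates. -/
private lemma clm_eq_sum {r : ℕ} (f : (Fin r → ℝ) →L[ℝ] ℝ) (x : Fin r → ℝ) :
    f x = ∑ k, x k * f (fun j => if k = j then 1 else 0) := by
  conv_lhs => rw [pi_eq_sum_univ x, map_sum]
  refine Finset.sum_congr rfl fun k _ => ?_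
  rw [map_smul, smul_eq_mul]

/-- Key separation lemma: there is `u` vanishing on `V i`, `i ∈ T`, and strictly positive
on `V j`, `j ∉ T`, where `T` is the "totally cyclic part". -/
private lemma exists_orth_pos {r n : ℕ} (V : Fin n → (Fin r → ℝ)) (T : Finset (Fin n))
    (hmem : ∀ c : Fin n → ℝ, (∀ j, 0 ≤ c j) → (∀ k, ∑ j, c j * V j k = 0) →
      ∀ i, 0 < c i → i ∈ T)
    (hTdef : ∀ i ∈ T, ∃ c : Fin n → ℝ, (∀ j, 0 ≤ c j) ∧ 0 < c i ∧ ∀ k, ∑ j, c j * V j k = 0)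
    (hne : ∃ j0, j0 ∉ T) :
    ∃ u : Fin r → ℝ, (∀ i ∈ T, ∑ k, u k * V i k = 0) ∧ (∀ j ∉ T, 0 < ∑ k, u k * V j k) := by
  classical
  obtain ⟨j0, hj0⟩ := hne
  set Sp : Submodule ℝ (Fin r → ℝ) :=
    Submodule.span ℝ (Set.range fun i : {i // i ∈ T} => V i) with hSp
  set A : Set (Fin r → ℝ) := convexHull ℝ (V '' {j | j ∉ T}) + (Sp : Set (Fin r → ℝ)) with hA
  have h0A : (0 : Fin r → ℝ) ∉ A := by
    intro h0
    rw [hA, Set.mem_add] at h0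
    obtain ⟨y, hy, z, hz, hyz⟩ := h0
    rw [_root_.convexHull_eq] at hy
    obtain ⟨ι, t, wt, zf, hwt, hsum1, hzf, hcm⟩ := hy
    have hgex : ∀ i ∈ t, ∃ j, j ∉ T ∧ V j = zf i := by
      intro i hi
      obtain ⟨j, hj, hVj⟩ := hzf i hi
      exact ⟨j, hj, hVj⟩
    set g : ι → Fin n := fun i => if h : ∃ j, j ∉ T ∧ V j = zf i then h.choose else j0 with hg
    have hgT : ∀ i ∈ t, g i ∉ T := by
      intro i hi
      rw [hg]; dsimp only; rw [dif_pos (hgex i hi)]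
      exact (hgex i hi).choose_spec.1
    have hgV : ∀ i ∈ t, V (g i) = zf i := by
      intro i hi
      rw [hg]; dsimp only; rw [dif_pos (hgex i hi)]
      exact (hgex i hi).choose_spec.2
    rw [Finset.centerMass_eq_of_sum_1 _ _ hsum1] at hcm
    obtain ⟨a, ha⟩ := (Submodule.mem_span_range_iff_exists_fun ℝ).1 hz
    set t' : Fin n → ℝ := fun j => ∑ i ∈ t.filter (fun i => g i = j), wt i with ht'
    have ht'0 : ∀ j, 0 ≤ t' j := fun j =>
      Finset.sum_nonneg fun i hi => hwt i (Finset.mem_filter.1 hi).1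
    have ht'sum : ∑ j, t' j = 1 := by
      rw [ht']
      rw [Finset.sum_fiberwise_of_maps_to (fun i _ => Finset.mem_univ (g i)) wt]
      exact hsum1
    have ht'T : ∀ j ∈ T, t' j = 0 := by
      intro j hj
      apply Finset.sum_eq_zero
      intro i hi
      have h1 := hgT i (Finset.mem_filter.1 hi).1
      rw [(Finset.mem_filter.1 hi).2] at h1
      exact (h1 hj).elim
    have ht'V : ∀ k, ∑ j, t' j * V j k = y k := by
      intro k
      calc ∑ j, t' j * V j k
          = ∑ j, ∑ i ∈ t.filter (fun i => g i = j), wt i * V j k := by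
            refine Finset.sum_congr rfl fun j _ => ?_
            rw [ht']; dsimp only; rw [Finset.sum_mul]
        _ = ∑ j, ∑ i ∈ t.filter (fun i => g i = j), wt i * V (g i) k := by
            refine Finset.sum_congr rfl fun j _ => Finset.sum_congr rfl fun i hi => ?_
            rw [(Finset.mem_filter.1 hi).2]
        _ = ∑ i ∈ t, wt i * V (g i) k :=
            Finset.sum_fiberwise_of_maps_to (fun i _ => Finset.mem_univ (g i)) _
        _ = y k := by
            rw [← hcm, Finset.sum_apply]
            refine Finset.sum_congr rfl fun i hi => ?_
            rw [Pi.smul_apply, smul_eq_mul, hgV i hi]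
    set a' : Fin n → ℝ := fun j => if h : j ∈ T then a ⟨j, h⟩ else 0 with ha'
    have ha'V : ∀ k, ∑ j, a' j * V j k = z k := by
      intro k
      calc ∑ j, a' j * V j k
          = ∑ j ∈ T, a' j * V j k := by
            refine (Finset.sum_subset (Finset.subset_univ T) ?_).symm
            intro j _ hj
            rw [ha']; dsimp only; rw [dif_neg hj, zero_mul]
        _ = ∑ j ∈ T.attach, a' ↑j * V ↑j k := (Finset.sum_attach _ _).symm
        _ = z k := by
            rw [← ha, Finset.sum_apply, ← Finset.univ_eq_attach]
            refine Finset.sum_congr rfl fun i _ => ?_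
            rw [Pi.smul_apply, smul_eq_mul, ha']
            dsimp only
            rw [dif_pos i.2]
    set e : Fin n → ℝ := fun j => t' j + a' j with he
    have he0 : ∀ k, ∑ j, e j * V j k = 0 := by
      intro k
      have hyzk : y k + z k = 0 := by
        have := congrFun hyz k
        simpa using this
      calc ∑ j, e j * V j k = ∑ j, (t' j * V j k + a' j * V j k) := by
            refine Finset.sum_congr rfl fun j _ => ?_
            rw [he]; dsimp only; rw [add_mul]
        _ = (∑ j, t' j * V j k) + ∑ j, a' j * V j k := Finset.sum_add_distrib
        _ = y k + z k := by rw [ht'V k, ha'V k]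
        _ = 0 := hyzk
    have heT : ∀ j, e j < 0 → j ∈ T := by
      intro j hj
      by_contra hjT
      have : e j = t' j := by
        rw [he]; dsimp only; rw [ha']; dsimp only; rw [dif_neg hjT, add_zero]
      rw [this] at hj
      exact absurd hj (not_lt.2 (ht'0 j))
    set Cc : Fin n → Fin n → ℝ := fun i => if h : i ∈ T then (hTdef i h).choose else 0 with hCc
    have hCc0 : ∀ i ∈ T, ∀ j, 0 ≤ Cc i j := by
      intro i hi j
      rw [hCc]; dsimp only; rw [dif_pos hi]
      exact (hTdef i hi).choose_spec.1 j
    have hCci : ∀ i ∈ T, 0 < Cc i i := by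
      intro i hi
      rw [hCc]; dsimp only; rw [dif_pos hi]
      exact (hTdef i hi).choose_spec.2.1
    have hCcdep : ∀ i ∈ T, ∀ k, ∑ j, Cc i j * V j k = 0 := by
      intro i hi k
      rw [hCc]; dsimp only; rw [dif_pos hi]
      exact (hTdef i hi).choose_spec.2.2 k
    set d : Fin n → ℝ := fun j => e j + ∑ i ∈ T, (max (-(e i)) 0 / Cc i i) * Cc i j with hd
    have hterm : ∀ j, ∀ i ∈ T, 0 ≤ (max (-(e i)) 0 / Cc i i) * Cc i j := fun j i hi =>
      mul_nonneg (div_nonneg (le_max_right _ _) (hCci i hi).le) (hCc0 i hi j)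
    have hd0 : ∀ j, 0 ≤ d j := by
      intro j
      rcases le_or_gt 0 (e j) with h | h
      · exact add_nonneg h (Finset.sum_nonneg (hterm j))
      · have hjT : j ∈ T := heT j h
        have h1 : (max (-(e j)) 0 / Cc j j) * Cc j j = -(e j) := by
          rw [max_eq_left (by linarith), div_mul_cancel₀]
          exact (hCci j hjT).ne'
        have h2 : -(e j) ≤ ∑ i ∈ T, (max (-(e i)) 0 / Cc i i) * Cc i j := by
          rw [← h1]
          exact Finset.single_le_sum (hterm j) hjT
        rw [hd]; dsimp only
        linarith
    have hddep : ∀ k, ∑ j, d j * V j k = 0 := by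
      intro k
      have swap : ∑ j, (∑ i ∈ T, (max (-(e i)) 0 / Cc i i) * Cc i j) * V j k
          = ∑ i ∈ T, (max (-(e i)) 0 / Cc i i) * ∑ j, Cc i j * V j k := by
        simp only [Finset.sum_mul, Finset.mul_sum, mul_assoc]
        exact Finset.sum_comm
      calc ∑ j, d j * V j k
          = ∑ j, (e j * V j k + (∑ i ∈ T, (max (-(e i)) 0 / Cc i i) * Cc i j) * V j k) := by
            refine Finset.sum_congr rfl fun j _ => ?_
            rw [hd]; dsimp only; rw [add_mul]
        _ = (∑ j, e j * V j k)
            + ∑ j, (∑ i ∈ T, (max (-(e i)) 0 / Cc i i) * Cc i j) * V j k :=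
            Finset.sum_add_distrib
        _ = 0 := by
            rw [he0 k, swap, zero_add]
            refine Finset.sum_eq_zero fun i hi => ?_
            rw [hCcdep i hi k, mul_zero]
    have hex : ∃ j1, 0 < t' j1 := by
      by_contra hno
      push_neg at hno
      have : (∑ j, t' j) ≤ 0 := Finset.sum_nonpos fun j _ => hno j
      rw [ht'sum] at this
      linarith
    obtain ⟨j1, hj1⟩ := hex
    have hj1T : j1 ∉ T := by
      intro h
      rw [ht'T j1 h] at hj1
      exact lt_irrefl _ hj1
    have hdj1 : 0 < d j1 := by
      have hej1 : e j1 = t' j1 := by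
        rw [he]; dsimp only; rw [ha']; dsimp only; rw [dif_neg hj1T, add_zero]
      have hnn : (0:ℝ) ≤ ∑ i ∈ T, (max (-(e i)) 0 / Cc i i) * Cc i j1 :=
        Finset.sum_nonneg (hterm j1)
      rw [hd]; dsimp only
      rw [hej1]
      exact add_pos_of_pos_of_nonneg hj1 hnn
    exact hj1T (hmem d hd0 hddep j1 hdj1)
  have hconv : Convex ℝ A := (convex_convexHull ℝ _).add Sp.convex
  have hclosed : IsClosed A := by
    rw [hA]
    exact IsClosed.add_left_of_isCompact Sp.closed_of_finiteDimensional
      (((Set.toFinite {j | j ∉ T}).image V).isCompact_convexHull (𝕜 := ℝ))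
  obtain ⟨f, s, hf0, hfs⟩ := geometric_hahn_banach_point_closed hconv hclosed h0A
  have hspos : (0 : ℝ) < s := by
    have : f 0 = 0 := map_zero f
    linarith [hf0, this.symm.le]
  have hmemA : ∀ j ∉ T, ∀ z ∈ Sp, V j + z ∈ A := by
    intro j hj z hz
    rw [hA]
    exact Set.add_mem_add (subset_convexHull ℝ _ ⟨j, hj, rfl⟩) hz
  have hfj : ∀ j ∉ T, s < f (V j) := by
    intro j hj
    have := hfs _ (hmemA j hj 0 Sp.zero_mem)
    simpa using this
  have hfi : ∀ i ∈ T, f (V i) = 0 := by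
    intro i hi
    by_contra hne0
    have hVi : ∀ c : ℝ, c • V i ∈ Sp := fun c =>
      Sp.smul_mem c (Submodule.subset_span ⟨⟨i, hi⟩, rfl⟩)
    have hall : ∀ c : ℝ, s < f (V j0) + c * f (V i) := by
      intro c
      have := hfs _ (hmemA j0 hj0 (c • V i) (hVi c))
      rwa [map_add, map_smul, smul_eq_mul] at this
    have hc := hall ((s - f (V j0) - 1) / f (V i))
    rw [div_mul_cancel₀ _ hne0] at hc
    linarith
  refine ⟨fun k => f (fun j => if k = j then 1 else 0), ?_, ?_⟩
  · intro i hi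
    calc ∑ k, (fun k => f (fun j => if k = j then (1:ℝ) else 0)) k * V i k
        = ∑ k, V i k * f (fun j => if k = j then 1 else 0) :=
          Finset.sum_congr rfl fun k _ => mul_comm _ _
      _ = f (V i) := (clm_eq_sum f (V i)).symm
      _ = 0 := hfi i hi
  · intro j hj
    calc (0:ℝ) < s := hspos
      _ < f (V j) := hfj j hj
      _ = ∑ k, V j k * f (fun j => if k = j then 1 else 0) := clm_eq_sum f (V j)
      _ = ∑ k, (fun k => f (fun j => if k = j then (1:ℝ) else 0)) k * V j k :=
          Finset.sum_congr rfl fun k _ => mul_comm _ _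

/-- Any vector configuration `V` in `ℝ^r` with dual codegree at least `1` contains a
totally cyclic subconfiguration `W ⊆ V` (every linear hyperplane of `lin(W)` has a vector
of `W` on its open positive side) whose dual codegree equals that of `V` (expressed by:
for every `m`, `codeg*(W) ≥ m` iff `codeg*(V) ≥ m`). -/
theorem stmt_13 (r n : ℕ) (V : Fin n → (Fin r → ℝ))
    (hcodeg : ∀ w : Fin r → ℝ, w ≠ 0 →
      1 ≤ (Finset.univ.filter (fun i => 0 ≤ ∑ k, w k * V i k)).card) :
    ∃ T : Finset (Fin n),
      (∀ w : Fin r → ℝ, (∃ i ∈ T, ∑ k, w k * V i k ≠ 0) →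
        ∃ i ∈ T, 0 < ∑ k, w k * V i k) ∧
      (∀ m : ℕ,
        (∀ w : Fin r → ℝ, w ≠ 0 →
          m ≤ (T.filter (fun i => 0 ≤ ∑ k, w k * V i k)).card) ↔
        (∀ w : Fin r → ℝ, w ≠ 0 →
          m ≤ (Finset.univ.filter (fun i => 0 ≤ ∑ k, w k * V i k)).card)) := by
  classical
  set T : Finset (Fin n) := Finset.univ.filter (fun i => ∃ c : Fin n → ℝ,
      (∀ j, 0 ≤ c j) ∧ 0 < c i ∧ ∀ k, ∑ j, c j * V j k = 0) with hT
  have hmem : ∀ c : Fin n → ℝ, (∀ j, 0 ≤ c j) → (∀ k, ∑ j, c j * V j k = 0) →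
      ∀ i, 0 < c i → i ∈ T := by
    intro c hc0 hcd i hci
    rw [hT]
    exact Finset.mem_filter.2 ⟨Finset.mem_univ i, c, hc0, hci, hcd⟩
  have hTdef : ∀ i ∈ T, ∃ c : Fin n → ℝ,
      (∀ j, 0 ≤ c j) ∧ 0 < c i ∧ ∀ k, ∑ j, c j * V j k = 0 := by
    intro i hi
    rw [hT] at hi
    exact (Finset.mem_filter.1 hi).2
  refine ⟨T, ?_, ?_⟩
  · rintro w ⟨i, hiT, hnei⟩
    by_contra hno
    push_neg at hno
    obtain ⟨c, hc0, hci, hcd⟩ := hTdef i hiT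
    have hz : ∀ j, j ∉ T → c j = 0 := by
      intro j hj
      rcases (hc0 j).lt_or_eq with h | h
      · exact absurd (hmem c hc0 hcd j h) hj
      · exact h.symm
    have hsum : ∑ j, c j * (∑ k, w k * V j k) = 0 := by
      calc ∑ j, c j * ∑ k, w k * V j k
          = ∑ j, ∑ k, w k * (c j * V j k) := by
            refine Finset.sum_congr rfl fun j _ => ?_
            rw [Finset.mul_sum]
            exact Finset.sum_congr rfl fun k _ => by ring
        _ = ∑ k, ∑ j, w k * (c j * V j k) := Finset.sum_comm
        _ = ∑ k, w k * ∑ j, c j * V j k := by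
            refine Finset.sum_congr rfl fun k _ => (Finset.mul_sum _ _ _).symm
        _ = 0 := by
            refine Finset.sum_eq_zero fun k _ => ?_
            rw [hcd k, mul_zero]
    have hstrict : c i * (∑ k, w k * V i k) < 0 :=
      mul_neg_of_pos_of_neg hci (lt_of_le_of_ne (hno i hiT) hnei)
    have hlt : ∑ j, c j * (∑ k, w k * V j k) < ∑ _j : Fin n, (0:ℝ) := by
      refine Finset.sum_lt_sum ?_ ⟨i, Finset.mem_univ i, hstrict⟩
      intro j _
      by_cases hjT : j ∈ T
      · exact mul_nonpos_of_nonneg_of_nonpos (hc0 j) (hno j hjT)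
      · rw [hz j hjT, zero_mul]
    rw [hsum, Finset.sum_const_zero] at hlt
    exact lt_irrefl _ hlt
  · intro m
    constructor
    · intro h w hw
      exact le_trans (h w hw)
        (Finset.card_le_card (Finset.filter_subset_filter _ (Finset.subset_univ T)))
    · intro h w hw
      by_cases hTu : T = Finset.univ
      · rw [hTu]
        exact h w hw
      · have hne : ∃ j0, j0 ∉ T := by
          by_contra hc
          push_neg at hc
          exact hTu (Finset.eq_univ_iff_forall.2 hc)
        obtain ⟨u, hu0, hupos⟩ := exists_orth_pos V T hmem hTdef hne
        obtain ⟨j0, hj0⟩ := hne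
        set Tc : Finset (Fin n) := Finset.univ.filter (fun j => j ∉ T) with hTc
        have hj0Tc : j0 ∈ Tc := by
          rw [hTc]
          exact Finset.mem_filter.2 ⟨Finset.mem_univ _, hj0⟩
        have hTcne : Tc.Nonempty := ⟨j0, hj0Tc⟩
        have hTcmem : ∀ j, j ∈ Tc ↔ j ∉ T := by
          intro j
          rw [hTc, Finset.mem_filter]
          simp
        set δ : ℝ := Tc.inf' hTcne (fun j => ∑ k, u k * V j k) with hδdef
        set M : ℝ := Tc.sup' hTcne (fun j => |∑ k, w k * V j k|) with hMdef
        have hδ : 0 < δ := by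
          rw [hδdef]
          exact (Finset.lt_inf'_iff hTcne).2 fun j hj => hupos j ((hTcmem j).1 hj)
        have hM0 : 0 ≤ M :=
          le_trans (abs_nonneg _) (Finset.le_sup' (fun j => |∑ k, w k * V j k|) hj0Tc)
        set ε : ℝ := δ / (M + 1) with hεdef
        have hεpos : 0 < ε := div_pos hδ (by linarith)
        set w' : Fin r → ℝ := fun k => ε * w k - u k with hw'
        have hD' : ∀ i, ∑ k, w' k * V i k
            = ε * (∑ k, w k * V i k) - ∑ k, u k * V i k := by
          intro i
          rw [Finset.mul_sum, ← Finset.sum_sub_distrib]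
          refine Finset.sum_congr rfl fun k _ => ?_
          rw [hw']
          ring
        have hεM : ε * M < δ := by
          rw [hεdef, div_mul_eq_mul_div, div_lt_iff₀ (by linarith : (0:ℝ) < M + 1)]
          nlinarith
        have hneg : ∀ j ∉ T, ∑ k, w' k * V j k < 0 := by
          intro j hj
          have hjTc : j ∈ Tc := (hTcmem j).2 hj
          rw [hD' j]
          have h1 : δ ≤ ∑ k, u k * V j k :=
            Finset.inf'_le (fun j => ∑ k, u k * V j k) hjTc
          have h2 : |∑ k, w k * V j k| ≤ M :=
            Finset.le_sup' (fun j => |∑ k, w k * V j k|) hjTc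
          have h3 : ε * (∑ k, w k * V j k) ≤ ε * |∑ k, w k * V j k| :=
            mul_le_mul_of_nonneg_left (le_abs_self _) hεpos.le
          have h4 : ε * |∑ k, w k * V j k| ≤ ε * M :=
            mul_le_mul_of_nonneg_left h2 hεpos.le
          linarith
        have hw'0 : w' ≠ 0 := by
          intro hcon
          have h5 := hneg j0 hj0
          rw [hcon] at h5
          simp at h5
        refine le_trans (h w' hw'0) (Finset.card_le_card ?_)
        intro i hi
        rw [Finset.mem_filter] at hi ⊢
        have hiT : i ∈ T := by
          by_contra hiT
          exact absurd hi.2 (not_le.2 (hneg i hiT))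
        refine ⟨hiT, ?_⟩
        have h6 : ∑ k, w' k * V i k = ε * (∑ k, w k * V i k) := by
          rw [hD' i, hu0 i hiT, sub_zero]
        have h7 : (0:ℝ) ≤ ε * (∑ k, w k * V i k) := h6 ▸ hi.2
        by_contra h8
        push_neg at h8
        exact absurd h7 (not_le.2 (mul_neg_of_pos_of_neg hεpos h8))
end

section
/- If V is a pure vector configuration of rank r ≥ 1, then its dual degree is at least 1. -/
open Finset

private lemma pair_sum {r : ℕ} (φ : (Fin r → ℝ) →ₗ[ℝ] ℝ) (x : Fin r → ℝ) :
    ∑ k, φ (fun j => if k = j then 1 else 0) * x k = φ x := by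
  rw [LinearMap.pi_apply_eq_sum_univ φ x]
  simp [mul_comm]

/-- If `V` is a pure vector configuration spanning `ℝ^r` with `r ≥ 1`, then its dual degree
is at least `1`: some open halfspace bounded by a linear hyperplane contains at least
`r + 1` elements of `V`. -/
theorem stmt_14 (r n : ℕ) (hr : 1 ≤ r) (V : Fin n → (Fin r → ℝ))
    (hspan : Submodule.span ℝ (Set.range V) = ⊤)
    (hpure : ∀ w : Fin r → ℝ, w ≠ 0 →
      2 ≤ (Finset.univ.filter (fun i => 0 < ∑ k, w k * V i k)).card ∨
      2 ≤ (Finset.univ.filter (fun i => ∑ k, w k * V i k < 0)).card) :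
    ∃ w : Fin r → ℝ, w ≠ 0 ∧
      r + 1 ≤ (Finset.univ.filter (fun i => 0 < ∑ k, w k * V i k)).card := by
  classical
  obtain ⟨s, hsub, hspan', hind⟩ := exists_linearIndependent ℝ (Set.range V)
  rw [hspan] at hspan'
  have hfin : s.Finite := hind.setFinite
  haveI : Fintype s := hfin.fintype
  let b : Module.Basis s ℝ (Fin r → ℝ) := Module.Basis.mk hind (by rw [Subtype.range_coe, hspan'])
  have hcard : Fintype.card s = r := by
    have h1 := Module.finrank_eq_card_basis b
    rw [Module.finrank_fin_fun] at h1
    omega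
  have hsne : Nonempty s := by
    rw [← Fintype.card_pos_iff, hcard]; omega
  obtain ⟨v0⟩ := hsne
  -- coordinate functionals
  have key : ∀ i u : s, b.coord i (u : Fin r → ℝ) = if u = i then 1 else 0 := by
    intro i u
    rw [show (u : Fin r → ℝ) = b u from (Module.Basis.mk_apply hind _ u).symm,
      Module.Basis.coord_apply, Module.Basis.repr_self]
    exact Finsupp.single_apply
  set f : (Fin r → ℝ) →ₗ[ℝ] ℝ := b.coord v0 with hf
  set g : (Fin r → ℝ) →ₗ[ℝ] ℝ := (∑ u : s, b.coord u) - b.coord v0 with hg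
  have hfv0 : f ((v0 : s) : Fin r → ℝ) = 1 := by rw [hf, key]; simp
  have hf0 : ∀ u : s, u ≠ v0 → f (u : Fin r → ℝ) = 0 := by
    intro u hu; rw [hf, key]; simp [hu]
  have hg1 : ∀ u : s, u ≠ v0 → g (u : Fin r → ℝ) = 1 := by
    intro u hu
    rw [hg]
    simp only [LinearMap.sub_apply, LinearMap.coe_sum, Finset.sum_apply]
    rw [key v0 u, if_neg hu]
    have : ∑ i : s, b.coord i (u : Fin r → ℝ) = 1 := by
      simp [key]
    rw [this]; ring
  -- the pairing vector of a functional
  have hvecne : ∀ φ : (Fin r → ℝ) →ₗ[ℝ] ℝ, ∀ x : Fin r → ℝ, φ x ≠ 0 →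
      (fun k => φ (fun j => if k = j then 1 else 0)) ≠ 0 := by
    intro φ x hx h0
    apply hx
    rw [← pair_sum φ x]
    refine Finset.sum_eq_zero fun k _ => ?_
    have : φ (fun j => if k = j then 1 else 0) = 0 := congrFun h0 k
    rw [this, zero_mul]
  -- purity applied to f
  have hwfne : (fun k => f (fun j => if k = j then 1 else 0)) ≠ 0 :=
    hvecne f _ (by rw [hfv0]; norm_num)
  obtain ⟨φ, hφ0, hφ2⟩ :
      ∃ φ : (Fin r → ℝ) →ₗ[ℝ] ℝ, (∀ u : s, u ≠ v0 → φ (u : Fin r → ℝ) = 0) ∧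
        2 ≤ (Finset.univ.filter (fun i => 0 < φ (V i))).card := by
    rcases hpure _ hwfne with h | h
    · refine ⟨f, hf0, ?_⟩
      convert h using 2
      ext i
      simp only [Finset.mem_filter, pair_sum]
    · refine ⟨-f, fun u hu => by simp [hf0 u hu], ?_⟩
      convert h using 2
      ext i
      simp only [Finset.mem_filter, pair_sum, LinearMap.neg_apply, neg_pos]
  obtain ⟨a, ha, b', hb', hab⟩ := Finset.one_lt_card.mp hφ2
  rw [Finset.mem_filter] at ha hb'
  have hpa : 0 < φ (V a) := ha.2
  have hpb : 0 < φ (V b') := hb'.2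
  set qa := g (V a) with hqa
  set qb := g (V b') with hqb
  set N : ℝ := max ((1 + |qa|) / φ (V a)) ((1 + |qb|) / φ (V b')) with hN
  set ψ : (Fin r → ℝ) →ₗ[ℝ] ℝ := N • φ + g with hψ
  have hψa : 0 < ψ (V a) := by
    have h1 : (1 + |qa|) / φ (V a) ≤ N := le_max_left _ _
    have h2 : 1 + |qa| ≤ N * φ (V a) := (div_le_iff₀ hpa).mp h1
    have h3 : -qa ≤ |qa| := neg_le_abs qa
    simp only [hψ, LinearMap.add_apply, LinearMap.smul_apply, smul_eq_mul]
    rw [← hqa]; linarith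
  have hψb : 0 < ψ (V b') := by
    have h1 : (1 + |qb|) / φ (V b') ≤ N := le_max_right _ _
    have h2 : 1 + |qb| ≤ N * φ (V b') := (div_le_iff₀ hpb).mp h1
    have h3 : -qb ≤ |qb| := neg_le_abs qb
    simp only [hψ, LinearMap.add_apply, LinearMap.smul_apply, smul_eq_mul]
    rw [← hqb]; linarith
  have hψu : ∀ u : s, u ≠ v0 → ψ (u : Fin r → ℝ) = 1 := by
    intro u hu
    simp only [hψ, LinearMap.add_apply, LinearMap.smul_apply, smul_eq_mul,
      hφ0 u hu, hg1 u hu, mul_zero, zero_add]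
  -- final vector
  refine ⟨fun k => ψ (fun j => if k = j then 1 else 0),
    hvecne ψ (V a) (ne_of_gt hψa), ?_⟩
  have hfilt : (Finset.univ.filter
      (fun i => 0 < ∑ k, ψ (fun j => if k = j then 1 else 0) * V i k)) =
      Finset.univ.filter (fun i => 0 < ψ (V i)) := by
    apply Finset.filter_congr
    intro i _
    rw [pair_sum ψ (V i)]
  rw [hfilt]
  -- choose preimage indices for elements of s
  have hch : ∀ u : s, ∃ i, V i = (u : Fin r → ℝ) := fun u => hsub u.2
  choose c hc using hch
  have hcinj : Function.Injective c := by
    intro u1 u2 h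
    apply Subtype.ext
    rw [← hc u1, ← hc u2, h]
  set S : Finset (Fin n) := ((Finset.univ.erase v0).image c) ∪ {a, b'} with hS
  have hanotin : a ∉ (Finset.univ.erase v0).image c := by
    intro h
    obtain ⟨u, hu, hcu⟩ := Finset.mem_image.mp h
    have hune : u ≠ v0 := Finset.ne_of_mem_erase hu
    have : φ (V a) = 0 := by rw [← hcu, hc u]; exact hφ0 u hune
    linarith
  have hbnotin : b' ∉ (Finset.univ.erase v0).image c := by
    intro h
    obtain ⟨u, hu, hcu⟩ := Finset.mem_image.mp h
    have hune : u ≠ v0 := Finset.ne_of_mem_erase hu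
    have : φ (V b') = 0 := by rw [← hcu, hc u]; exact hφ0 u hune
    linarith
  have hScard : S.card = r + 1 := by
    rw [hS, Finset.card_union_of_disjoint, Finset.card_image_of_injective _ hcinj,
      Finset.card_erase_of_mem (Finset.mem_univ v0), Finset.card_univ, hcard]
    · rw [Finset.card_insert_of_notMem (by simp [hab]), Finset.card_singleton]
      omega
    · rw [Finset.disjoint_right]
      intro x hx
      rcases Finset.mem_insert.mp hx with h | h
      · rw [h]; exact hanotin
      · rw [Finset.mem_singleton.mp h]; exact hbnotin
  have hSsub : S ⊆ Finset.univ.filter (fun i => 0 < ψ (V i)) := by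
    intro i hi
    rw [Finset.mem_filter]
    refine ⟨Finset.mem_univ i, ?_⟩
    rw [hS, Finset.mem_union] at hi
    rcases hi with h | h
    · obtain ⟨u, hu, hcu⟩ := Finset.mem_image.mp h
      have hune : u ≠ v0 := Finset.ne_of_mem_erase hu
      rw [← hcu, hc u, hψu u hune]
      norm_num
    · rcases Finset.mem_insert.mp h with h | h
      · rw [h]; exact hψa
      · rw [Finset.mem_singleton.mp h]; exact hψb
  calc r + 1 = S.card := hScard.symm
    _ ≤ _ := Finset.card_le_card hSsub
end

section
/- Let V be a pure vector configuration of rank r with dual degree 1. If C is a circuit of V with both C^+ and C^- nonempty, then |C| = r+1. -/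
open Finset

namespace Stmt15Aux

variable {r n : ℕ}

def dot (w v : Fin r → ℝ) : ℝ := ∑ k, w k * v k

def dotl (w : Fin r → ℝ) : (Fin r → ℝ) →ₗ[ℝ] ℝ where
  toFun v := dot w v
  map_add' x y := by simp [dot, mul_add, Finset.sum_add_distrib]
  map_smul' c x := by simp [dot, Finset.mul_sum]; ring_nf; simp [mul_comm, mul_left_comm]

@[simp] lemma dotl_apply (w v : Fin r → ℝ) : dotl w v = dot w v := rfl

lemma dot_add_smul (w f v : Fin r → ℝ) (ε : ℝ) :
    dot (w + ε • f) v = dot w v + ε * dot f v := by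
  simp [dot, Finset.mul_sum, ← Finset.sum_add_distrib, add_mul, mul_assoc]

lemma dot_neg (u v : Fin r → ℝ) : dot (-u) v = - dot u v := by
  simp [dot, ← Finset.sum_neg_distrib]

lemma dot_zero' (v : Fin r → ℝ) : dot (0 : Fin r → ℝ) v = 0 := by simp [dot]

lemma exists_vec (φ : (Fin r → ℝ) →ₗ[ℝ] ℝ) : ∃ w : Fin r → ℝ, ∀ v, dot w v = φ v := by
  refine ⟨fun k => φ (Pi.single k 1), fun v => ?_⟩
  have hv : v = ∑ k, v k • (Pi.single k (1:ℝ) : Fin r → ℝ) := by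
    funext j
    simp [Finset.sum_apply, Pi.single_apply, mul_comm]
  conv_rhs => rw [hv]
  rw [map_sum]
  simp [dot, smul_eq_mul, mul_comm]

lemma separation (p : Submodule ℝ (Fin r → ℝ)) (v : Fin r → ℝ) (hv : v ∉ p) :
    ∃ u : Fin r → ℝ, (∀ x ∈ p, dot u x = 0) ∧ dot u v ≠ 0 := by
  have h1 : (Submodule.Quotient.mk v : (Fin r → ℝ) ⧸ p) ≠ 0 := by
    simpa [Submodule.Quotient.mk_eq_zero] using hv
  have h2 : ¬ (∀ φ : Module.Dual ℝ ((Fin r → ℝ) ⧸ p), φ (Submodule.Quotient.mk v) = 0) := by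
    rw [Module.forall_dual_apply_eq_zero_iff]; exact h1
  push_neg at h2
  obtain ⟨ψ, hψ⟩ := h2
  obtain ⟨u, hu⟩ := exists_vec (ψ.comp p.mkQ)
  refine ⟨u, fun x hx => ?_, ?_⟩
  · rw [hu]
    simp [(Submodule.Quotient.mk_eq_zero p).2 hx, Submodule.mkQ_apply]
  · rw [hu]; exact hψ

noncomputable def posF (V : Fin n → Fin r → ℝ) (w : Fin r → ℝ) : Finset (Fin n) :=
  univ.filter (fun i => 0 < dot w (V i))

noncomputable def negF (V : Fin n → Fin r → ℝ) (w : Fin r → ℝ) : Finset (Fin n) :=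
  univ.filter (fun i => dot w (V i) < 0)

noncomputable def zplusF (V : Fin n → Fin r → ℝ) (w f : Fin r → ℝ) : Finset (Fin n) :=
  univ.filter (fun i => dot w (V i) = 0 ∧ 0 < dot f (V i))

lemma posF_neg_eq (V : Fin n → Fin r → ℝ) (u : Fin r → ℝ) : posF V (-u) = negF V u := by
  ext i
  simp [posF, negF, dot_neg, neg_pos]

lemma pl (V : Fin n → Fin r → ℝ) (w f : Fin r → ℝ) :
    ∃ ε : ℝ, 0 < ε ∧ posF V w ∪ zplusF V w f ⊆ posF V (w + ε • f) := by
  classical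
  by_cases h : (posF V w).Nonempty
  · set ε := min 1 ((posF V w).inf' h fun i => dot w (V i) / (1 + |dot f (V i)|)) with hε
    have hεpos : 0 < ε := by
      apply lt_min one_pos
      rw [Finset.lt_inf'_iff]
      intro i hi
      have : 0 < dot w (V i) := by simpa [posF] using hi
      positivity
    refine ⟨ε, hεpos, fun i hi => ?_⟩
    simp only [posF, zplusF, Finset.mem_union, Finset.mem_filter, Finset.mem_univ, true_and] at hi ⊢
    rw [dot_add_smul]
    rcases hi with hi | ⟨hz, hf⟩
    · have hb : ε ≤ dot w (V i) / (1 + |dot f (V i)|) := by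
        refine le_trans (min_le_right _ _) ?_
        exact Finset.inf'_le _ (by simp [posF, hi])
      have hd : (0:ℝ) < 1 + |dot f (V i)| := by positivity
      rw [le_div_iff₀ hd] at hb
      have h3 : -|dot f (V i)| ≤ dot f (V i) := neg_abs_le _
      nlinarith
    · rw [hz, zero_add]
      exact mul_pos hεpos hf
  · refine ⟨1, one_pos, fun i hi => ?_⟩
    simp only [posF, zplusF, Finset.mem_union, Finset.mem_filter, Finset.mem_univ, true_and] at hi ⊢
    rw [dot_add_smul]
    rcases hi with hi | ⟨hz, hf⟩
    · exact absurd ⟨i, by simp [posF, hi]⟩ h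
    · rw [hz]; simpa using hf

lemma pl_card (V : Fin n → Fin r → ℝ) {N : ℕ} (w f : Fin r → ℝ)
    (hb : ∀ ε : ℝ, 0 < ε → (posF V (w + ε • f)).card ≤ N) :
    (posF V w).card + (zplusF V w f).card ≤ N := by
  obtain ⟨ε, hε, hsub⟩ := pl V w f
  have hdisj : Disjoint (posF V w) (zplusF V w f) := by
    rw [Finset.disjoint_left]
    intro i hi hiz
    simp only [posF, Finset.mem_filter] at hi
    simp only [zplusF, Finset.mem_filter] at hiz
    exact absurd hiz.2.1 (ne_of_gt hi.2)
  calc (posF V w).card + (zplusF V w f).card = (posF V w ∪ zplusF V w f).card :=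
        (Finset.card_union_of_disjoint hdisj).symm
    _ ≤ (posF V (w + ε • f)).card := Finset.card_le_card hsub
    _ ≤ N := hb ε hε

end Stmt15Aux

open Stmt15Aux

set_option maxHeartbeats 2000000 in
/-- Let `V` be a pure vector configuration spanning `ℝ^r` with dual degree `1`. If `C` is a
circuit of `V` (support of an inclusion-minimal nonzero linear dependence) with both
positive and negative part nonempty, then `|C| = r + 1`. -/
theorem stmt_15 (r n : ℕ) (V : Fin n → (Fin r → ℝ))
    (hspan : Submodule.span ℝ (Set.range V) = ⊤)
    (hpure : ∀ w : Fin r → ℝ, w ≠ 0 →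
      2 ≤ (Finset.univ.filter (fun i => 0 < ∑ k, w k * V i k)).card ∨
      2 ≤ (Finset.univ.filter (fun i => ∑ k, w k * V i k < 0)).card)
    (hdeg1 : ∀ w : Fin r → ℝ,
      (Finset.univ.filter (fun i => 0 < ∑ k, w k * V i k)).card ≤ r + 1)
    (hdeg2 : ∃ w : Fin r → ℝ, w ≠ 0 ∧
      (Finset.univ.filter (fun i => 0 < ∑ k, w k * V i k)).card = r + 1)
    (C : Finset (Fin n)) (l : Fin n → ℝ)
    (hsupp : ∀ i, l i ≠ 0 ↔ i ∈ C)
    (hdep : ∑ i, l i • V i = 0)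
    (hmin : ∀ m : Fin n → ℝ, (∑ i, m i • V i = 0) → (∀ i, m i ≠ 0 → i ∈ C) →
      (m = 0 ∨ ∀ i ∈ C, m i ≠ 0))
    (hCpos : ∃ i ∈ C, 0 < l i) (hCneg : ∃ i ∈ C, l i < 0) :
    C.card = r + 1 := by
  classical
  have hpure' : ∀ w : Fin r → ℝ, w ≠ 0 → 2 ≤ (posF V w).card ∨ 2 ≤ (negF V w).card := hpure
  have hdeg1' : ∀ w : Fin r → ℝ, (posF V w).card ≤ r + 1 := hdeg1
  obtain ⟨i0, hi0C, hi0pos⟩ := hCpos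
  obtain ⟨ineg, hinegC, hinegneg⟩ := hCneg
  set B : Finset (Fin n) := C.erase i0 with hB
  have hinegB : ineg ∈ B := Finset.mem_erase.2 ⟨fun h => by rw [h] at hinegneg; linarith, hinegC⟩
  have hi0nB : i0 ∉ B := Finset.notMem_erase _ _
  have hBcard : B.card + 1 = C.card := by
    rw [hB, Finset.card_erase_of_mem hi0C]
    have : 1 ≤ C.card := Finset.card_pos.2 ⟨i0, hi0C⟩
    omega
  have hl0 : ∀ i, i ∉ C → l i = 0 := by
    intro i hi
    by_contra h
    exact hi ((hsupp i).1 h)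
  -- pairing with the dependence
  have hpair : ∀ w : Fin r → ℝ, ∑ i ∈ C, l i * dot w (V i) = 0 := by
    intro w
    have h0 : dotl w (∑ i, l i • V i) = 0 := by rw [hdep]; simp [dot]
    rw [map_sum] at h0
    simp only [map_smul, smul_eq_mul, dotl_apply] at h0
    rw [← h0]
    refine Finset.sum_subset (Finset.subset_univ C) (fun x _ hx => ?_)
    rw [hl0 x hx, zero_mul]
  have hCeq : ∀ i ∈ C, i = i0 ∨ i ∈ B := by
    intro i hi
    by_cases h : i = i0
    · exact Or.inl h
    · exact Or.inr (Finset.mem_erase.2 ⟨h, hi⟩)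
  have hA_of_B : ∀ w : Fin r → ℝ, (∀ j ∈ B, dot w (V j) = 0) → ∀ i ∈ C, dot w (V i) = 0 := by
    intro w hBz i hi
    have h := hpair w
    rw [← Finset.insert_erase hi0C, Finset.sum_insert (Finset.notMem_erase _ _)] at h
    have hBsum : ∑ j ∈ C.erase i0, l j * dot w (V j) = 0 :=
      Finset.sum_eq_zero fun j hj => by rw [hBz j hj, mul_zero]
    rw [hBsum, add_zero] at h
    have h0 : dot w (V i0) = 0 := by
      rcases mul_eq_zero.1 h with h' | h'
      · exact absurd h' (ne_of_gt hi0pos)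
      · exact h'
    rcases hCeq i hi with rfl | hiB
    · exact h0
    · exact hBz i hiB
  -- linear independence of the B-family
  have hliB : LinearIndependent ℝ (fun j : ↥B => V ↑j) := by
    rw [Fintype.linearIndependent_iff]
    intro g hg
    set m : Fin n → ℝ := fun i => if h : i ∈ B then g ⟨i, h⟩ else 0 with hm
    have hsum : ∑ i, m i • V i = 0 := by
      have h1 : ∑ i ∈ B, m i • V i = ∑ i, m i • V i := by
        refine Finset.sum_subset (Finset.subset_univ B) (fun x _ hx => ?_)
        simp [hm, dif_neg hx]
      have h2 : ∑ i ∈ B, m i • V i = ∑ j : ↥B, g j • V ↑j := by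
        rw [← Finset.sum_coe_sort]
        refine Finset.sum_congr rfl (fun j _ => ?_)
        simp [hm, dif_pos j.2]
      rw [← h1, h2, hg]
    rcases hmin m hsum (fun i hi => by
      by_contra hiC
      have : i ∉ B := fun h => hiC (Finset.mem_of_mem_erase h)
      exact hi (by simp [hm, dif_neg this])) with h | h
    · intro j
      have := congrFun h ↑j
      simpa [hm, dif_pos j.2] using this
    · exact absurd (by simp [hm, dif_neg hi0nB] : m i0 = 0) (h i0 hi0C)
  have hBr : B.card ≤ r := by
    have := hliB.fintype_card_le_finrank
    rwa [Module.finrank_fintype_fun_eq_card, Fintype.card_fin, Fintype.card_coe] at this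
  have hCub : C.card ≤ r + 1 := by omega
  rcases Nat.lt_or_ge C.card (r + 1) with hc | hc
  swap
  · omega
  -- now C.card ≤ r ; derive False
  exfalso
  -- construct f with dot f (V i) > 0 for all i ∈ C
  obtain ⟨f, hfC⟩ : ∃ f : Fin r → ℝ, ∀ i ∈ C, 0 < dot f (V i) := by
    set s : ℝ := ∑ j ∈ B.erase ineg, l j with hs
    set ε0 : ℝ := (-l ineg) / (2 * (1 + |s|)) with hε0
    have hε0pos : 0 < ε0 := by
      apply div_pos (by linarith) (by positivity)
    set t : Fin n → ℝ := fun j => if j = ineg then 1 else ε0 with ht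
    have htpos : ∀ j, 0 < t j := by
      intro j
      rw [ht]
      dsimp only
      split
      · exact one_pos
      · exact hε0pos
    obtain ⟨φ, hφ⟩ := LinearMap.exists_extend ((Module.Basis.span hliB).constr ℝ (fun j : ↥B => t ↑j))
    obtain ⟨f, hf⟩ := exists_vec φ
    have hfB : ∀ j, (hj : j ∈ B) → dot f (V j) = t j := by
      intro j hj
      have h1 : ((Module.Basis.span hliB ⟨j, hj⟩ :
          Submodule.span ℝ (Set.range fun j : ↥B => V ↑j)) : Fin r → ℝ) = V j :=
        congrArg Subtype.val (Module.Basis.span_apply hliB ⟨j, hj⟩)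
      rw [hf]
      conv_lhs => rw [← h1]
      have h2 := congrFun (congrArg DFunLike.coe hφ) (Module.Basis.span hliB ⟨j, hj⟩)
      rw [Module.Basis.constr_basis] at h2
      simpa using h2
    have hp := hpair f
    rw [← Finset.insert_erase hi0C, Finset.sum_insert (Finset.notMem_erase _ _), ← hB] at hp
    have hBsum : ∑ j ∈ B, l j * dot f (V j) = l ineg + ε0 * s := by
      have hcg : ∀ j ∈ B, l j * dot f (V j) = l j * t j := fun j hj => by rw [hfB j hj]
      rw [Finset.sum_congr rfl hcg, ← Finset.insert_erase hinegB,
        Finset.sum_insert (Finset.notMem_erase _ _)]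
      have hcg2 : ∀ j ∈ B.erase ineg, l j * t j = ε0 * l j := by
        intro j hj
        have hne : j ≠ ineg := (Finset.mem_erase.1 hj).1
        rw [ht]
        dsimp only
        rw [if_neg hne, mul_comm]
      rw [Finset.sum_congr rfl hcg2, ← Finset.mul_sum, ← hs, ht]
      simp
    have hεs : l ineg + ε0 * s < 0 := by
      have h1 : ε0 * s ≤ ε0 * |s| := mul_le_mul_of_nonneg_left (le_abs_self s) hε0pos.le
      have h2 : ε0 * (2 * (1 + |s|)) = -l ineg := by
        rw [hε0]
        field_simp
      nlinarith [abs_nonneg s]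
    rw [hBsum] at hp
    have hi0val : 0 < dot f (V i0) := by nlinarith
    refine ⟨f, fun i hi => ?_⟩
    rcases hCeq i hi with rfl | hiB
    · exact hi0val
    · rw [hfB i hiB]
      exact htpos i
  -- the q-bound
  have hq : ∀ w : Fin r → ℝ, (∀ i ∈ C, dot w (V i) = 0) →
      (posF V w).card + C.card ≤ r + 1 := by
    intro w hw
    have hsub : C ⊆ zplusF V w f := by
      intro i hi
      simp only [zplusF, Finset.mem_filter, Finset.mem_univ, true_and]
      exact ⟨hw i hi, hfC i hi⟩
    have := pl_card V w f (fun ε _ => hdeg1' _)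
    have := Finset.card_le_card hsub
    omega
  -- the maximum M
  set Kset : Set ℕ := {k | ∃ w : Fin r → ℝ, (∀ i ∈ C, dot w (V i) = 0) ∧ (posF V w).card = k}
    with hKset
  have hKne : Kset.Nonempty := by
    refine ⟨(posF V 0).card, 0, fun i _ => dot_zero' _, rfl⟩
  have hKbdd : BddAbove Kset := by
    refine ⟨r + 1, fun k hk => ?_⟩
    obtain ⟨w, hw, rfl⟩ := hk
    exact le_trans (Nat.le_add_right _ _) (hq w hw)
  obtain ⟨w1, hw1A, hw1card⟩ : ∃ w : Fin r → ℝ, (∀ i ∈ C, dot w (V i) = 0) ∧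
      (posF V w).card = sSup Kset := Nat.sSup_mem hKne hKbdd
  have hmax : ∀ w : Fin r → ℝ, (∀ i ∈ C, dot w (V i) = 0) →
      (posF V w).card ≤ (posF V w1).card :=
    fun w hw => hw1card ▸ le_csSup hKbdd ⟨w, hw, rfl⟩
  clear hw1card
  -- closure facts
  have hWA_add : ∀ (w g : Fin r → ℝ) (ε : ℝ), (∀ i ∈ C, dot w (V i) = 0) →
      (∀ i ∈ C, dot g (V i) = 0) → (∀ i ∈ C, dot (w + ε • g) (V i) = 0) := by
    intro w g ε hw hg i hi
    rw [dot_add_smul, hw i hi, hg i hi, mul_zero, add_zero]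
  have hWA_neg : ∀ (g : Fin r → ℝ), (∀ i ∈ C, dot g (V i) = 0) →
      (∀ i ∈ C, dot (-g) (V i) = 0) := by
    intro g hg i hi
    rw [dot_neg, hg i hi, neg_zero]
  set LB : Submodule ℝ (Fin r → ℝ) := Submodule.span ℝ (V '' ↑B) with hLB
  have hmemLB : ∀ j ∈ B, V j ∈ LB := fun j hj =>
    Submodule.subset_span (Set.mem_image_of_mem V (Finset.mem_coe.2 hj))
  have hkills : ∀ u : Fin r → ℝ, (∀ j ∈ B, dot u (V j) = 0) → ∀ x ∈ LB, dot u x = 0 := by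
    intro u hu x hx
    have : LB ≤ LinearMap.ker (dotl u) := by
      rw [hLB, Submodule.span_le]
      rintro y ⟨j, hj, rfl⟩
      simpa [LinearMap.mem_ker] using hu j (Finset.mem_coe.1 hj)
    simpa [LinearMap.mem_ker] using this hx
  -- Claim 1
  have hclaim1 : ∀ i, dot w1 (V i) = 0 → V i ∈ LB := by
    intro i hi
    by_contra hnot
    obtain ⟨u, hukill, huv⟩ := separation LB (V i) hnot
    have huB : ∀ j ∈ B, dot u (V j) = 0 := fun j hj => hukill _ (hmemLB j hj)
    have huA : ∀ j ∈ C, dot u (V j) = 0 := hA_of_B u huB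
    set g : Fin r → ℝ := if 0 < dot u (V i) then u else -u with hg
    have hgA : ∀ j ∈ C, dot g (V j) = 0 := by
      rw [hg]; split
      · exact huA
      · exact hWA_neg u huA
    have hgi : 0 < dot g (V i) := by
      rw [hg]; split
      · assumption
      · rename_i h
        rw [dot_neg]
        rcases lt_or_gt_of_ne huv with h' | h'
        · linarith
        · exact absurd h' h
    have hple := pl_card V w1 g (fun ε hε => hmax _ (hWA_add w1 g ε hw1A hgA))
    have : i ∈ zplusF V w1 g := by
      simp only [zplusF, Finset.mem_filter, Finset.mem_univ, true_and]
      exact ⟨hi, hgi⟩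
    have h1 : 1 ≤ (zplusF V w1 g).card := Finset.card_pos.2 ⟨i, this⟩
    omega
  have hSw1 : ∀ i ∈ posF V w1, 0 < dot w1 (V i) := by
    intro i hi
    simpa [posF] using hi
  have hdisjBS : Disjoint B (posF V w1) := by
    rw [Finset.disjoint_left]
    intro j hj hjS
    have := hw1A j (Finset.mem_of_mem_erase hj)
    have := hSw1 j hjS
    linarith
  set D : Finset (Fin n) := B ∪ posF V w1 with hD
  by_cases hT : Submodule.span ℝ (V '' ↑D) = ⊤
  · -- case (b)
    have hDcard : D.card = B.card + (posF V w1).card := by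
      rw [hD, Finset.card_union_of_disjoint hdisjBS]
    have hrD : r ≤ D.card := by
      have h1 := finrank_span_finset_le_card (R := ℝ) (D.image V)
      have h2 : ((D.image V : Finset (Fin r → ℝ)) : Set (Fin r → ℝ)) = V '' ↑D :=
        Finset.coe_image
      rw [Set.finrank, h2, hT, finrank_top, Module.finrank_fintype_fun_eq_card,
        Fintype.card_fin] at h1
      exact le_trans h1 (Finset.card_image_le)
    have hMq : (posF V w1).card + C.card ≤ r + 1 := hq w1 hw1A
    have hDr : D.card = r := by omega
    have hM1 : 1 ≤ (posF V w1).card := by omega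
    have hSne : (posF V w1).Nonempty := Finset.card_pos.1 (by omega)
    obtain ⟨i1, hi1S⟩ := hSne
    have hi1D : i1 ∈ D := Finset.mem_union_right _ hi1S
    have hle_span : ⊤ ≤ Submodule.span ℝ (Set.range fun j : ↥D => V ↑j) := by
      have hr : (Set.range fun j : ↥D => V ↑j) = V '' ↑D := by
        ext x
        simp [Set.mem_image]
      rw [hr]
      exact le_of_eq hT.symm
    have hcard_eq : Fintype.card ↥D = Module.finrank ℝ (Fin r → ℝ) := by
      rw [Fintype.card_coe, hDr, Module.finrank_fintype_fun_eq_card, Fintype.card_fin]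
    set bD := basisOfTopLeSpanOfCardEqFinrank (fun j : ↥D => V ↑j) hle_span hcard_eq with hbD
    obtain ⟨u, hu⟩ := exists_vec (bD.coord ⟨i1, hi1D⟩)
    have hu_on_D : ∀ j, (hj : j ∈ D) → dot u (V j) = if j = i1 then 1 else 0 := by
      intro j hj
      rw [hu]
      have hbj : bD ⟨j, hj⟩ = V j := by
        rw [hbD]
        exact congrFun (coe_basisOfTopLeSpanOfCardEqFinrank _ hle_span hcard_eq) ⟨j, hj⟩
      rw [← hbj, Module.Basis.coord_apply, Module.Basis.repr_self, Finsupp.single_apply]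
      by_cases h : j = i1
      · simp [h]
      · simp [h, Subtype.ext_iff]
    have hui1 : dot u (V i1) = 1 := by
      rw [hu_on_D i1 hi1D]; simp
    have hu_nz : u ≠ 0 := by
      intro h
      rw [h, dot_zero'] at hui1
      linarith
    have huB : ∀ j ∈ B, dot u (V j) = 0 := by
      intro j hj
      rw [hu_on_D j (Finset.mem_union_left _ hj)]
      have : j ≠ i1 := fun h => by
        rw [h] at hj
        exact Finset.disjoint_left.1 hdisjBS hj hi1S
      simp [this]
    have huA : ∀ i ∈ C, dot u (V i) = 0 := hA_of_B u huB
    -- subclaim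
    have hTneg : ∀ i, dot w1 (V i) < 0 → dot u (V i) ≤ 0 := by
      intro i hi
      by_contra h
      push_neg at h
      set s0 : ℝ := (1 - dot w1 (V i)) / dot u (V i) with hs0
      have hs0pos : 0 < s0 := by
        apply div_pos
        · linarith
        · exact h
      have hsub : insert i (posF V w1) ⊆ posF V (w1 + s0 • u) := by
        intro j hj
        simp only [posF, Finset.mem_filter, Finset.mem_univ, true_and]
        rw [dot_add_smul]
        rcases Finset.mem_insert.1 hj with rfl | hjS
        · rw [hs0, div_mul_cancel₀ _ (ne_of_gt h)]
          linarith
        · have h1 := hSw1 j hjS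
          rcases eq_or_ne j i1 with rfl | hne
          · rw [hui1]
            nlinarith
          · rw [hu_on_D j (Finset.mem_union_right _ hjS)]
            simp [hne]
            linarith
      have hiS : i ∉ posF V w1 := by
        intro hiS
        have := hSw1 i hiS
        linarith
      have hcard := Finset.card_le_card hsub
      rw [Finset.card_insert_of_notMem hiS] at hcard
      have := hmax _ (hWA_add w1 u s0 hw1A huA)
      omega
    have hposu : posF V u ⊆ {i1} := by
      intro i hi
      simp only [posF, Finset.mem_filter, Finset.mem_univ, true_and] at hi
      rcases lt_trichotomy (dot w1 (V i)) 0 with h | h | h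
      · exact absurd (hTneg i h) (not_le.2 hi)
      · have := hkills u huB _ (hclaim1 i h)
        linarith
      · have hiS : i ∈ posF V w1 := by simpa [posF] using h
        rcases eq_or_ne i i1 with rfl | hne
        · exact Finset.mem_singleton_self _
        · have := hu_on_D i (Finset.mem_union_right _ hiS)
          simp [hne] at this
          linarith
    have hnegu : (negF V u).card ≤ 1 := by
      have hsub : (posF V w1).erase i1 ⊆ zplusF V (-u) w1 := by
        intro j hj
        obtain ⟨hne, hjS⟩ := Finset.mem_erase.1 hj
        simp only [zplusF, Finset.mem_filter, Finset.mem_univ, true_and]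
        constructor
        · rw [dot_neg, hu_on_D j (Finset.mem_union_right _ hjS)]
          simp [hne]
        · exact hSw1 j hjS
      have huAneg := hWA_neg u huA
      have hple := pl_card V (-u) w1 (fun ε hε => hmax _ (hWA_add (-u) w1 ε huAneg hw1A))
      have h1 := Finset.card_le_card hsub
      rw [Finset.card_erase_of_mem hi1S] at h1
      rw [← posF_neg_eq]
      omega
    have hposu1 : (posF V u).card ≤ 1 := le_trans (Finset.card_le_card hposu) (by simp)
    rcases hpure' u hu_nz with h | h <;> omega
  · -- case (a)
    have hex : ∃ v, v ∉ Submodule.span ℝ (V '' ↑D) := by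
      by_contra h
      push_neg at h
      exact hT (Submodule.eq_top_iff'.2 h)
    obtain ⟨v, hv⟩ := hex
    obtain ⟨u, hukill, huv⟩ := separation _ v hv
    have hu_nz : u ≠ 0 := by
      intro h
      rw [h, dot_zero'] at huv
      exact huv rfl
    have huD : ∀ j ∈ D, dot u (V j) = 0 := fun j hj =>
      hukill _ (Submodule.subset_span (Set.mem_image_of_mem V (Finset.mem_coe.2 hj)))
    have huB : ∀ j ∈ B, dot u (V j) = 0 := fun j hj => huD j (Finset.mem_union_left _ hj)
    have huA : ∀ i ∈ C, dot u (V i) = 0 := hA_of_B u huB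
    have hSzp : ∀ (g : Fin r → ℝ), (∀ j ∈ D, dot g (V j) = 0) →
        posF V w1 ⊆ zplusF V g w1 := by
      intro g hg i hi
      simp only [zplusF, Finset.mem_filter, Finset.mem_univ, true_and]
      exact ⟨hg i (Finset.mem_union_right _ hi), hSw1 i hi⟩
    have hpos0 : (posF V u).card = 0 := by
      have hple := pl_card V u w1 (fun ε hε => hmax _ (hWA_add u w1 ε huA hw1A))
      have h1 := Finset.card_le_card (hSzp u huD)
      omega
    have hneg0 : (negF V u).card = 0 := by
      have huAneg := hWA_neg u huA
      have huDneg : ∀ j ∈ D, dot (-u) (V j) = 0 := fun j hj => by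
        rw [dot_neg, huD j hj, neg_zero]
      have hple := pl_card V (-u) w1 (fun ε hε => hmax _ (hWA_add (-u) w1 ε huAneg hw1A))
      have h1 := Finset.card_le_card (hSzp (-u) huDneg)
      rw [← posF_neg_eq]
      omega
    rcases hpure' u hu_nz with h | h <;> omega
end

section
/- If V is a pure vector configuration of rank r ≥ 2 and dual degree 1, then V has no repeated nonzero vectors. -/
open Finset

namespace Stmt16Aux

variable {r n : ℕ}

/-- The pairing functional `x ↦ ∑ t, x t * y t`, linear in `x`. -/
def pairF (y : Fin r → ℝ) : (Fin r → ℝ) →ₗ[ℝ] ℝ where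
  toFun x := ∑ t, x t * y t
  map_add' a b := by simp [add_mul, Finset.sum_add_distrib]
  map_smul' c a := by simp [Finset.mul_sum, mul_assoc]

lemma pairF_apply (y x : Fin r → ℝ) : pairF y x = ∑ t, x t * y t := rfl

lemma sum_add_smul (V : Fin n → Fin r → ℝ) (w u : Fin r → ℝ) (ε : ℝ) (k : Fin n) :
    ∑ t, (w + ε • u) t * V k t = (∑ t, w t * V k t) + ε * ∑ t, u t * V k t := by
  simp [add_mul, Finset.sum_add_distrib, Finset.mul_sum, mul_assoc]

lemma sum_neg (V : Fin n → Fin r → ℝ) (w : Fin r → ℝ) (k : Fin n) :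
    ∑ t, (-w) t * V k t = -∑ t, w t * V k t := by
  simp [Finset.sum_neg_distrib]

lemma pert (V : Fin n → Fin r → ℝ) (w u : Fin r → ℝ) :
    ∃ ε : ℝ, 0 < ε ∧ ∀ k : Fin n, 0 < ∑ t, w t * V k t →
      0 < ∑ t, (w + ε • u) t * V k t := by
  classical
  set S := univ.filter (fun k : Fin n => 0 < ∑ t, w t * V k t) with hS
  by_cases hne : S.Nonempty
  · set δ := S.inf' hne (fun k => ∑ t, w t * V k t) with hδdef
    set C := S.sup' hne (fun k => |∑ t, u t * V k t|) with hCdef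
    have hδ : 0 < δ := by
      rw [hδdef, Finset.lt_inf'_iff]
      intro k hk
      exact (mem_filter.mp hk).2
    have hC : 0 ≤ C := by
      rw [hCdef]
      obtain ⟨k, hk⟩ := hne
      exact le_trans (abs_nonneg (∑ t, u t * V k t)) (Finset.le_sup' (fun k => |∑ t, u t * V k t|) hk)
    have hC1 : (0:ℝ) < C + 1 := by linarith
    refine ⟨δ / (C + 1), div_pos hδ hC1, ?_⟩
    intro k hk
    have hkS : k ∈ S := mem_filter.mpr ⟨mem_univ k, hk⟩
    have h1 : δ ≤ ∑ t, w t * V k t := Finset.inf'_le _ hkS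
    have h2 : |∑ t, u t * V k t| ≤ C := by
      rw [hCdef]; exact Finset.le_sup' (fun k => |∑ t, u t * V k t|) hkS
    have h3 : -C ≤ ∑ t, u t * V k t := by
      have := neg_abs_le (∑ t, u t * V k t); linarith
    rw [sum_add_smul]
    have hε : 0 < δ / (C + 1) := div_pos hδ hC1
    have h4 : δ / (C + 1) * (C + 1) = δ := div_mul_cancel₀ _ (ne_of_gt hC1)
    nlinarith [mul_nonneg hε.le (by linarith : (0:ℝ) ≤ (∑ t, u t * V k t) + C)]
  · exact ⟨1, one_pos, fun k hk =>
      (hne ⟨k, mem_filter.mpr ⟨mem_univ k, hk⟩⟩).elim⟩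

lemma dim_inf_ker {E : Type*} [AddCommGroup E] [Module ℝ E] [FiniteDimensional ℝ E]
    (W : Submodule ℝ E) (f : E →ₗ[ℝ] ℝ) {w₁ : E} (hw₁W : w₁ ∈ W) (hne : f w₁ ≠ 0) :
    Module.finrank ℝ ↥(W ⊓ LinearMap.ker f) + 1 = Module.finrank ℝ ↥W := by
  have hrn := LinearMap.finrank_range_add_finrank_ker (f.domRestrict W)
  have hrange : LinearMap.range (f.domRestrict W) = ⊤ := by
    rw [Submodule.eq_top_iff']
    intro x
    have hc : f w₁ ∈ LinearMap.range (f.domRestrict W) := ⟨⟨w₁, hw₁W⟩, rfl⟩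
    have := Submodule.smul_mem _ (x / f w₁) hc
    rwa [smul_eq_mul, div_mul_cancel₀ _ hne] at this
  have hker : LinearMap.ker (f.domRestrict W) =
      Submodule.comap W.subtype (LinearMap.ker f) := LinearMap.ker_domRestrict W f
  have e := LinearEquiv.finrank_eq
    (Submodule.equivSubtypeMap W (Submodule.comap W.subtype (LinearMap.ker f)))
  rw [Submodule.map_comap_subtype] at e
  rw [hrange, hker] at hrn
  rw [finrank_top] at hrn
  rw [Module.finrank_self] at hrn
  omega

lemma key (V : Fin n → Fin r → ℝ)
    (hpure : ∀ w : Fin r → ℝ, w ≠ 0 →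
      2 ≤ (Finset.univ.filter (fun i => 0 < ∑ k, w k * V i k)).card ∨
      2 ≤ (Finset.univ.filter (fun i => ∑ k, w k * V i k < 0)).card) :
    ∀ m : ℕ, ∀ W : Submodule ℝ (Fin r → ℝ), Module.finrank ℝ ↥W = m + 1 →
      (∀ w ∈ W, (∀ k, ∑ t, w t * V k t = 0) → w = 0) →
      ∃ w ∈ W, m + 2 ≤ (Finset.univ.filter (fun i => 0 < ∑ k, w k * V i k)).card := by
  intro m
  induction m with
  | zero =>
    intro W hW hsp
    obtain ⟨w₀, hw₀W, hw₀⟩ : ∃ w₀ ∈ W, w₀ ≠ 0 := by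
      have hpos : 0 < Module.finrank ℝ ↥W := by omega
      obtain ⟨x, hx⟩ := Module.finrank_pos_iff_exists_ne_zero.mp hpos
      exact ⟨(x : Fin r → ℝ), x.2, fun h => hx (Subtype.ext h)⟩
    rcases hpure w₀ hw₀ with h | h
    · exact ⟨w₀, hw₀W, h⟩
    · refine ⟨-w₀, W.neg_mem hw₀W, ?_⟩
      have heq : (Finset.univ.filter (fun i => 0 < ∑ k, (-w₀) k * V i k)) =
          (Finset.univ.filter (fun i => ∑ k, w₀ k * V i k < 0)) := by
        apply Finset.filter_congr
        intro k _
        rw [sum_neg]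
        simp [neg_pos]
      rw [heq]
      exact h
  | succ m ih =>
    intro W hW hsp
    obtain ⟨w₁, hw₁W, hw₁⟩ : ∃ w₁ ∈ W, w₁ ≠ 0 := by
      have hpos : 0 < Module.finrank ℝ ↥W := by omega
      obtain ⟨x, hx⟩ := Module.finrank_pos_iff_exists_ne_zero.mp hpos
      exact ⟨(x : Fin r → ℝ), x.2, fun h => hx (Subtype.ext h)⟩
    obtain ⟨k₀, hk₀⟩ : ∃ k₀, ∑ t, w₁ t * V k₀ t ≠ 0 := by
      by_contra h
      push_neg at h
      exact hw₁ (hsp w₁ hw₁W h)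
    set f : (Fin r → ℝ) →ₗ[ℝ] ℝ := pairF (V k₀) with hf
    have hfw₁ : f w₁ ≠ 0 := hk₀
    have hdim := dim_inf_ker W f hw₁W hfw₁
    have hW' : Module.finrank ℝ ↥(W ⊓ LinearMap.ker f) = m + 1 := by omega
    obtain ⟨w, hwW', hcard⟩ := ih (W ⊓ LinearMap.ker f) hW'
      (fun w hw hz => hsp w (Submodule.mem_inf.mp hw).1 hz)
    have hwW : w ∈ W := (Submodule.mem_inf.mp hwW').1
    have hwker : ∑ t, w t * V k₀ t = 0 := (Submodule.mem_inf.mp hwW').2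
    set u : Fin r → ℝ := if 0 < f w₁ then w₁ else -w₁ with hu
    have huW : u ∈ W := by
      rw [hu]; split
      · exact hw₁W
      · exact W.neg_mem hw₁W
    have hupos : 0 < ∑ t, u t * V k₀ t := by
      rw [hu]; split
      · next h => exact h
      · next h =>
        rw [sum_neg]
        push_neg at h
        have : f w₁ < 0 := lt_of_le_of_ne h hfw₁
        have : (∑ t, w₁ t * V k₀ t) < 0 := this
        linarith
    obtain ⟨ε, hε, hpert⟩ := pert V w u
    refine ⟨w + ε • u, W.add_mem hwW (W.smul_mem ε huW), ?_⟩
    have hk₀new : 0 < ∑ t, (w + ε • u) t * V k₀ t := by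
      rw [sum_add_smul, hwker, zero_add]
      exact mul_pos hε hupos
    have hk₀old : k₀ ∉ Finset.univ.filter (fun i => 0 < ∑ k, w k * V i k) := by
      simp [hwker]
    have hsubset : insert k₀ (Finset.univ.filter (fun i => 0 < ∑ k, w k * V i k)) ⊆
        Finset.univ.filter (fun i => 0 < ∑ k, (w + ε • u) k * V i k) := by
      intro k hk
      rcases Finset.mem_insert.mp hk with rfl | hk
      · exact Finset.mem_filter.mpr ⟨Finset.mem_univ _, hk₀new⟩
      · exact Finset.mem_filter.mpr ⟨Finset.mem_univ _, hpert k (Finset.mem_filter.mp hk).2⟩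
    have hle := Finset.card_le_card hsubset
    rw [Finset.card_insert_of_notMem hk₀old] at hle
    omega

end Stmt16Aux

/-- If `V` is a pure vector configuration spanning `ℝ^r` with `r ≥ 2` and dual degree `1`,
then `V` has no repeated nonzero vectors: two distinct elements of the configuration that
are equal as vectors must both be the zero vector. -/
theorem stmt_16 (r n : ℕ) (hr : 2 ≤ r) (V : Fin n → (Fin r → ℝ))
    (hspan : Submodule.span ℝ (Set.range V) = ⊤)
    (hpure : ∀ w : Fin r → ℝ, w ≠ 0 →
      2 ≤ (Finset.univ.filter (fun i => 0 < ∑ k, w k * V i k)).card ∨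
      2 ≤ (Finset.univ.filter (fun i => ∑ k, w k * V i k < 0)).card)
    (hdeg1 : ∀ w : Fin r → ℝ,
      (Finset.univ.filter (fun i => 0 < ∑ k, w k * V i k)).card ≤ r + 1)
    (hdeg2 : ∃ w : Fin r → ℝ, w ≠ 0 ∧
      (Finset.univ.filter (fun i => 0 < ∑ k, w k * V i k)).card = r + 1) :
    ∀ i j : Fin n, i ≠ j → V i = V j → V i = 0 := by
  intro i j hij hVij
  by_contra hv
  have hvv : 0 < ∑ t, V i t * V i t := by
    have hex : ∃ t, V i t ≠ 0 := by
      by_contra h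
      push_neg at h
      exact hv (funext h)
    obtain ⟨t₀, ht₀⟩ := hex
    exact Finset.sum_pos' (fun t _ => mul_self_nonneg _)
      ⟨t₀, Finset.mem_univ _, mul_self_pos.mpr ht₀⟩
  set f : (Fin r → ℝ) →ₗ[ℝ] ℝ := Stmt16Aux.pairF (V i) with hfdef
  have hfv : f (V i) = ∑ t, V i t * V i t := rfl
  have hker : Module.finrank ℝ ↥(LinearMap.ker f) = r - 1 := by
    have h1 := LinearMap.finrank_range_add_finrank_ker f
    have hrange : LinearMap.range f = ⊤ := by
      rw [Submodule.eq_top_iff']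
      intro x
      have hc : f (V i) ∈ LinearMap.range f := ⟨V i, rfl⟩
      have hne : f (V i) ≠ 0 := by rw [hfv]; exact ne_of_gt hvv
      have := Submodule.smul_mem _ (x / f (V i)) hc
      rwa [smul_eq_mul, div_mul_cancel₀ _ hne] at this
    rw [hrange, finrank_top, Module.finrank_self, Module.finrank_fin_fun] at h1
    omega
  have hker' : Module.finrank ℝ ↥(LinearMap.ker f) = (r - 2) + 1 := by omega
  have hsp : ∀ w ∈ LinearMap.ker f, (∀ k, ∑ t, w t * V k t = 0) → w = 0 := by
    intro w _ hz
    have hle : Submodule.span ℝ (Set.range V) ≤ LinearMap.ker (Stmt16Aux.pairF w) := by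
      rw [Submodule.span_le]
      rintro x ⟨k, rfl⟩
      have hx : ∑ t, (V k) t * w t = 0 := by
        rw [← hz k]
        exact Finset.sum_congr rfl (fun t _ => mul_comm _ _)
      exact LinearMap.mem_ker.mpr hx
    rw [hspan] at hle
    funext s
    have hm : Stmt16Aux.pairF w (Pi.single s (1:ℝ)) = 0 := hle Submodule.mem_top
    rw [Stmt16Aux.pairF_apply] at hm
    simpa [Pi.single_apply, ite_mul, Finset.sum_ite_eq'] using hm
  obtain ⟨w, hwK, hcard⟩ := Stmt16Aux.key V hpure (r - 2) (LinearMap.ker f) hker' hsp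
  have hwv : ∑ t, w t * V i t = 0 := hwK
  obtain ⟨ε, hε, hpert⟩ := Stmt16Aux.pert V w (V i)
  have hi : 0 < ∑ t, (w + ε • V i) t * V i t := by
    rw [Stmt16Aux.sum_add_smul, hwv, zero_add]
    exact mul_pos hε hvv
  have hj : 0 < ∑ t, (w + ε • V i) t * V j t := by
    rw [← hVij]; exact hi
  have hiold : i ∉ Finset.univ.filter (fun k => 0 < ∑ t, w t * V k t) := by
    simp [hwv]
  have hjold : j ∉ Finset.univ.filter (fun k => 0 < ∑ t, w t * V k t) := by
    have : ∑ t, w t * V j t = 0 := by rw [← hVij]; exact hwv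
    simp [this]
  have hsubset : insert i (insert j (Finset.univ.filter (fun k => 0 < ∑ t, w t * V k t))) ⊆
      Finset.univ.filter (fun k => 0 < ∑ t, (w + ε • V i) t * V k t) := by
    intro k hk
    rcases Finset.mem_insert.mp hk with rfl | hk
    · exact Finset.mem_filter.mpr ⟨Finset.mem_univ _, hi⟩
    rcases Finset.mem_insert.mp hk with rfl | hk
    · exact Finset.mem_filter.mpr ⟨Finset.mem_univ _, hj⟩
    · exact Finset.mem_filter.mpr ⟨Finset.mem_univ _, hpert k (Finset.mem_filter.mp hk).2⟩
  have hle := Finset.card_le_card hsubset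
  rw [Finset.card_insert_of_notMem (by simp [hiold, hij]),
    Finset.card_insert_of_notMem hjold] at hle
  have hd := hdeg1 (w + ε • V i)
  omega
end
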